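/- arXiv:1203.2899 — 3 statements merged into one kernel-verified Lean document; each statement's English description precedes it below -/
import Mathlib

section
/- Under assumption A1 (in particular ‖S_{M_n}t − t‖₂ → 0 for all t ∈ L²(dxdy)), the variance of the linear part converges to the efficient variance: n Var(P_n L) → Λ(f,η) as n → ∞, where L is built with M = M_n. -/
open MeasureTheory ProbabilityTheory Filter Set Topology

noncomputable section

namespace DaVeigaGamboa

/-- Iterated double integral over `[a,b] × [c,d]`. -/
def I2 (a b c d : ℝ) (h : ℝ → ℝ → ℝ) : ℝ :=
  ∫ x in Icc a b, ∫ y in Icc c d, h x y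

/-- Iterated triple integral over `[a,b] × [c,d] × [c,d]`. -/
def I3 (a b c d : ℝ) (h : ℝ → ℝ → ℝ → ℝ) : ℝ :=
  ∫ x in Icc a b, ∫ y₁ in Icc c d, ∫ y₂ in Icc c d, h x y₁ y₂

/-- The tensor basis `p_i(x,y) = α_{i₁}(x) β_{i₂}(y)`. -/
def tns {ι₁ ι₂ : Type*} (α : ι₁ → ℝ → ℝ) (β : ι₂ → ℝ → ℝ) (i : ι₁ × ι₂)
    (x y : ℝ) : ℝ := α i.1 x * β i.2 y

/-- Coefficient `∬ h p_i` of `h` on the basis element `p_i`. -/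
def coef {ι : Type*} (a b c d : ℝ) (p : ι → ℝ → ℝ → ℝ) (h : ℝ → ℝ → ℝ) (i : ι) : ℝ :=
  I2 a b c d fun x y => h x y * p i x y

/-- Orthogonal projection `S_M h` onto the span of `(p_i)_{i ∈ M}`. -/
def SM {ι : Type*} (a b c d : ℝ) (p : ι → ℝ → ℝ → ℝ) (h : ℝ → ℝ → ℝ)
    (M : Finset ι) (x y : ℝ) : ℝ := ∑ i ∈ M, coef a b c d p h i * p i x y

/-- `L²` norm on the rectangle. -/
def norm2 (a b c d : ℝ) (h : ℝ → ℝ → ℝ) : ℝ :=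
  Real.sqrt (I2 a b c d fun x y => (h x y) ^ 2)

/-- The quadratic functional `θ(f) = ∭ η(x,y₁,y₂) f(x,y₁) f(x,y₂)`. -/
def theta (a b c d : ℝ) (η : ℝ → ℝ → ℝ → ℝ) (f : ℝ → ℝ → ℝ) : ℝ :=
  I3 a b c d fun x y₁ y₂ => η x y₁ y₂ * f x y₁ * f x y₂

/-- `g(x,y) = ∫ f(x,u) η(x,y,u) du`. -/
def gfun (c d : ℝ) (η : ℝ → ℝ → ℝ → ℝ) (f : ℝ → ℝ → ℝ) (x y : ℝ) : ℝ :=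
  ∫ u in Icc c d, f x u * η x y u

/-- The efficient asymptotic variance `Λ(f,η)`. -/
def Lam (a b c d : ℝ) (η : ℝ → ℝ → ℝ → ℝ) (f : ℝ → ℝ → ℝ) : ℝ :=
  4 * ((I2 a b c d fun x y => (gfun c d η f x y) ^ 2 * f x y)
    - (I2 a b c d fun x y => gfun c d η f x y * f x y) ^ 2)

/-- The constants `c_{ii'} = ∭ p_i(x,y₁) p_{i'}(x,y₂) η(x,y₁,y₂)`. -/
def cmat {ι : Type*} (a b c d : ℝ) (p : ι → ℝ → ℝ → ℝ) (η : ℝ → ℝ → ℝ → ℝ)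
    (i i' : ι) : ℝ :=
  I3 a b c d fun x y₁ y₂ => p i x y₁ * p i' x y₂ * η x y₁ y₂

/-- `b_i = ∬ g p_i`. -/
def bcoef {ι : Type*} (a b c d : ℝ) (p : ι → ℝ → ℝ → ℝ) (η : ℝ → ℝ → ℝ → ℝ)
    (f : ℝ → ℝ → ℝ) (i : ι) : ℝ :=
  coef a b c d p (gfun c d η f) i

/-- The estimator `θ̂_n` of the crossed quadratic functional, built on the index set `M`
and the first `n` observations. -/
def thetaHat {Ω ι : Type*} (a b c d : ℝ) (p : ι → ℝ → ℝ → ℝ)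
    (η : ℝ → ℝ → ℝ → ℝ) (X Y : ℕ → Ω → ℝ) (M : Finset ι) (n : ℕ) (ω : Ω) : ℝ :=
  (2 / ((n : ℝ) * ((n : ℝ) - 1))) *
    ∑ i ∈ M, ∑ j ∈ Finset.range n, ∑ k ∈ (Finset.range n).erase j,
      p i (X j ω) (Y j ω) *
        ∫ u in Icc c d, p i (X k ω) u * η (X k ω) u (Y k ω)
  - (1 / ((n : ℝ) * ((n : ℝ) - 1))) *
    ∑ i ∈ M, ∑ i' ∈ M, ∑ j ∈ Finset.range n, ∑ k ∈ (Finset.range n).erase j,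
      p i (X j ω) (Y j ω) * p i' (X k ω) (Y k ω) * cmat a b c d p η i i'

/-- The law `ν_f` on `ℝ²` with density `f` w.r.t. the Lebesgue measure. -/
def nu (f : ℝ → ℝ → ℝ) : Measure (ℝ × ℝ) :=
  volume.withDensity fun q => ENNReal.ofReal (f q.1 q.2)

/-- Centered kernels of the Hoeffding decomposition: `q_i = p_i - a_i`. -/
def qfun {ι : Type*} (a b c d : ℝ) (p : ι → ℝ → ℝ → ℝ) (f : ℝ → ℝ → ℝ)
    (i : ι) (x y : ℝ) : ℝ := p i x y - coef a b c d p f i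

/-- `r_i(x,y) = ∫ p_i(x,u) η(x,u,y) du - b_i`. -/
def rfun {ι : Type*} (a b c d : ℝ) (p : ι → ℝ → ℝ → ℝ) (η : ℝ → ℝ → ℝ → ℝ)
    (f : ℝ → ℝ → ℝ) (i : ι) (x y : ℝ) : ℝ :=
  (∫ u in Icc c d, p i x u * η x u y) - bcoef a b c d p η f i

/-- The degenerate second-order kernel `K = 2QᵀR − QᵀCQ`. -/
def Kker {ι : Type*} (a b c d : ℝ) (p : ι → ℝ → ℝ → ℝ) (η : ℝ → ℝ → ℝ → ℝ)
    (f : ℝ → ℝ → ℝ) (M : Finset ι) (x₁ y₁ x₂ y₂ : ℝ) : ℝ :=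
  2 * ∑ i ∈ M, qfun a b c d p f i x₁ y₁ * rfun a b c d p η f i x₂ y₂
  - ∑ i ∈ M, ∑ i' ∈ M,
      qfun a b c d p f i x₁ y₁ * cmat a b c d p η i i' * qfun a b c d p f i' x₂ y₂

/-- The first-order kernel `L = 2AᵀR + 2BᵀQ − 2AᵀCQ`. -/
def Lker {ι : Type*} (a b c d : ℝ) (p : ι → ℝ → ℝ → ℝ) (η : ℝ → ℝ → ℝ → ℝ)
    (f : ℝ → ℝ → ℝ) (M : Finset ι) (x y : ℝ) : ℝ :=
  2 * ∑ i ∈ M, coef a b c d p f i * rfun a b c d p η f i x y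
  + 2 * ∑ i ∈ M, bcoef a b c d p η f i * qfun a b c d p f i x y
  - 2 * ∑ i ∈ M, ∑ i' ∈ M,
      coef a b c d p f i * cmat a b c d p η i i' * qfun a b c d p f i' x y

/-- The degenerate U-statistic part `U_n K`. -/
def UnK {Ω ι : Type*} (a b c d : ℝ) (p : ι → ℝ → ℝ → ℝ) (η : ℝ → ℝ → ℝ → ℝ)
    (f : ℝ → ℝ → ℝ) (X Y : ℕ → Ω → ℝ) (M : Finset ι) (n : ℕ) (ω : Ω) : ℝ :=
  (1 / ((n : ℝ) * ((n : ℝ) - 1))) *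
    ∑ j ∈ Finset.range n, ∑ k ∈ (Finset.range n).erase j,
      Kker a b c d p η f M (X j ω) (Y j ω) (X k ω) (Y k ω)

/-- The empirical-mean part `P_n L`. -/
def PnL {Ω ι : Type*} (a b c d : ℝ) (p : ι → ℝ → ℝ → ℝ) (η : ℝ → ℝ → ℝ → ℝ)
    (f : ℝ → ℝ → ℝ) (X Y : ℕ → Ω → ℝ) (M : Finset ι) (n : ℕ) (ω : Ω) : ℝ :=
  (1 / (n : ℝ)) * ∑ j ∈ Finset.range n,
    Lker a b c d p η f M (X j ω) (Y j ω)

/-- Membership of `h` in the ellipsoid `E` associated with the positive sequence `cseq`,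
expressed through the coefficients of `h` in the orthonormal basis `(p_i)`. -/
def inEllipsoid {ι : Type*} (a b c d : ℝ) (p : ι → ℝ → ℝ → ℝ) (cseq : ι → ℝ)
    (h : ℝ → ℝ → ℝ) : Prop :=
  Summable (fun i => (coef a b c d p h i / cseq i) ^ 2) ∧
    ∑' i, (coef a b c d p h i / cseq i) ^ 2 ≤ 1

/-- `sup_{i ∉ M} |c_i|²`. -/
def supTail {ι : Type*} (cseq : ι → ℝ) (M : Finset ι) : ℝ :=
  sSup ((fun i => (cseq i) ^ 2) '' {i | i ∉ M})

/-- Convergence in distribution of real random variables towards the law `ν`,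
tested against bounded continuous functions. -/
def CvgInDist {Ω : Type*} [MeasurableSpace Ω] (μ : Measure Ω)
    (Z : ℕ → Ω → ℝ) (ν : Measure ℝ) : Prop :=
  ∀ g : ℝ → ℝ, Continuous g → (∃ C, ∀ x, |g x| ≤ C) →
    Tendsto (fun n => ∫ ω, g (Z n ω) ∂μ) atTop (𝓝 (∫ x, g x ∂ν))


/-- Conditional expectation `m(x) = ∫ φ(y) f(x,y) dy / ∫ f(x,y) dy` of `φ(Y)` given `X = x`. -/
def mfun (c d : ℝ) (φ : ℝ → ℝ) (f : ℝ → ℝ → ℝ) (x : ℝ) : ℝ :=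
  (∫ y in Icc c d, φ y * f x y) / ∫ y in Icc c d, f x y

/-- Conditional second moment `v(x) = ∫ φ(y)² f(x,y) dy / ∫ f(x,y) dy`. -/
def vfun (c d : ℝ) (φ : ℝ → ℝ) (f : ℝ → ℝ → ℝ) (x : ℝ) : ℝ :=
  (∫ y in Icc c d, φ y ^ 2 * f x y) / ∫ y in Icc c d, f x y

/-- The functional `T(f) = ∬ ψ(m(x)) f(x,y) dx dy = E[ψ(E(φ(Y)|X))]`. -/
def Tfunc (a b c d : ℝ) (φ ψ : ℝ → ℝ) (f : ℝ → ℝ → ℝ) : ℝ :=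
  I2 a b c d fun x y => ψ (mfun c d φ f x) * f x y

/-- The linear kernel `H(h,x,y) = [φ(y) − m_h(x)] ψ'(m_h(x)) + ψ(m_h(x))`. -/
def Hker (c d : ℝ) (φ ψ : ℝ → ℝ) (h : ℝ → ℝ → ℝ) (x y : ℝ) : ℝ :=
  (φ y - mfun c d φ h x) * deriv ψ (mfun c d φ h x) + ψ (mfun c d φ h x)

/-- The second-order kernel
`K(h,x,y,z) = (1/2) ψ''(m_h(x)) (m_h(x)−φ(y)) (m_h(x)−φ(z)) / ∫ h(x,u) du`. -/
def Kfker (c d : ℝ) (φ ψ : ℝ → ℝ) (h : ℝ → ℝ → ℝ) (x y z : ℝ) : ℝ :=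
  (1 / 2) * deriv (deriv ψ) (mfun c d φ h x) * (mfun c d φ h x - φ y) *
    (mfun c d φ h x - φ z) / ∫ u in Icc c d, h x u

/-- The efficient asymptotic variance
`C(f) = E(Var(φ(Y)|X) [ψ'(E(φ(Y)|X))]²) + Var(ψ(E(φ(Y)|X)))` expressed with `f`. -/
def Cvar (a b c d : ℝ) (φ ψ : ℝ → ℝ) (f : ℝ → ℝ → ℝ) : ℝ :=
  I2 a b c d (fun x y =>
    (vfun c d φ f x - mfun c d φ f x ^ 2) * deriv ψ (mfun c d φ f x) ^ 2 * f x y)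
  + (I2 a b c d (fun x y => ψ (mfun c d φ f x) ^ 2 * f x y)
      - (I2 a b c d fun x y => ψ (mfun c d φ f x) * f x y) ^ 2)

/-- `L^q` norm on the rectangle. -/
def normLq (a b c d q : ℝ) (h : ℝ → ℝ → ℝ) : ℝ :=
  (I2 a b c d fun x y => |h x y| ^ q) ^ (1 / q)

/-- `2 AᵀB − AᵀCA`, the deterministic part of the Hoeffding decomposition. -/
def ABterm {ι : Type*} (a b c d : ℝ) (p : ι → ℝ → ℝ → ℝ) (η : ℝ → ℝ → ℝ → ℝ)
    (f : ℝ → ℝ → ℝ) (M : Finset ι) : ℝ :=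
  2 * ∑ i ∈ M, coef a b c d p f i * bcoef a b c d p η f i
  - ∑ i ∈ M, ∑ i' ∈ M,
      coef a b c d p f i * cmat a b c d p η i i' * coef a b c d p f i'

/-- Crossed-quadratic-functional estimator with a (possibly random) kernel `ηω`,
built on the `n₂` observations of indices `n₀, …, n₀ + n₂ − 1`. -/
def QHatK {Ω ι : Type*} (a b c d : ℝ) (p : ι → ℝ → ℝ → ℝ)
    (ηω : Ω → ℝ → ℝ → ℝ → ℝ) (X Y : ℕ → Ω → ℝ) (M : Finset ι)
    (n₀ n₂ : ℕ) (ω : Ω) : ℝ :=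
  (2 / ((n₂ : ℝ) * ((n₂ : ℝ) - 1))) *
    ∑ i ∈ M, ∑ j ∈ Finset.range n₂, ∑ k ∈ (Finset.range n₂).erase j,
      p i (X (n₀ + j) ω) (Y (n₀ + j) ω) *
        ∫ u in Icc c d, p i (X (n₀ + k) ω) u * ηω ω (X (n₀ + k) ω) u (Y (n₀ + k) ω)
  - (1 / ((n₂ : ℝ) * ((n₂ : ℝ) - 1))) *
    ∑ i ∈ M, ∑ i' ∈ M, ∑ j ∈ Finset.range n₂, ∑ k ∈ (Finset.range n₂).erase j,
      p i (X (n₀ + j) ω) (Y (n₀ + j) ω) * p i' (X (n₀ + k) ω) (Y (n₀ + k) ω) *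
        I3 a b c d fun x y₁ y₂ => p i x y₁ * p i' x y₂ * ηω ω x y₁ y₂

/-- The estimator `T̂_n` of `T(f)`, built from the preliminary estimator `fhat`
and the `n₂` observations of indices `n₀, …, n₀ + n₂ − 1`. -/
def THat {Ω ι : Type*} (a b c d : ℝ) (p : ι → ℝ → ℝ → ℝ) (φ ψ : ℝ → ℝ)
    (fhat : Ω → ℝ → ℝ → ℝ) (X Y : ℕ → Ω → ℝ) (M : Finset ι)
    (n₀ n₂ : ℕ) (ω : Ω) : ℝ :=
  (1 / (n₂ : ℝ)) * ∑ j ∈ Finset.range n₂,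
      Hker c d φ ψ (fhat ω) (X (n₀ + j) ω) (Y (n₀ + j) ω)
  + QHatK a b c d p (fun ω' => Kfker c d φ ψ (fhat ω')) X Y M n₀ n₂ ω


open scoped ENNReal NNReal

section AuxVG
variable {γ : Type*} [MeasurableSpace γ] {m : Measure γ}

lemma myIntegrableMul {u v : γ → ℝ} (hu : MemLp u 2 m) (hv : MemLp v 2 m) :
    Integrable (fun x => u x * v x) m := by
  refine Integrable.mono' (hu.integrable_sq.add hv.integrable_sq) (hu.1.mul hv.1) ?_
  filter_upwards with x
  have h2 : 2 * |u x| * |v x| ≤ |u x| ^ 2 + |v x| ^ 2 := two_mul_le_add_sq _ _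
  have : ‖u x * v x‖ = |u x| * |v x| := by rw [Real.norm_eq_abs, abs_mul]
  rw [this, Pi.add_apply]
  nlinarith [abs_nonneg (u x), abs_nonneg (v x), sq_abs (u x), sq_abs (v x)]

lemma myCS {u v : γ → ℝ} (hu : MemLp u 2 m) (hv : MemLp v 2 m) :
    |∫ x, u x * v x ∂m| ≤ Real.sqrt (∫ x, u x ^ 2 ∂m) * Real.sqrt (∫ x, v x ^ 2 ∂m) := by
  have hpq : Real.HolderConjugate 2 2 := Real.HolderConjugate.two_two
  have h2 : (ENNReal.ofReal (2:ℝ)) = 2 := by norm_num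
  have hu' : MemLp u (ENNReal.ofReal (2:ℝ)) m := h2 ▸ hu
  have hv' : MemLp v (ENNReal.ofReal (2:ℝ)) m := h2 ▸ hv
  have key := integral_mul_norm_le_Lp_mul_Lq hpq hu' hv'
  have e1 : ∀ w : γ → ℝ, (∫ x, ‖w x‖ ^ (2:ℝ) ∂m) = ∫ x, w x ^ 2 ∂m := by
    intro w
    refine integral_congr_ae (Eventually.of_forall fun x => ?_)
    rw [show (2:ℝ) = ((2:ℕ):ℝ) by norm_num]
    simp only [Real.rpow_natCast, Real.norm_eq_abs, sq_abs]
  rw [e1 u, e1 v] at key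
  calc |∫ x, u x * v x ∂m| ≤ ∫ x, ‖u x * v x‖ ∂m := by
        rw [← Real.norm_eq_abs]; exact norm_integral_le_integral_norm _
    _ = ∫ x, ‖u x‖ * ‖v x‖ ∂m := by
        refine integral_congr_ae (Eventually.of_forall fun x => ?_)
        simp [Real.norm_eq_abs, abs_mul]
    _ ≤ (∫ x, u x ^ 2 ∂m) ^ ((1:ℝ)/2) * (∫ x, v x ^ 2 ∂m) ^ ((1:ℝ)/2) := key
    _ = _ := by rw [Real.sqrt_eq_rpow, Real.sqrt_eq_rpow]


lemma myExpand {ι : Type*} [DecidableEq ι] (s : Finset ι) (e : ι → γ → ℝ) (w : ι → ℝ)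
    (he : ∀ i ∈ s, MemLp (e i) 2 m)
    (horth : ∀ i ∈ s, ∀ j ∈ s, (∫ x, e i x * e j x ∂m) = if i = j then 1 else 0) :
    (∫ x, (∑ i ∈ s, w i * e i x) ^ 2 ∂m) = ∑ i ∈ s, w i ^ 2 := by
  have hint : ∀ i ∈ s, ∀ j ∈ s, Integrable (fun x => (w i * e i x) * (w j * e j x)) m := by
    intro i hi j hj
    have : Integrable (fun x => (w i * w j) * (e i x * e j x)) m :=
      (myIntegrableMul (he i hi) (he j hj)).const_mul _
    refine this.congr (Eventually.of_forall fun x => by ring)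
  calc (∫ x, (∑ i ∈ s, w i * e i x) ^ 2 ∂m)
      = ∫ x, ∑ i ∈ s, ∑ j ∈ s, (w i * e i x) * (w j * e j x) ∂m := by
        congr 1; funext x; rw [sq, Finset.sum_mul_sum]
    _ = ∑ i ∈ s, ∫ x, ∑ j ∈ s, (w i * e i x) * (w j * e j x) ∂m := by
        refine integral_finset_sum s fun i hi => integrable_finset_sum s fun j hj => hint i hi j hj
    _ = ∑ i ∈ s, ∑ j ∈ s, ∫ x, (w i * e i x) * (w j * e j x) ∂m := by
        exact Finset.sum_congr rfl fun i hi => integral_finset_sum s fun j hj => hint i hi j hj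
    _ = ∑ i ∈ s, ∑ j ∈ s, (w i * w j) * ∫ x, e i x * e j x ∂m := by
        refine Finset.sum_congr rfl fun i hi => Finset.sum_congr rfl fun j hj => ?_
        rw [← integral_const_mul]
        congr 1; funext x; ring
    _ = ∑ i ∈ s, w i ^ 2 := by
        refine Finset.sum_congr rfl fun i hi => ?_
        rw [Finset.sum_congr rfl fun j hj => by rw [horth i hi j hj]]
        simp only [mul_ite, mul_one, mul_zero]
        rw [Finset.sum_ite_eq s i (fun j => w i * w j), if_pos hi, sq]

lemma myBessel {ι : Type*} [DecidableEq ι] (s : Finset ι) (e : ι → γ → ℝ)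
    (he : ∀ i ∈ s, MemLp (e i) 2 m)
    (horth : ∀ i ∈ s, ∀ j ∈ s, (∫ x, e i x * e j x ∂m) = if i = j then 1 else 0)
    {t : γ → ℝ} (ht : MemLp t 2 m) :
    ∑ i ∈ s, (∫ x, t x * e i x ∂m) ^ 2 ≤ ∫ x, t x ^ 2 ∂m := by
  set c : ι → ℝ := fun i => ∫ x, t x * e i x ∂m with hc
  set S : γ → ℝ := fun x => ∑ i ∈ s, c i * e i x with hS
  have hSmem : MemLp S 2 m := by
    have h := memLp_finset_sum' s fun i hi => (he i hi).const_mul (c i)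
    rwa [show (∑ i ∈ s, fun x => c i * e i x) = S by funext x; simp [hS]] at h
  have h0 : (0:ℝ) ≤ ∫ x, (t x - S x) ^ 2 ∂m := integral_nonneg fun x => sq_nonneg _
  have hintTS : Integrable (fun x => t x * S x) m := myIntegrableMul ht hSmem
  have hTS : ∫ x, t x * S x ∂m = ∑ i ∈ s, c i ^ 2 := by
    have : ∀ x, t x * S x = ∑ i ∈ s, c i * (t x * e i x) := by
      intro x; rw [hS]; simp only []; rw [Finset.mul_sum]
      exact Finset.sum_congr rfl fun i _ => by ring
    calc ∫ x, t x * S x ∂m = ∫ x, ∑ i ∈ s, c i * (t x * e i x) ∂m := by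
          exact integral_congr_ae (Eventually.of_forall this)
      _ = ∑ i ∈ s, ∫ x, c i * (t x * e i x) ∂m :=
          integral_finset_sum s fun i hi => (myIntegrableMul ht (he i hi)).const_mul _
      _ = ∑ i ∈ s, c i ^ 2 := by
          refine Finset.sum_congr rfl fun i hi => ?_
          rw [integral_const_mul]
          have : (∫ x, t x * e i x ∂m) = c i := rfl
          rw [this, sq]
  have hSS : ∫ x, S x ^ 2 ∂m = ∑ i ∈ s, c i ^ 2 := myExpand s e c he horth
  have hexp : ∫ x, (t x - S x) ^ 2 ∂m
      = (∫ x, t x ^ 2 ∂m) - 2 * (∫ x, t x * S x ∂m) + ∫ x, S x ^ 2 ∂m := by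
    have h1 : ∀ x, (t x - S x) ^ 2 = t x ^ 2 - 2 * (t x * S x) + S x ^ 2 := fun x => by ring
    rw [integral_congr_ae (Eventually.of_forall h1)]
    rw [integral_add (f := fun x => t x ^ 2 - 2 * (t x * S x)) (g := fun x => S x ^ 2)
        (ht.integrable_sq.sub (hintTS.const_mul 2)) hSmem.integrable_sq,
      integral_sub (f := fun x => t x ^ 2) (g := fun x => 2 * (t x * S x))
        ht.integrable_sq (hintTS.const_mul 2), integral_const_mul]
  rw [hexp, hTS, hSS] at h0
  linarith


end AuxVG

/-- Product measure on the rectangle. -/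
def recm (a b c d : ℝ) : Measure (ℝ × ℝ) :=
  (volume.restrict (Icc a b)).prod (volume.restrict (Icc c d))

lemma recm_eq (a b c d : ℝ) :
    volume.restrict (Icc a b ×ˢ Icc c d) = recm a b c d := by
  rw [recm, Measure.prod_restrict, ← Measure.volume_eq_prod]

instance recm_finite (a b c d : ℝ) : IsFiniteMeasure (recm a b c d) := by
  rw [recm]; infer_instance

lemma nu_integral {a b c d : ℝ} (f : ℝ → ℝ → ℝ)
    (hfmeas : Measurable (Function.uncurry f))
    (hf0 : ∀ x y, 0 ≤ f x y)
    (hfsupp : ∀ x y, f x y ≠ 0 → x ∈ Icc a b ∧ y ∈ Icc c d)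
    (h : ℝ × ℝ → ℝ) :
    ∫ q, h q ∂(nu f) = ∫ q, h q * f q.1 q.2 ∂(recm a b c d) := by
  have hd : Measurable fun q : ℝ × ℝ => (f q.1 q.2).toNNReal := by
    exact (hfmeas.comp measurable_id).real_toNNReal
  have e1 : ∫ q, h q ∂(nu f)
      = ∫ q, (f q.1 q.2).toNNReal • h q ∂(volume : Measure (ℝ × ℝ)) := by
    rw [nu]
    exact integral_withDensity_eq_integral_smul hd h
  have e2 : ∀ q : ℝ × ℝ, (f q.1 q.2).toNNReal • h q = h q * f q.1 q.2 := by
    intro q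
    rw [NNReal.smul_def, Real.coe_toNNReal _ (hf0 q.1 q.2), smul_eq_mul, mul_comm]
  rw [e1, integral_congr_ae (Eventually.of_forall e2)]
  rw [← setIntegral_eq_integral_of_forall_compl_eq_zero
      (s := Icc a b ×ˢ Icc c d) (fun q hq => ?_), recm_eq]
  have : f q.1 q.2 = 0 := by
    by_contra hne
    exact hq (mem_prod.2 (hfsupp q.1 q.2 hne))
  rw [this, mul_zero]

lemma nu_memℒp {a b c d Cf : ℝ} (f : ℝ → ℝ → ℝ)
    (hfmeas : Measurable (Function.uncurry f))
    (hf0 : ∀ x y, 0 ≤ f x y) (hfbd : ∀ x y, f x y ≤ Cf)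
    (hfsupp : ∀ x y, f x y ≠ 0 → x ∈ Icc a b ∧ y ∈ Icc c d)
    {h : ℝ × ℝ → ℝ} (hh : Measurable h) (hmem : MemLp h 2 (recm a b c d)) :
    MemLp h 2 (nu f) := by
  have hd : Measurable fun q : ℝ × ℝ => (f q.1 q.2).toNNReal :=
    (hfmeas.comp measurable_id).real_toNNReal
  rw [memLp_two_iff_integrable_sq hh.aestronglyMeasurable]
  have hnu : nu f = volume.withDensity fun q : ℝ × ℝ => ((f q.1 q.2).toNNReal : ℝ≥0∞) := rfl
  rw [hnu, integrable_withDensity_iff_integrable_smul hd]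
  have hsq : Integrable (fun q => h q ^ 2) (recm a b c d) := hmem.integrable_sq
  have hrect : MeasurableSet (Icc a b ×ˢ Icc c d : Set (ℝ × ℝ)) :=
    measurableSet_Icc.prod measurableSet_Icc
  have key : Integrable (fun q : ℝ × ℝ => f q.1 q.2 * h q ^ 2) volume := by
    have hsupp : ∀ q : ℝ × ℝ, q ∉ Icc a b ×ˢ Icc c d → f q.1 q.2 * h q ^ 2 = 0 := by
      intro q hq
      have : f q.1 q.2 = 0 := by
        by_contra hne; exact hq (mem_prod.2 (hfsupp q.1 q.2 hne))
      rw [this, zero_mul]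
    have hIO : IntegrableOn (fun q : ℝ × ℝ => f q.1 q.2 * h q ^ 2)
        (Icc a b ×ˢ Icc c d) volume := by
      rw [IntegrableOn, recm_eq]
      refine Integrable.mono' (hsq.const_mul Cf)
        ((hfmeas.comp measurable_id).mul (hh.pow_const 2)).aestronglyMeasurable ?_
      filter_upwards with q
      have h0 := hf0 q.1 q.2
      have hb := hfbd q.1 q.2
      rw [Real.norm_eq_abs, abs_of_nonneg (by positivity)]
      exact mul_le_mul_of_nonneg_right hb (sq_nonneg _)
    have := (integrable_indicator_iff hrect).2 hIO
    refine this.congr (Eventually.of_forall fun q => ?_)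
    by_cases hq : q ∈ Icc a b ×ˢ Icc c d
    · rw [indicator_of_mem hq]
    · rw [indicator_of_notMem hq]; exact (hsupp q hq).symm
  refine key.congr (Eventually.of_forall fun q => ?_)
  show f q.1 q.2 * h q ^ 2 = (f q.1 q.2).toNNReal • h q ^ 2
  rw [NNReal.smul_def, Real.coe_toNNReal _ (hf0 q.1 q.2), smul_eq_mul]


lemma on_memℒp {s : Set ℝ} {u : ℝ → ℝ} (hu : Measurable u)
    (h1 : (∫ x in s, u x * u x) = 1) : MemLp u 2 (volume.restrict s) := by
  rw [memLp_two_iff_integrable_sq (hu.aestronglyMeasurable)]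
  have hint : Integrable (fun x => u x * u x) (volume.restrict s) := by
    by_contra hni
    rw [integral_undef hni] at h1
    norm_num at h1
  exact hint.congr (Eventually.of_forall fun x => by show u x * u x = u x ^ 2; rw [pow_two])

lemma Pmem {ι₁ ι₂ : Type*} [DecidableEq ι₁] [DecidableEq ι₂] {a b c d : ℝ} {α : ι₁ → ℝ → ℝ} {β : ι₂ → ℝ → ℝ}
    (hαmeas : ∀ i, Measurable (α i)) (hβmeas : ∀ i, Measurable (β i))
    (hα : ∀ i j, (∫ x in Icc a b, α i x * α j x) = if i = j then 1 else 0)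
    (hβ : ∀ i j, (∫ y in Icc c d, β i y * β j y) = if i = j then 1 else 0)
    (i : ι₁ × ι₂) :
    MemLp (fun q : ℝ × ℝ => tns α β i q.1 q.2) 2 (recm a b c d) := by
  have hu : MemLp (α i.1) 2 (volume.restrict (Icc a b)) :=
    on_memℒp (hαmeas i.1) (by rw [hα]; simp)
  have hv : MemLp (β i.2) 2 (volume.restrict (Icc c d)) :=
    on_memℒp (hβmeas i.2) (by rw [hβ]; simp)
  rw [memLp_two_iff_integrable_sq]
  · have : Integrable (fun q : ℝ × ℝ => (α i.1 q.1 ^ 2) * (β i.2 q.2 ^ 2)) (recm a b c d) :=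
      Integrable.mul_prod hu.integrable_sq hv.integrable_sq
    exact this.congr (Eventually.of_forall fun q => by show _ = tns α β i q.1 q.2 ^ 2; simp only [tns]; ring)
  · exact (((hαmeas i.1).comp measurable_fst).mul
      ((hβmeas i.2).comp measurable_snd)).aestronglyMeasurable

lemma Porth {ι₁ ι₂ : Type*} {a b c d : ℝ} {α : ι₁ → ℝ → ℝ} {β : ι₂ → ℝ → ℝ}
    [DecidableEq ι₁] [DecidableEq ι₂]
    (hα : ∀ i j, (∫ x in Icc a b, α i x * α j x) = if i = j then 1 else 0)
    (hβ : ∀ i j, (∫ y in Icc c d, β i y * β j y) = if i = j then 1 else 0)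
    (i j : ι₁ × ι₂) :
    (∫ q, tns α β i q.1 q.2 * tns α β j q.1 q.2 ∂(recm a b c d))
      = if i = j then 1 else 0 := by
  have e1 : (∫ q, tns α β i q.1 q.2 * tns α β j q.1 q.2 ∂(recm a b c d))
      = (∫ x in Icc a b, α i.1 x * α j.1 x) * (∫ y in Icc c d, β i.2 y * β j.2 y) := by
    rw [recm, ← integral_prod_mul (fun x => α i.1 x * α j.1 x) (fun y => β i.2 y * β j.2 y)]
    exact integral_congr_ae (Eventually.of_forall fun q => by
      show tns α β i q.1 q.2 * tns α β j q.1 q.2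
        = α i.1 q.1 * α j.1 q.1 * (β i.2 q.2 * β j.2 q.2)
      simp only [tns]; ring)
  rw [e1, hα, hβ]
  by_cases h : i = j
  · rw [if_pos h, if_pos (congrArg Prod.fst h), if_pos (congrArg Prod.snd h), one_mul]
  · rw [if_neg h]
    by_cases h1 : i.1 = j.1
    · have h2 : i.2 ≠ j.2 := fun h2 => h (Prod.ext h1 h2)
      rw [if_neg h2, mul_zero]
    · rw [if_neg h1, zero_mul]


def Pfun {ι₁ ι₂ : Type*} (α : ι₁ → ℝ → ℝ) (β : ι₂ → ℝ → ℝ) (i : ι₁ × ι₂) :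
    ℝ × ℝ → ℝ := fun q => tns α β i q.1 q.2

def rhofun {ι₁ ι₂ : Type*} (c d : ℝ) (α : ι₁ → ℝ → ℝ) (β : ι₂ → ℝ → ℝ)
    (η : ℝ → ℝ → ℝ → ℝ) (i : ι₁ × ι₂) : ℝ × ℝ → ℝ :=
  fun q => ∫ u in Icc c d, tns α β i q.1 u * η q.1 u q.2

def g2fun (c d : ℝ) (η : ℝ → ℝ → ℝ → ℝ) (f : ℝ → ℝ → ℝ) : ℝ × ℝ → ℝ :=
  fun q => gfun c d η f q.1 q.2

def Wfun {ι₁ ι₂ : Type*} (a b c d : ℝ) (α : ι₁ → ℝ → ℝ) (β : ι₂ → ℝ → ℝ)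
    (η : ℝ → ℝ → ℝ → ℝ) (f : ℝ → ℝ → ℝ) (M : Finset (ι₁ × ι₂)) : ℝ × ℝ → ℝ :=
  fun q =>
    (∑ i ∈ M, coef a b c d (tns α β) f i * rhofun c d α β η i q)
    + (∑ i ∈ M, bcoef a b c d (tns α β) η f i * Pfun α β i q)
    - ∑ i ∈ M, ∑ i' ∈ M,
        coef a b c d (tns α β) f i * cmat a b c d (tns α β) η i i' * Pfun α β i' q

def cconst {ι₁ ι₂ : Type*} (a b c d : ℝ) (α : ι₁ → ℝ → ℝ) (β : ι₂ → ℝ → ℝ)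
    (η : ℝ → ℝ → ℝ → ℝ) (f : ℝ → ℝ → ℝ) (M : Finset (ι₁ × ι₂)) : ℝ :=
  (∑ i ∈ M, coef a b c d (tns α β) f i * bcoef a b c d (tns α β) η f i)
  + (∑ i ∈ M, bcoef a b c d (tns α β) η f i * coef a b c d (tns α β) f i)
  - ∑ i ∈ M, ∑ i' ∈ M,
      coef a b c d (tns α β) f i * cmat a b c d (tns α β) η i i'
        * coef a b c d (tns α β) f i'

lemma Lker_eq_W {ι₁ ι₂ : Type*} (a b c d : ℝ) (α : ι₁ → ℝ → ℝ) (β : ι₂ → ℝ → ℝ)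
    (η : ℝ → ℝ → ℝ → ℝ) (f : ℝ → ℝ → ℝ) (M : Finset (ι₁ × ι₂)) (q : ℝ × ℝ) :
    Lker a b c d (tns α β) η f M q.1 q.2
      = 2 * Wfun a b c d α β η f M q - 2 * cconst a b c d α β η f M := by
  simp only [Lker, Wfun, cconst, rfun, qfun, rhofun, Pfun, mul_sub, sub_mul,
    Finset.sum_sub_distrib]
  ring


section Facts
variable {ι₁ ι₂ : Type*} [DecidableEq ι₁] [DecidableEq ι₂]
variable {a b c d : ℝ} {α : ι₁ → ℝ → ℝ} {β : ι₂ → ℝ → ℝ}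
variable {η : ℝ → ℝ → ℝ → ℝ} {f : ℝ → ℝ → ℝ} {Cη Cf : ℝ}

lemma memℒp_sum_fun {γ ι : Type*} [MeasurableSpace γ] {m : Measure γ} (s : Finset ι)
    (F : ι → γ → ℝ) (h : ∀ i ∈ s, MemLp (F i) 2 m) :
    MemLp (fun x => ∑ i ∈ s, F i x) 2 m := by
  have h' := memLp_finset_sum' s h
  rwa [show (∑ i ∈ s, F i) = fun x => ∑ i ∈ s, F i x from funext fun x => by simp] at h'

lemma rho_meas (hαmeas : ∀ i, Measurable (α i)) (hβmeas : ∀ i, Measurable (β i))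
    (hηmeas : Measurable fun q : ℝ × ℝ × ℝ => η q.1 q.2.1 q.2.2) (i : ι₁ × ι₂) :
    Measurable (rhofun c d α β η i) := by
  have hF : Measurable fun z : (ℝ × ℝ) × ℝ => tns α β i z.1.1 z.2 * η z.1.1 z.2 z.1.2 := by
    refine Measurable.mul ?_ ?_
    · exact ((hαmeas i.1).comp (measurable_fst.comp measurable_fst)).mul
        ((hβmeas i.2).comp measurable_snd)
    · exact hηmeas.comp ((measurable_fst.comp measurable_fst).prodMk
        (measurable_snd.prodMk (measurable_snd.comp measurable_fst)))
  exact hF.stronglyMeasurable.integral_prod_right'.measurable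

lemma g2_meas (hfmeas : Measurable (Function.uncurry f))
    (hηmeas : Measurable fun q : ℝ × ℝ × ℝ => η q.1 q.2.1 q.2.2) :
    Measurable (g2fun c d η f) := by
  have hF : Measurable fun z : (ℝ × ℝ) × ℝ => f z.1.1 z.2 * η z.1.1 z.1.2 z.2 := by
    refine Measurable.mul ?_ ?_
    · exact hfmeas.comp ((measurable_fst.comp measurable_fst).prodMk measurable_snd)
    · exact hηmeas.comp ((measurable_fst.comp measurable_fst).prodMk
        ((measurable_snd.comp measurable_fst).prodMk measurable_snd))
  exact hF.stronglyMeasurable.integral_prod_right'.measurable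

lemma g2_bound (hcd : c ≤ d) (hf0 : ∀ x y, 0 ≤ f x y) (hfbd : ∀ x y, f x y ≤ Cf)
    (hηbd : ∀ x y₁ y₂, |η x y₁ y₂| ≤ Cη) (q : ℝ × ℝ) :
    |g2fun c d η f q| ≤ Cf * Cη * (d - c) := by
  have hCf : 0 ≤ Cf := le_trans (hf0 0 0) (hfbd 0 0)
  have hCη : 0 ≤ Cη := le_trans (abs_nonneg _) (hηbd 0 0 0)
  calc |g2fun c d η f q| ≤ ∫ u in Icc c d, |f q.1 u * η q.1 q.2 u| := by
        rw [show |g2fun c d η f q| = ‖g2fun c d η f q‖ from rfl]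
        
        exact (norm_integral_le_integral_norm _).trans_eq
          (integral_congr_ae (Eventually.of_forall fun u => rfl))
    _ ≤ ∫ u in Icc c d, Cf * Cη := by
        refine integral_mono_of_nonneg (Eventually.of_forall fun u => abs_nonneg _)
          (integrable_const _) (Eventually.of_forall fun u => ?_)
        show |f q.1 u * η q.1 q.2 u| ≤ Cf * Cη
        rw [abs_mul]
        exact mul_le_mul (by rw [abs_of_nonneg (hf0 _ _)]; exact hfbd _ _) (hηbd _ _ _)
          (abs_nonneg _) hCf
    _ = Cf * Cη * (d - c) := by
        rw [setIntegral_const, measureReal_def, Real.volume_Icc, smul_eq_mul,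
          ENNReal.toReal_ofReal (sub_nonneg.2 hcd)]
        ring

lemma alpha_fst_mem (hαmeas : ∀ i, Measurable (α i))
    (hα : ∀ i j, (∫ x in Icc a b, α i x * α j x) = if i = j then 1 else 0) (i : ι₁) :
    MemLp (fun q : ℝ × ℝ => α i q.1) 2 (recm a b c d) := by
  have hu : MemLp (α i) 2 (volume.restrict (Icc a b)) :=
    on_memℒp (hαmeas i) (by rw [hα]; simp)
  rw [memLp_two_iff_integrable_sq
    ((show Measurable fun q : ℝ × ℝ => α i q.1 from
      (hαmeas i).comp measurable_fst).aestronglyMeasurable)]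
  have : Integrable (fun q : ℝ × ℝ => α i q.1 ^ 2 * (fun _ : ℝ => (1:ℝ)) q.2)
      (recm a b c d) := Integrable.mul_prod hu.integrable_sq (integrable_const 1)
  exact this.congr (Eventually.of_forall fun q => by simp)

lemma rho_bound (hβmeas : ∀ i, Measurable (β i))
    (hβ : ∀ i j, (∫ y in Icc c d, β i y * β j y) = if i = j then 1 else 0)
    (hηbd : ∀ x y₁ y₂, |η x y₁ y₂| ≤ Cη) (i : ι₁ × ι₂) (q : ℝ × ℝ) :
    |rhofun c d α β η i q| ≤ ((∫ u in Icc c d, |β i.2 u|) * Cη) * |α i.1 q.1| := by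
  have hβint : Integrable (fun u => |β i.2 u|) (volume.restrict (Icc c d)) :=
    (Integrable.abs ((on_memℒp (hβmeas i.2) (by rw [hβ]; simp)).integrable one_le_two))
  have e1 : rhofun c d α β η i q
      = α i.1 q.1 * ∫ u in Icc c d, β i.2 u * η q.1 u q.2 := by
    rw [rhofun, show (fun u => tns α β i q.1 u * η q.1 u q.2)
      = fun u => α i.1 q.1 * (β i.2 u * η q.1 u q.2) from funext fun u => by
        simp only [tns]; ring, integral_const_mul]
  rw [e1, abs_mul, mul_comm]
  refine mul_le_mul_of_nonneg_right ?_ (abs_nonneg _)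
  calc |∫ u in Icc c d, β i.2 u * η q.1 u q.2|
      ≤ ∫ u in Icc c d, |β i.2 u * η q.1 u q.2| := by
        rw [show |∫ u in Icc c d, β i.2 u * η q.1 u q.2|
          = ‖∫ u in Icc c d, β i.2 u * η q.1 u q.2‖ from rfl]
        exact (norm_integral_le_integral_norm _).trans_eq
          (integral_congr_ae (Eventually.of_forall fun u => rfl))
    _ ≤ ∫ u in Icc c d, |β i.2 u| * Cη := by
        refine integral_mono_of_nonneg (Eventually.of_forall fun u => abs_nonneg _)
          (hβint.mul_const Cη) (Eventually.of_forall fun u => ?_)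
        show |β i.2 u * η q.1 u q.2| ≤ |β i.2 u| * Cη
        rw [abs_mul]
        exact mul_le_mul_of_nonneg_left (hηbd _ _ _) (abs_nonneg _)
    _ = (∫ u in Icc c d, |β i.2 u|) * Cη := integral_mul_const _ _

lemma rho_mem (hαmeas : ∀ i, Measurable (α i)) (hβmeas : ∀ i, Measurable (β i))
    (hα : ∀ i j, (∫ x in Icc a b, α i x * α j x) = if i = j then 1 else 0)
    (hβ : ∀ i j, (∫ y in Icc c d, β i y * β j y) = if i = j then 1 else 0)
    (hηmeas : Measurable fun q : ℝ × ℝ × ℝ => η q.1 q.2.1 q.2.2)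
    (hηbd : ∀ x y₁ y₂, |η x y₁ y₂| ≤ Cη) (i : ι₁ × ι₂) :
    MemLp (rhofun c d α β η i) 2 (recm a b c d) := by
  have hCη : 0 ≤ Cη := le_trans (abs_nonneg _) (hηbd 0 0 0)
  have hB : 0 ≤ (∫ u in Icc c d, |β i.2 u|) := integral_nonneg fun u => abs_nonneg _
  refine MemLp.of_le (((alpha_fst_mem hαmeas hα i.1).const_mul
    ((∫ u in Icc c d, |β i.2 u|) * Cη)))
    (rho_meas hαmeas hβmeas hηmeas i).aestronglyMeasurable
    (Eventually.of_forall fun q => ?_)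
  rw [Real.norm_eq_abs, Real.norm_eq_abs, abs_mul, abs_of_nonneg (mul_nonneg hB hCη)]
  exact rho_bound (α := α) hβmeas hβ hηbd i q

lemma f2_mem (hfmeas : Measurable (Function.uncurry f))
    (hf0 : ∀ x y, 0 ≤ f x y) (hfbd : ∀ x y, f x y ≤ Cf) :
    MemLp (fun q : ℝ × ℝ => f q.1 q.2) 2 (recm a b c d) := by
  refine MemLp.of_bound (hfmeas.aestronglyMeasurable) Cf
    (Eventually.of_forall fun q => ?_)
  rw [Real.norm_eq_abs, abs_of_nonneg (hf0 _ _)]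
  exact hfbd _ _

lemma g2_mem (hcd : c ≤ d) (hfmeas : Measurable (Function.uncurry f))
    (hf0 : ∀ x y, 0 ≤ f x y) (hfbd : ∀ x y, f x y ≤ Cf)
    (hηmeas : Measurable fun q : ℝ × ℝ × ℝ => η q.1 q.2.1 q.2.2)
    (hηbd : ∀ x y₁ y₂, |η x y₁ y₂| ≤ Cη) :
    MemLp (g2fun c d η f) 2 (recm a b c d) := by
  refine MemLp.of_bound (g2_meas hfmeas hηmeas).aestronglyMeasurable (Cf * Cη * (d - c))
    (Eventually.of_forall fun q => ?_)
  rw [Real.norm_eq_abs]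
  exact g2_bound hcd hf0 hfbd hηbd q

lemma bcoef_eq (hcd : c ≤ d) (hαmeas : ∀ i, Measurable (α i)) (hβmeas : ∀ i, Measurable (β i))
    (hα : ∀ i j, (∫ x in Icc a b, α i x * α j x) = if i = j then 1 else 0)
    (hβ : ∀ i j, (∫ y in Icc c d, β i y * β j y) = if i = j then 1 else 0)
    (hfmeas : Measurable (Function.uncurry f))
    (hf0 : ∀ x y, 0 ≤ f x y) (hfbd : ∀ x y, f x y ≤ Cf)
    (hηmeas : Measurable fun q : ℝ × ℝ × ℝ => η q.1 q.2.1 q.2.2)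
    (hηbd : ∀ x y₁ y₂, |η x y₁ y₂| ≤ Cη) (i : ι₁ × ι₂) :
    bcoef a b c d (tns α β) η f i
      = ∫ q, g2fun c d η f q * Pfun α β i q ∂(recm a b c d) := by
  have hint : Integrable
      (Function.uncurry fun x y => gfun c d η f x y * tns α β i x y) (recm a b c d) :=
    myIntegrableMul (g2_mem hcd hfmeas hf0 hfbd hηmeas hηbd) (Pmem hαmeas hβmeas hα hβ i)
  exact integral_integral hint

lemma cmat_eq (hαmeas : ∀ i, Measurable (α i)) (hβmeas : ∀ i, Measurable (β i))
    (hα : ∀ i j, (∫ x in Icc a b, α i x * α j x) = if i = j then 1 else 0)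
    (hβ : ∀ i j, (∫ y in Icc c d, β i y * β j y) = if i = j then 1 else 0)
    (hηmeas : Measurable fun q : ℝ × ℝ × ℝ => η q.1 q.2.1 q.2.2)
    (hηbd : ∀ x y₁ y₂, |η x y₁ y₂| ≤ Cη) (i i' : ι₁ × ι₂) :
    cmat a b c d (tns α β) η i i'
      = ∫ q, rhofun c d α β η i q * Pfun α β i' q ∂(recm a b c d) := by
  have hint : Integrable
      (Function.uncurry fun x y => rhofun c d α β η i (x, y) * Pfun α β i' (x, y))
      (recm a b c d) :=
    myIntegrableMul (rho_mem hαmeas hβmeas hα hβ hηmeas hηbd i) (Pmem hαmeas hβmeas hα hβ i')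
  have hRHS : (∫ q, rhofun c d α β η i q * Pfun α β i' q ∂(recm a b c d))
      = ∫ x in Icc a b, ∫ y in Icc c d, rhofun c d α β η i (x, y) * Pfun α β i' (x, y) :=
    (integral_integral hint).symm
  rw [hRHS, cmat, I3]
  refine integral_congr_ae (Eventually.of_forall fun x => ?_)
  have hβi : Integrable (fun u => |β i.2 u|) (volume.restrict (Icc c d)) :=
    (Integrable.abs ((on_memℒp (hβmeas i.2) (by rw [hβ]; simp)).integrable one_le_two))
  have hβi' : Integrable (fun u => |β i'.2 u|) (volume.restrict (Icc c d)) :=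
    (Integrable.abs ((on_memℒp (hβmeas i'.2) (by rw [hβ]; simp)).integrable one_le_two))
  set G : ℝ → ℝ → ℝ := fun y₁ y₂ => tns α β i x y₁ * tns α β i' x y₂ * η x y₁ y₂ with hG
  have hGint : Integrable (Function.uncurry G)
      ((volume.restrict (Icc c d)).prod (volume.restrict (Icc c d))) := by
    refine Integrable.mono' (g := fun z : ℝ × ℝ =>
      (|α i.1 x| * |α i'.1 x| * Cη) * (|β i.2 z.1| * |β i'.2 z.2|)) ?_ ?_ ?_
    · exact (Integrable.mul_prod hβi hβi').const_mul _
    · apply Measurable.aestronglyMeasurable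
      refine Measurable.mul (Measurable.mul ?_ ?_) ?_
      · exact (measurable_const.mul ((hβmeas i.2).comp measurable_fst))
      · exact (measurable_const.mul ((hβmeas i'.2).comp measurable_snd))
      · exact hηmeas.comp (measurable_const.prodMk
          (measurable_fst.prodMk measurable_snd))
    · filter_upwards with z
      have : ‖Function.uncurry G z‖
          = |α i.1 x| * |β i.2 z.1| * (|α i'.1 x| * |β i'.2 z.2|) * |η x z.1 z.2| := by
        simp only [Function.uncurry, hG, tns, Real.norm_eq_abs, abs_mul]
      rw [this]
      calc |α i.1 x| * |β i.2 z.1| * (|α i'.1 x| * |β i'.2 z.2|) * |η x z.1 z.2|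
          ≤ |α i.1 x| * |β i.2 z.1| * (|α i'.1 x| * |β i'.2 z.2|) * Cη := by
            exact mul_le_mul_of_nonneg_left (hηbd _ _ _) (by positivity)
        _ = (|α i.1 x| * |α i'.1 x| * Cη) * (|β i.2 z.1| * |β i'.2 z.2|) := by ring
  have hswap := integral_integral_swap hGint
  calc (∫ y₁ in Icc c d, ∫ y₂ in Icc c d,
        tns α β i x y₁ * tns α β i' x y₂ * η x y₁ y₂)
      = ∫ y₂ in Icc c d, ∫ y₁ in Icc c d, G y₁ y₂ := hswap
    _ = ∫ y in Icc c d, rhofun c d α β η i (x, y) * Pfun α β i' (x, y) := by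
        refine integral_congr_ae (Eventually.of_forall fun y => ?_)
        show (∫ y₁ in Icc c d, G y₁ y) = rhofun c d α β η i (x, y) * Pfun α β i' (x, y)
        rw [rhofun, Pfun, ← integral_mul_const]
        refine integral_congr_ae (Eventually.of_forall fun u => ?_)
        show G u y = tns α β i (x, u).1 (x, u).2 * η (x, y).1 (x, u).2 (x, y).2
          * tns α β i' (x, y).1 (x, y).2
        simp only [hG, tns]
        ring

lemma Gsubg_eq (hβmeas : ∀ i, Measurable (β i))
    (hβ : ∀ i j, (∫ y in Icc c d, β i y * β j y) = if i = j then 1 else 0)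
    (hfmeas : Measurable (Function.uncurry f))
    (hf0 : ∀ x y, 0 ≤ f x y) (hfbd : ∀ x y, f x y ≤ Cf)
    (hηmeas : Measurable fun q : ℝ × ℝ × ℝ => η q.1 q.2.1 q.2.2)
    (hηbd : ∀ x y₁ y₂, |η x y₁ y₂| ≤ Cη)
    (hηsym : ∀ x y₁ y₂, η x y₁ y₂ = η x y₂ y₁)
    (M : Finset (ι₁ × ι₂)) (q : ℝ × ℝ) :
    (∑ i ∈ M, coef a b c d (tns α β) f i * rhofun c d α β η i q) - g2fun c d η f q
      = ∫ u in Icc c d, (SM a b c d (tns α β) f M q.1 u - f q.1 u) * η q.1 u q.2 := by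
  have hηsec : Measurable fun u : ℝ => η q.1 u q.2 :=
    hηmeas.comp (measurable_const.prodMk (measurable_id.prodMk measurable_const))
  have hβint : ∀ i : ι₁ × ι₂, Integrable (fun u => β i.2 u * η q.1 u q.2)
      (volume.restrict (Icc c d)) := by
    intro i
    have habs : Integrable (fun u => |β i.2 u|) (volume.restrict (Icc c d)) :=
      (Integrable.abs ((on_memℒp (hβmeas i.2) (by rw [hβ]; simp)).integrable one_le_two))
    refine Integrable.mono' (habs.mul_const Cη)
      (((hβmeas i.2).mul hηsec).aestronglyMeasurable)
      (Eventually.of_forall fun u => ?_)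
    rw [Real.norm_eq_abs, abs_mul]
    exact mul_le_mul_of_nonneg_left (hηbd _ _ _) (abs_nonneg _)
  have htns : ∀ i ∈ M, Integrable
      (fun u => coef a b c d (tns α β) f i * (tns α β i q.1 u * η q.1 u q.2))
      (volume.restrict (Icc c d)) := by
    intro i _
    have h := ((hβint i).const_mul (coef a b c d (tns α β) f i * α i.1 q.1))
    refine h.congr (Eventually.of_forall fun u => ?_)
    show coef a b c d (tns α β) f i * α i.1 q.1 * (β i.2 u * η q.1 u q.2)
      = coef a b c d (tns α β) f i * (tns α β i q.1 u * η q.1 u q.2)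
    simp only [tns]; ring
  have hfη : Integrable (fun u => f q.1 u * η q.1 u q.2) (volume.restrict (Icc c d)) := by
    have hCf : 0 ≤ Cf := le_trans (hf0 0 0) (hfbd 0 0)
    have hCη : 0 ≤ Cη := le_trans (abs_nonneg _) (hηbd 0 0 0)
    refine Integrable.mono' (integrable_const (Cf * Cη))
      ((hfmeas.of_uncurry_left.mul hηsec).aestronglyMeasurable)
      (Eventually.of_forall fun u => ?_)
    rw [Real.norm_eq_abs, abs_mul]
    exact mul_le_mul (by rw [abs_of_nonneg (hf0 _ _)]; exact hfbd _ _) (hηbd _ _ _)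
      (abs_nonneg _) hCf
  have hSMη : Integrable (fun u => SM a b c d (tns α β) f M q.1 u * η q.1 u q.2)
      (volume.restrict (Icc c d)) := by
    have h := integrable_finset_sum M htns
    refine h.congr (Eventually.of_forall fun u => ?_)
    show (∑ i ∈ M, coef a b c d (tns α β) f i * (tns α β i q.1 u * η q.1 u q.2))
      = SM a b c d (tns α β) f M q.1 u * η q.1 u q.2
    rw [SM, Finset.sum_mul]
    exact Finset.sum_congr rfl fun i _ => by ring
  have step1 : (∑ i ∈ M, coef a b c d (tns α β) f i * rhofun c d α β η i q)
      = ∫ u in Icc c d, SM a b c d (tns α β) f M q.1 u * η q.1 u q.2 := by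
    have e : ∀ u : ℝ, SM a b c d (tns α β) f M q.1 u * η q.1 u q.2
        = ∑ i ∈ M, coef a b c d (tns α β) f i * (tns α β i q.1 u * η q.1 u q.2) := by
      intro u
      rw [SM, Finset.sum_mul]
      exact Finset.sum_congr rfl fun i _ => by ring
    rw [integral_congr_ae (Eventually.of_forall e), integral_finset_sum M htns]
    exact Finset.sum_congr rfl fun i _ => by rw [integral_const_mul]; rfl
  have step2 : g2fun c d η f q = ∫ u in Icc c d, f q.1 u * η q.1 u q.2 := by
    rw [g2fun, gfun]
    refine integral_congr_ae (Eventually.of_forall fun u => ?_)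
    show f q.1 u * η q.1 q.2 u = f q.1 u * η q.1 u q.2
    rw [hηsym q.1 q.2 u]
  rw [step1, step2, ← integral_sub hSMη hfη]
  exact integral_congr_ae (Eventually.of_forall fun u => by ring)

lemma Gsubg_sq_le (hcd : c ≤ d) (hβmeas : ∀ i, Measurable (β i))
    (hβ : ∀ i j, (∫ y in Icc c d, β i y * β j y) = if i = j then 1 else 0)
    (hfmeas : Measurable (Function.uncurry f))
    (hf0 : ∀ x y, 0 ≤ f x y) (hfbd : ∀ x y, f x y ≤ Cf)
    (hηmeas : Measurable fun q : ℝ × ℝ × ℝ => η q.1 q.2.1 q.2.2)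
    (hηbd : ∀ x y₁ y₂, |η x y₁ y₂| ≤ Cη)
    (hηsym : ∀ x y₁ y₂, η x y₁ y₂ = η x y₂ y₁)
    (M : Finset (ι₁ × ι₂)) (q : ℝ × ℝ) :
    ((∑ i ∈ M, coef a b c d (tns α β) f i * rhofun c d α β η i q) - g2fun c d η f q) ^ 2
      ≤ Cη ^ 2 * (d - c)
        * ∫ u in Icc c d, (SM a b c d (tns α β) f M q.1 u - f q.1 u) ^ 2 := by
  have hCη : 0 ≤ Cη := le_trans (abs_nonneg _) (hηbd 0 0 0)
  set D : ℝ → ℝ := fun u => SM a b c d (tns α β) f M q.1 u - f q.1 u with hD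
  have hDmem : MemLp D 2 (volume.restrict (Icc c d)) := by
    have hSMmem : MemLp (fun u => ∑ i ∈ M, coef a b c d (tns α β) f i * tns α β i q.1 u)
        2 (volume.restrict (Icc c d)) := by
      refine memℒp_sum_fun M _ fun i _ => ?_
      have h := ((on_memℒp (hβmeas i.2) (by rw [hβ]; simp)).const_mul
        (coef a b c d (tns α β) f i * α i.1 q.1))
      rw [show (fun u => coef a b c d (tns α β) f i * tns α β i q.1 u)
        = fun u => (coef a b c d (tns α β) f i * α i.1 q.1) * β i.2 u from
        funext fun u => by simp only [tns]; ring]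
      exact h
    have hfsec : MemLp (fun u => f q.1 u) 2 (volume.restrict (Icc c d)) := by
      refine MemLp.of_bound (hfmeas.of_uncurry_left.aestronglyMeasurable) Cf
        (Eventually.of_forall fun u => ?_)
      rw [Real.norm_eq_abs, abs_of_nonneg (hf0 _ _)]; exact hfbd _ _
    exact hSMmem.sub hfsec
  have hDabs : MemLp (fun u => |D u|) 2 (volume.restrict (Icc c d)) := by
    simpa only [Real.norm_eq_abs] using hDmem.norm
  have hDint : Integrable (fun u => |D u|) (volume.restrict (Icc c d)) :=
    (hDmem.integrable one_le_two).abs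
  -- |linear part| ≤ Cη * ∫ |D|
  have h1 : |(∑ i ∈ M, coef a b c d (tns α β) f i * rhofun c d α β η i q)
      - g2fun c d η f q| ≤ Cη * ∫ u in Icc c d, |D u| := by
    rw [Gsubg_eq hβmeas hβ hfmeas hf0 hfbd hηmeas hηbd hηsym M q]
    calc |∫ u in Icc c d, D u * η q.1 u q.2|
        ≤ ∫ u in Icc c d, |D u * η q.1 u q.2| := by
          rw [show |∫ u in Icc c d, D u * η q.1 u q.2|
            = ‖∫ u in Icc c d, D u * η q.1 u q.2‖ from rfl]
          exact (norm_integral_le_integral_norm _).trans_eq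
            (integral_congr_ae (Eventually.of_forall fun u => rfl))
      _ ≤ ∫ u in Icc c d, |D u| * Cη := by
          refine integral_mono_of_nonneg (Eventually.of_forall fun u => abs_nonneg _)
            (hDint.mul_const Cη) (Eventually.of_forall fun u => ?_)
          show |D u * η q.1 u q.2| ≤ |D u| * Cη
          rw [abs_mul]
          exact mul_le_mul_of_nonneg_left (hηbd _ _ _) (abs_nonneg _)
      _ = Cη * ∫ u in Icc c d, |D u| := by rw [integral_mul_const]; ring
  -- ∫|D| ≤ sqrt(∫ D²) * sqrt(d-c)
  have h2 : (∫ u in Icc c d, |D u|)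
      ≤ Real.sqrt (∫ u in Icc c d, D u ^ 2) * Real.sqrt (d - c) := by
    have key := myCS hDabs (memLp_const (μ := volume.restrict (Icc c d)) (1:ℝ))
    simp only [mul_one, one_pow, sq_abs] at key
    rw [show (∫ u in Icc c d, (1:ℝ)) = d - c from by
      rw [setIntegral_const, measureReal_def, Real.volume_Icc, smul_eq_mul, mul_one,
        ENNReal.toReal_ofReal (sub_nonneg.2 hcd)]] at key
    exact (le_abs_self _).trans key
  have hsq : 0 ≤ ∫ u in Icc c d, D u ^ 2 := integral_nonneg fun u => sq_nonneg _
  have h3 : ((∑ i ∈ M, coef a b c d (tns α β) f i * rhofun c d α β η i q)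
      - g2fun c d η f q) ^ 2
      ≤ (Cη * (Real.sqrt (∫ u in Icc c d, D u ^ 2) * Real.sqrt (d - c))) ^ 2 := by
    rw [← sq_abs]
    exact pow_le_pow_left₀ (abs_nonneg _)
      (h1.trans (mul_le_mul_of_nonneg_left h2 hCη)) 2
  calc ((∑ i ∈ M, coef a b c d (tns α β) f i * rhofun c d α β η i q)
      - g2fun c d η f q) ^ 2
      ≤ (Cη * (Real.sqrt (∫ u in Icc c d, D u ^ 2) * Real.sqrt (d - c))) ^ 2 := h3
    _ = Cη ^ 2 * ((Real.sqrt (∫ u in Icc c d, D u ^ 2)) ^ 2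
        * (Real.sqrt (d - c)) ^ 2) := by ring
    _ = Cη ^ 2 * (d - c) * ∫ u in Icc c d, D u ^ 2 := by
        rw [Real.sq_sqrt hsq, Real.sq_sqrt (sub_nonneg.2 hcd)]; ring

lemma Gg_int_le (hcd : c ≤ d) (hαmeas : ∀ i, Measurable (α i))
    (hβmeas : ∀ i, Measurable (β i))
    (hα : ∀ i j, (∫ x in Icc a b, α i x * α j x) = if i = j then 1 else 0)
    (hβ : ∀ i j, (∫ y in Icc c d, β i y * β j y) = if i = j then 1 else 0)
    (hfmeas : Measurable (Function.uncurry f))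
    (hf0 : ∀ x y, 0 ≤ f x y) (hfbd : ∀ x y, f x y ≤ Cf)
    (hηmeas : Measurable fun q : ℝ × ℝ × ℝ => η q.1 q.2.1 q.2.2)
    (hηbd : ∀ x y₁ y₂, |η x y₁ y₂| ≤ Cη)
    (hηsym : ∀ x y₁ y₂, η x y₁ y₂ = η x y₂ y₁)
    (M : Finset (ι₁ × ι₂)) :
    (∫ q, ((∑ i ∈ M, coef a b c d (tns α β) f i * rhofun c d α β η i q)
        - g2fun c d η f q) ^ 2 ∂(recm a b c d))
      ≤ Cη ^ 2 * (d - c) ^ 2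
        * I2 a b c d (fun x y => (SM a b c d (tns α β) f M x y - f x y) ^ 2) := by
  set J : ℝ → ℝ := fun x => ∫ u in Icc c d, (SM a b c d (tns α β) f M x u - f x u) ^ 2
    with hJdef
  have hDD : MemLp (fun q : ℝ × ℝ => SM a b c d (tns α β) f M q.1 q.2 - f q.1 q.2)
      2 (recm a b c d) := by
    have hSM : MemLp (fun q : ℝ × ℝ => ∑ i ∈ M, coef a b c d (tns α β) f i * Pfun α β i q)
        2 (recm a b c d) :=
      memℒp_sum_fun M _ fun i _ => (Pmem hαmeas hβmeas hα hβ i).const_mul _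
    have := hSM.sub (f2_mem hfmeas hf0 hfbd)
    exact this
  have hJ : Integrable J (volume.restrict (Icc a b)) := hDD.integrable_sq.integral_prod_left
  have hJ2 : Integrable (fun q : ℝ × ℝ => J q.1) (recm a b c d) :=
    (Integrable.mul_prod hJ (integrable_const 1)).congr
      (Eventually.of_forall fun q => by simp)
  have hmono : (∫ q, ((∑ i ∈ M, coef a b c d (tns α β) f i * rhofun c d α β η i q)
        - g2fun c d η f q) ^ 2 ∂(recm a b c d))
      ≤ ∫ q, Cη ^ 2 * (d - c) * J q.1 ∂(recm a b c d) := by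
    refine integral_mono_of_nonneg (Eventually.of_forall fun q => sq_nonneg _)
      (hJ2.const_mul _) (Eventually.of_forall fun q => ?_)
    exact Gsubg_sq_le hcd hβmeas hβ hfmeas hf0 hfbd hηmeas hηbd hηsym M q
  have heval : (∫ q, Cη ^ 2 * (d - c) * J q.1 ∂(recm a b c d))
      = Cη ^ 2 * (d - c) * ((∫ x in Icc a b, J x) * (d - c)) := by
    rw [integral_const_mul]
    congr 1
    calc (∫ q, J q.1 ∂(recm a b c d))
        = ∫ q, J q.1 * (fun _ : ℝ => (1:ℝ)) q.2 ∂(recm a b c d) :=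
          integral_congr_ae (Eventually.of_forall fun q => by simp)
      _ = ∫ q, J q.1 * (fun _ : ℝ => (1:ℝ)) q.2
            ∂((volume.restrict (Icc a b)).prod (volume.restrict (Icc c d))) := rfl
      _ = (∫ x in Icc a b, J x) * (∫ y in Icc c d, (1:ℝ)) :=
            integral_prod_mul J (fun _ : ℝ => (1:ℝ))
      _ = (∫ x in Icc a b, J x) * (d - c) := by
          rw [setIntegral_const, measureReal_def, Real.volume_Icc, smul_eq_mul, mul_one,
            ENNReal.toReal_ofReal (sub_nonneg.2 hcd)]
  have hI2 : (∫ x in Icc a b, J x)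
      = I2 a b c d (fun x y => (SM a b c d (tns α β) f M x y - f x y) ^ 2) := rfl
  calc (∫ q, ((∑ i ∈ M, coef a b c d (tns α β) f i * rhofun c d α β η i q)
        - g2fun c d η f q) ^ 2 ∂(recm a b c d))
      ≤ ∫ q, Cη ^ 2 * (d - c) * J q.1 ∂(recm a b c d) := hmono
    _ = Cη ^ 2 * (d - c) * ((∫ x in Icc a b, J x) * (d - c)) := heval
    _ = _ := by rw [hI2]; ring

lemma Pfun_meas (hαmeas : ∀ i, Measurable (α i)) (hβmeas : ∀ i, Measurable (β i))
    (i : ι₁ × ι₂) : Measurable (Pfun α β i) :=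
  ((hαmeas i.1).comp measurable_fst).mul ((hβmeas i.2).comp measurable_snd)

lemma W_meas (hαmeas : ∀ i, Measurable (α i)) (hβmeas : ∀ i, Measurable (β i))
    (hηmeas : Measurable fun q : ℝ × ℝ × ℝ => η q.1 q.2.1 q.2.2)
    (M : Finset (ι₁ × ι₂)) : Measurable (Wfun a b c d α β η f M) := by
  unfold Wfun
  refine Measurable.sub (Measurable.add ?_ ?_) ?_
  · exact Finset.measurable_sum M fun i _ =>
      (rho_meas hαmeas hβmeas hηmeas i).const_mul _
  · exact Finset.measurable_sum M fun i _ =>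
      (Pfun_meas hαmeas hβmeas i).const_mul _
  · exact Finset.measurable_sum M fun i _ =>
      Finset.measurable_sum M fun i' _ => (Pfun_meas hαmeas hβmeas i').const_mul _

lemma W_mem (hαmeas : ∀ i, Measurable (α i)) (hβmeas : ∀ i, Measurable (β i))
    (hα : ∀ i j, (∫ x in Icc a b, α i x * α j x) = if i = j then 1 else 0)
    (hβ : ∀ i j, (∫ y in Icc c d, β i y * β j y) = if i = j then 1 else 0)
    (hηmeas : Measurable fun q : ℝ × ℝ × ℝ => η q.1 q.2.1 q.2.2)
    (hηbd : ∀ x y₁ y₂, |η x y₁ y₂| ≤ Cη)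
    (M : Finset (ι₁ × ι₂)) : MemLp (Wfun a b c d α β η f M) 2 (recm a b c d) := by
  have h1 : MemLp (fun q => ∑ i ∈ M, coef a b c d (tns α β) f i * rhofun c d α β η i q)
      2 (recm a b c d) :=
    memℒp_sum_fun M _ fun i _ => (rho_mem hαmeas hβmeas hα hβ hηmeas hηbd i).const_mul _
  have h2 : MemLp (fun q => ∑ i ∈ M, bcoef a b c d (tns α β) η f i * Pfun α β i q)
      2 (recm a b c d) :=
    memℒp_sum_fun M _ fun i _ => (Pmem hαmeas hβmeas hα hβ i).const_mul _
  have h3 : MemLp (fun q => ∑ i ∈ M, ∑ i' ∈ M, coef a b c d (tns α β) f i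
      * cmat a b c d (tns α β) η i i' * Pfun α β i' q) 2 (recm a b c d) :=
    memℒp_sum_fun M _ fun i _ =>
      memℒp_sum_fun M _ fun i' _ => (Pmem hαmeas hβmeas hα hβ i').const_mul _
  exact (h1.add h2).sub h3

lemma Lker_fun_eq (M : Finset (ι₁ × ι₂)) :
    (fun q : ℝ × ℝ => Lker a b c d (tns α β) η f M q.1 q.2)
      = fun q => 2 * Wfun a b c d α β η f M q - 2 * cconst a b c d α β η f M :=
  funext fun q => Lker_eq_W a b c d α β η f M q

lemma Lker_meas (hαmeas : ∀ i, Measurable (α i)) (hβmeas : ∀ i, Measurable (β i))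
    (hηmeas : Measurable fun q : ℝ × ℝ × ℝ => η q.1 q.2.1 q.2.2)
    (M : Finset (ι₁ × ι₂)) :
    Measurable (fun q : ℝ × ℝ => Lker a b c d (tns α β) η f M q.1 q.2) := by
  rw [Lker_fun_eq]
  exact ((W_meas hαmeas hβmeas hηmeas M).const_mul 2).sub measurable_const

lemma Lker_mem_nu (hαmeas : ∀ i, Measurable (α i)) (hβmeas : ∀ i, Measurable (β i))
    (hα : ∀ i j, (∫ x in Icc a b, α i x * α j x) = if i = j then 1 else 0)
    (hβ : ∀ i j, (∫ y in Icc c d, β i y * β j y) = if i = j then 1 else 0)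
    (hfmeas : Measurable (Function.uncurry f))
    (hf0 : ∀ x y, 0 ≤ f x y) (hfbd : ∀ x y, f x y ≤ Cf)
    (hfsupp : ∀ x y, f x y ≠ 0 → x ∈ Icc a b ∧ y ∈ Icc c d)
    (hηmeas : Measurable fun q : ℝ × ℝ × ℝ => η q.1 q.2.1 q.2.2)
    (hηbd : ∀ x y₁ y₂, |η x y₁ y₂| ≤ Cη)
    (M : Finset (ι₁ × ι₂)) :
    MemLp (fun q : ℝ × ℝ => Lker a b c d (tns α β) η f M q.1 q.2) 2 (nu f) := by
  refine nu_memℒp f hfmeas hf0 hfbd hfsupp (Lker_meas hαmeas hβmeas hηmeas M) ?_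
  rw [Lker_fun_eq]
  exact ((W_mem hαmeas hβmeas hα hβ hηmeas hηbd M).const_mul 2).sub (memLp_const _)

lemma Vshift {γ : Type*} [MeasurableSpace γ] {m : Measure γ} [IsProbabilityMeasure m]
    {u : γ → ℝ} (hu : MemLp u 2 m) (k : ℝ) :
    (∫ x, (2 * u x - k) ^ 2 ∂m) - (∫ x, (2 * u x - k) ∂m) ^ 2
      = 4 * ((∫ x, u x ^ 2 ∂m) - (∫ x, u x ∂m) ^ 2) := by
  have hu1 : Integrable u m := hu.integrable one_le_two
  have hu2 : Integrable (fun x => u x ^ 2) m := hu.integrable_sq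
  have e1 : (∫ x, (2 * u x - k) ^ 2 ∂m)
      = 4 * (∫ x, u x ^ 2 ∂m) - 4 * k * (∫ x, u x ∂m) + k ^ 2 := by
    have h : ∀ x, (2 * u x - k) ^ 2 = 4 * u x ^ 2 - 4 * k * u x + k ^ 2 := fun x => by ring
    rw [integral_congr_ae (Eventually.of_forall h),
      integral_add (f := fun x => 4 * u x ^ 2 - 4 * k * u x) (g := fun _ => k ^ 2)
        ((hu2.const_mul 4).sub (hu1.const_mul (4 * k))) (integrable_const _),
      integral_sub (f := fun x => 4 * u x ^ 2) (g := fun x => 4 * k * u x)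
        (hu2.const_mul 4) (hu1.const_mul (4 * k)),
      integral_const_mul, integral_const_mul, integral_const, measureReal_def, measure_univ,
      ENNReal.toReal_one, one_smul]
  have e2 : (∫ x, (2 * u x - k) ∂m) = 2 * (∫ x, u x ∂m) - k := by
    rw [integral_sub (f := fun x => 2 * u x) (g := fun _ => k)
        (hu1.const_mul 2) (integrable_const k),
      integral_const_mul, integral_const, measureReal_def, measure_univ, ENNReal.toReal_one, one_smul]
  rw [e1, e2]; ring

lemma Lam_eq (hcd : c ≤ d) (hfmeas : Measurable (Function.uncurry f))
    (hf0 : ∀ x y, 0 ≤ f x y) (hfbd : ∀ x y, f x y ≤ Cf)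
    (hfsupp : ∀ x y, f x y ≠ 0 → x ∈ Icc a b ∧ y ∈ Icc c d)
    (hηmeas : Measurable fun q : ℝ × ℝ × ℝ => η q.1 q.2.1 q.2.2)
    (hηbd : ∀ x y₁ y₂, |η x y₁ y₂| ≤ Cη) :
    Lam a b c d η f
      = 4 * ((∫ q, g2fun c d η f q ^ 2 ∂(nu f))
        - (∫ q, g2fun c d η f q ∂(nu f)) ^ 2) := by
  have hg2sq : MemLp (fun q => g2fun c d η f q ^ 2) 2 (recm a b c d) := by
    refine MemLp.of_bound ((g2_meas hfmeas hηmeas).pow_const 2).aestronglyMeasurable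
      ((Cf * Cη * (d - c)) ^ 2) (Eventually.of_forall fun q => ?_)
    rw [Real.norm_eq_abs, abs_pow]
    exact pow_le_pow_left₀ (abs_nonneg _) (g2_bound hcd hf0 hfbd hηbd q) 2
  have h1 : (∫ q, g2fun c d η f q ^ 2 ∂(nu f))
      = I2 a b c d fun x y => gfun c d η f x y ^ 2 * f x y := by
    rw [nu_integral (a := a) (b := b) (c := c) (d := d) f hfmeas hf0 hfsupp
      (fun q => g2fun c d η f q ^ 2)]
    have hint : Integrable (Function.uncurry fun x y => gfun c d η f x y ^ 2 * f x y)
        (recm a b c d) := myIntegrableMul hg2sq (f2_mem hfmeas hf0 hfbd)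
    exact (integral_integral hint).symm
  have h2 : (∫ q, g2fun c d η f q ∂(nu f))
      = I2 a b c d fun x y => gfun c d η f x y * f x y := by
    rw [nu_integral (a := a) (b := b) (c := c) (d := d) f hfmeas hf0 hfsupp
      (g2fun c d η f)]
    have hint : Integrable (Function.uncurry fun x y => gfun c d η f x y * f x y)
        (recm a b c d) :=
      myIntegrableMul (g2_mem hcd hfmeas hf0 hfbd hηmeas hηbd) (f2_mem hfmeas hf0 hfbd)
    exact (integral_integral hint).symm
  rw [Lam, h1, h2]

lemma Wg_nu_le (hcd : c ≤ d) (hαmeas : ∀ i, Measurable (α i))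
    (hβmeas : ∀ i, Measurable (β i))
    (hα : ∀ i j, (∫ x in Icc a b, α i x * α j x) = if i = j then 1 else 0)
    (hβ : ∀ i j, (∫ y in Icc c d, β i y * β j y) = if i = j then 1 else 0)
    (hfmeas : Measurable (Function.uncurry f))
    (hf0 : ∀ x y, 0 ≤ f x y) (hfbd : ∀ x y, f x y ≤ Cf)
    (hfsupp : ∀ x y, f x y ≠ 0 → x ∈ Icc a b ∧ y ∈ Icc c d)
    (hηmeas : Measurable fun q : ℝ × ℝ × ℝ => η q.1 q.2.1 q.2.2)
    (hηbd : ∀ x y₁ y₂, |η x y₁ y₂| ≤ Cη)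
    (hηsym : ∀ x y₁ y₂, η x y₁ y₂ = η x y₂ y₁)
    (M : Finset (ι₁ × ι₂)) :
    (∫ q, (Wfun a b c d α β η f M q - g2fun c d η f q) ^ 2 ∂(nu f))
      ≤ (Cf * (4 * (Cη ^ 2 * (d - c) ^ 2)))
        * I2 a b c d (fun x y => (SM a b c d (tns α β) f M x y - f x y) ^ 2) := by
  have hCf : 0 ≤ Cf := le_trans (hf0 0 0) (hfbd 0 0)
  set G : ℝ × ℝ → ℝ :=
    fun q => ∑ i ∈ M, coef a b c d (tns α β) f i * rhofun c d α β η i q with hG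
  set dc : ι₁ × ι₂ → ℝ := fun i' => bcoef a b c d (tns α β) η f i'
    - ∑ i ∈ M, coef a b c d (tns α β) f i * cmat a b c d (tns α β) η i i' with hdc
  set Δ : ℝ × ℝ → ℝ := fun q => ∑ i' ∈ M, dc i' * Pfun α β i' q with hΔ
  have mG : MemLp G 2 (recm a b c d) :=
    memℒp_sum_fun M _ fun i _ => (rho_mem hαmeas hβmeas hα hβ hηmeas hηbd i).const_mul _
  have mΔ : MemLp Δ 2 (recm a b c d) :=
    memℒp_sum_fun M _ fun i _ => (Pmem hαmeas hβmeas hα hβ i).const_mul _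
  have mg2 : MemLp (g2fun c d η f) 2 (recm a b c d) :=
    g2_mem hcd hfmeas hf0 hfbd hηmeas hηbd
  have mW : MemLp (Wfun a b c d α β η f M) 2 (recm a b c d) :=
    W_mem hαmeas hβmeas hα hβ hηmeas hηbd M
  -- decomposition
  have hdec : ∀ q, Wfun a b c d α β η f M q - g2fun c d η f q
      = (G q - g2fun c d η f q) + Δ q := by
    intro q
    have hS3 : (∑ i ∈ M, ∑ i' ∈ M, coef a b c d (tns α β) f i
        * cmat a b c d (tns α β) η i i' * Pfun α β i' q)
        = ∑ i' ∈ M, (∑ i ∈ M, coef a b c d (tns α β) f i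
          * cmat a b c d (tns α β) η i i') * Pfun α β i' q := by
      rw [Finset.sum_comm]
      exact Finset.sum_congr rfl fun i' _ => (Finset.sum_mul _ _ _).symm
    simp only [Wfun, hG, hΔ, hdc, sub_mul, Finset.sum_sub_distrib, hS3]
    ring
  -- value of ∫ Δ²
  have hΔval : (∫ q, Δ q ^ 2 ∂(recm a b c d)) = ∑ i' ∈ M, dc i' ^ 2 :=
    myExpand M (Pfun α β) dc (fun i _ => Pmem hαmeas hβmeas hα hβ i)
      (fun i _ j _ => Porth hα hβ i j)
  -- dc as an inner product
  have hdceq : ∀ i' : ι₁ × ι₂, dc i'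
      = ∫ q, (g2fun c d η f q - G q) * Pfun α β i' q ∂(recm a b c d) := by
    intro i'
    have hκ : (∑ i ∈ M, coef a b c d (tns α β) f i * cmat a b c d (tns α β) η i i')
        = ∫ q, G q * Pfun α β i' q ∂(recm a b c d) := by
      calc (∑ i ∈ M, coef a b c d (tns α β) f i * cmat a b c d (tns α β) η i i')
          = ∑ i ∈ M, ∫ q, coef a b c d (tns α β) f i
            * (rhofun c d α β η i q * Pfun α β i' q) ∂(recm a b c d) := by
            refine Finset.sum_congr rfl fun i _ => ?_
            rw [cmat_eq hαmeas hβmeas hα hβ hηmeas hηbd i i', integral_const_mul]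
        _ = ∫ q, ∑ i ∈ M, coef a b c d (tns α β) f i
            * (rhofun c d α β η i q * Pfun α β i' q) ∂(recm a b c d) :=
            (integral_finset_sum M fun i _ =>
              (myIntegrableMul (rho_mem hαmeas hβmeas hα hβ hηmeas hηbd i)
                (Pmem hαmeas hβmeas hα hβ i')).const_mul _).symm
        _ = ∫ q, G q * Pfun α β i' q ∂(recm a b c d) := by
            refine integral_congr_ae (Eventually.of_forall fun q => ?_)
            show (∑ i ∈ M, coef a b c d (tns α β) f i
              * (rhofun c d α β η i q * Pfun α β i' q)) = G q * Pfun α β i' q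
            rw [hG, Finset.sum_mul]
            exact Finset.sum_congr rfl fun i _ => by ring
    rw [hdc]
    simp only []
    rw [hκ, bcoef_eq hcd hαmeas hβmeas hα hβ hfmeas hf0 hfbd hηmeas hηbd i',
      ← integral_sub (f := fun q => g2fun c d η f q * Pfun α β i' q)
        (g := fun q => G q * Pfun α β i' q)
        (myIntegrableMul mg2 (Pmem hαmeas hβmeas hα hβ i'))
        (myIntegrableMul mG (Pmem hαmeas hβmeas hα hβ i'))]
    exact integral_congr_ae (Eventually.of_forall fun q => by ring)
  -- Bessel
  have hBess : (∑ i' ∈ M, dc i' ^ 2)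
      ≤ ∫ q, (g2fun c d η f q - G q) ^ 2 ∂(recm a b c d) := by
    have h := myBessel M (Pfun α β) (fun i _ => Pmem hαmeas hβmeas hα hβ i)
      (fun i _ j _ => Porth hα hβ i j) (mg2.sub mG)
    calc (∑ i' ∈ M, dc i' ^ 2)
        = ∑ i' ∈ M, (∫ q, (g2fun c d η f q - G q) * Pfun α β i' q
          ∂(recm a b c d)) ^ 2 :=
          Finset.sum_congr rfl fun i' _ => by rw [hdceq i']
      _ ≤ ∫ q, (g2fun c d η f q - G q) ^ 2 ∂(recm a b c d) := h
  have hsymI : (∫ q, (g2fun c d η f q - G q) ^ 2 ∂(recm a b c d))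
      = ∫ q, (G q - g2fun c d η f q) ^ 2 ∂(recm a b c d) :=
    integral_congr_ae (Eventually.of_forall fun q => by ring)
  -- main L² (recm) bound
  have hGg : (∫ q, (G q - g2fun c d η f q) ^ 2 ∂(recm a b c d))
      ≤ Cη ^ 2 * (d - c) ^ 2
        * I2 a b c d (fun x y => (SM a b c d (tns α β) f M x y - f x y) ^ 2) :=
    Gg_int_le hcd hαmeas hβmeas hα hβ hfmeas hf0 hfbd hηmeas hηbd hηsym M
  have h1 : (∫ q, (Wfun a b c d α β η f M q - g2fun c d η f q) ^ 2 ∂(recm a b c d))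
      ≤ ∫ q, (2 * (G q - g2fun c d η f q) ^ 2 + 2 * Δ q ^ 2) ∂(recm a b c d) := by
    refine integral_mono_of_nonneg (Eventually.of_forall fun q => sq_nonneg _)
      ((((mG.sub mg2).integrable_sq).const_mul 2).add ((mΔ.integrable_sq).const_mul 2))
      (Eventually.of_forall fun q => ?_)
    show (Wfun a b c d α β η f M q - g2fun c d η f q) ^ 2
      ≤ 2 * (G q - g2fun c d η f q) ^ 2 + 2 * Δ q ^ 2
    rw [hdec q]
    nlinarith [sq_nonneg (G q - g2fun c d η f q - Δ q)]
  have h2 : (∫ q, (2 * (G q - g2fun c d η f q) ^ 2 + 2 * Δ q ^ 2) ∂(recm a b c d))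
      = 2 * (∫ q, (G q - g2fun c d η f q) ^ 2 ∂(recm a b c d))
        + 2 * (∫ q, Δ q ^ 2 ∂(recm a b c d)) := by
    rw [integral_add (f := fun q => 2 * (G q - g2fun c d η f q) ^ 2)
      (g := fun q => 2 * Δ q ^ 2)
      (((mG.sub mg2).integrable_sq).const_mul 2) ((mΔ.integrable_sq).const_mul 2),
      integral_const_mul, integral_const_mul]
  have hrec : (∫ q, (Wfun a b c d α β η f M q - g2fun c d η f q) ^ 2 ∂(recm a b c d))
      ≤ 4 * (Cη ^ 2 * (d - c) ^ 2
        * I2 a b c d (fun x y => (SM a b c d (tns α β) f M x y - f x y) ^ 2)) := by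
    have := h1
    rw [h2] at this
    rw [hΔval] at this
    linarith [hBess, hGg, hsymI.le, hsymI.ge]
  -- pass to nu f
  have hnuint : (∫ q, (Wfun a b c d α β η f M q - g2fun c d η f q) ^ 2 ∂(nu f))
      = ∫ q, (Wfun a b c d α β η f M q - g2fun c d η f q) ^ 2 * f q.1 q.2
        ∂(recm a b c d) :=
    nu_integral (a := a) (b := b) (c := c) (d := d) f hfmeas hf0 hfsupp _
  have hnule : (∫ q, (Wfun a b c d α β η f M q - g2fun c d η f q) ^ 2 * f q.1 q.2
      ∂(recm a b c d))
      ≤ Cf * ∫ q, (Wfun a b c d α β η f M q - g2fun c d η f q) ^ 2 ∂(recm a b c d) := by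
    rw [← integral_const_mul]
    refine integral_mono_of_nonneg
      (Eventually.of_forall fun q => mul_nonneg (sq_nonneg _) (hf0 _ _))
      (((mW.sub mg2).integrable_sq).const_mul Cf) (Eventually.of_forall fun q => ?_)
    show (Wfun a b c d α β η f M q - g2fun c d η f q) ^ 2 * f q.1 q.2
      ≤ Cf * (Wfun a b c d α β η f M q - g2fun c d η f q) ^ 2
    rw [mul_comm Cf _]
    exact mul_le_mul_of_nonneg_left (hfbd _ _) (sq_nonneg _)
  calc (∫ q, (Wfun a b c d α β η f M q - g2fun c d η f q) ^ 2 ∂(nu f))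
      ≤ Cf * ∫ q, (Wfun a b c d α β η f M q - g2fun c d η f q) ^ 2 ∂(recm a b c d) := by
        rw [hnuint]; exact hnule
    _ ≤ (Cf * (4 * (Cη ^ 2 * (d - c) ^ 2)))
        * I2 a b c d (fun x y => (SM a b c d (tns α β) f M x y - f x y) ^ 2) := by
        have := mul_le_mul_of_nonneg_left hrec hCf
        calc Cf * ∫ q, (Wfun a b c d α β η f M q - g2fun c d η f q) ^ 2 ∂(recm a b c d)
            ≤ Cf * (4 * (Cη ^ 2 * (d - c) ^ 2
              * I2 a b c d (fun x y => (SM a b c d (tns α β) f M x y - f x y) ^ 2))) :=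
              this
          _ = _ := by ring

lemma core (hcd : c ≤ d) (hαmeas : ∀ i, Measurable (α i))
    (hβmeas : ∀ i, Measurable (β i))
    (hα : ∀ i j, (∫ x in Icc a b, α i x * α j x) = if i = j then 1 else 0)
    (hβ : ∀ i j, (∫ y in Icc c d, β i y * β j y) = if i = j then 1 else 0)
    (hfmeas : Measurable (Function.uncurry f))
    (hf0 : ∀ x y, 0 ≤ f x y) (hfbd : ∀ x y, f x y ≤ Cf)
    (hfsupp : ∀ x y, f x y ≠ 0 → x ∈ Icc a b ∧ y ∈ Icc c d)
    (hfprob : IsProbabilityMeasure (nu f))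
    (hηmeas : Measurable fun q : ℝ × ℝ × ℝ => η q.1 q.2.1 q.2.2)
    (hηbd : ∀ x y₁ y₂, |η x y₁ y₂| ≤ Cη)
    (hηsym : ∀ x y₁ y₂, η x y₁ y₂ = η x y₂ y₁)
    (M : ℕ → Finset (ι₁ × ι₂))
    (hA1b : ∀ t : ℝ → ℝ → ℝ, Measurable (Function.uncurry t) →
      IntegrableOn (fun q : ℝ × ℝ => t q.1 q.2 ^ 2) (Icc a b ×ˢ Icc c d) volume →
      Tendsto (fun n => I2 a b c d fun x y =>
        (SM a b c d (tns α β) t (M n) x y - t x y) ^ 2) atTop (𝓝 0)) :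
    Tendsto (fun n =>
      (∫ q, (Lker a b c d (tns α β) η f (M n) q.1 q.2) ^ 2 ∂(nu f))
        - (∫ q, Lker a b c d (tns α β) η f (M n) q.1 q.2 ∂(nu f)) ^ 2)
      atTop (𝓝 (Lam a b c d η f)) := by
  haveI := hfprob
  have mg2 : MemLp (g2fun c d η f) 2 (nu f) :=
    nu_memℒp f hfmeas hf0 hfbd hfsupp (g2_meas hfmeas hηmeas)
      (g2_mem hcd hfmeas hf0 hfbd hηmeas hηbd)
  have mW : ∀ n, MemLp (Wfun a b c d α β η f (M n)) 2 (nu f) := fun n =>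
    nu_memℒp f hfmeas hf0 hfbd hfsupp (W_meas hαmeas hβmeas hηmeas (M n))
      (W_mem hαmeas hβmeas hα hβ hηmeas hηbd (M n))
  have hD : ∀ n, MemLp (fun q => Wfun a b c d α β η f (M n) q - g2fun c d η f q)
      2 (nu f) := fun n => (mW n).sub mg2
  set E : ℕ → ℝ := fun n =>
    ∫ q, (Wfun a b c d α β η f (M n) q - g2fun c d η f q) ^ 2 ∂(nu f) with hEdef
  have hδ : Tendsto (fun n => I2 a b c d fun x y =>
      (SM a b c d (tns α β) f (M n) x y - f x y) ^ 2) atTop (𝓝 0) := by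
    refine hA1b f hfmeas ?_
    rw [IntegrableOn, recm_eq]
    exact (f2_mem hfmeas hf0 hfbd).integrable_sq
  have hE : Tendsto E atTop (𝓝 0) := by
    refine squeeze_zero (fun n => integral_nonneg fun q => sq_nonneg _)
      (fun n => Wg_nu_le hcd hαmeas hβmeas hα hβ hfmeas hf0 hfbd hfsupp hηmeas hηbd
        hηsym (M n)) ?_
    have := hδ.const_mul (Cf * (4 * (Cη ^ 2 * (d - c) ^ 2)))
    simpa using this
  have hsqrtE : Tendsto (fun n => Real.sqrt (E n)) atTop (𝓝 0) := by
    have := hE.sqrt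
    simpa using this
  -- first moments
  have hm1 : ∀ n, ‖(∫ q, Wfun a b c d α β η f (M n) q ∂(nu f))
      - ∫ q, g2fun c d η f q ∂(nu f)‖ ≤ Real.sqrt (E n) := by
    intro n
    rw [Real.norm_eq_abs,
      ← integral_sub ((mW n).integrable one_le_two) (mg2.integrable one_le_two)]
    have key := myCS (hD n) (memLp_const (μ := nu f) (1:ℝ))
    simp only [mul_one, one_pow] at key
    rw [integral_const, measureReal_def, measure_univ, ENNReal.toReal_one, one_smul, Real.sqrt_one,
      mul_one] at key
    exact key
  have e1 : Tendsto (fun n => ∫ q, Wfun a b c d α β η f (M n) q ∂(nu f)) atTop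
      (𝓝 (∫ q, g2fun c d η f q ∂(nu f))) :=
    tendsto_sub_nhds_zero_iff.1 (squeeze_zero_norm hm1 hsqrtE)
  -- second moments
  set K2 : ℝ := ∫ q, g2fun c d η f q ^ 2 ∂(nu f) with hK2
  have hm2 : ∀ n, ‖(∫ q, Wfun a b c d α β η f (M n) q ^ 2 ∂(nu f)) - K2‖
      ≤ Real.sqrt (E n) * Real.sqrt (2 * E n + 8 * K2) := by
    intro n
    have hWg : (∫ q, Wfun a b c d α β η f (M n) q ^ 2 ∂(nu f)) - K2
        = ∫ q, (Wfun a b c d α β η f (M n) q - g2fun c d η f q)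
          * (Wfun a b c d α β η f (M n) q + g2fun c d η f q) ∂(nu f) := by
      rw [hK2, ← integral_sub ((mW n).integrable_sq) mg2.integrable_sq]
      exact integral_congr_ae (Eventually.of_forall fun q => by ring)
    have key := myCS (hD n)
      (((mW n).add mg2 : MemLp (fun q => Wfun a b c d α β η f (M n) q
        + g2fun c d η f q) 2 (nu f)))
    have hplus : (∫ q, (Wfun a b c d α β η f (M n) q + g2fun c d η f q) ^ 2 ∂(nu f))
        ≤ 2 * E n + 8 * K2 := by
      have hmono : (∫ q, (Wfun a b c d α β η f (M n) q + g2fun c d η f q) ^ 2 ∂(nu f))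
          ≤ ∫ q, (2 * (Wfun a b c d α β η f (M n) q - g2fun c d η f q) ^ 2
            + 8 * g2fun c d η f q ^ 2) ∂(nu f) := by
        refine integral_mono_of_nonneg (Eventually.of_forall fun q => sq_nonneg _)
          ((((hD n).integrable_sq).const_mul 2).add ((mg2.integrable_sq).const_mul 8))
          (Eventually.of_forall fun q => ?_)
        show (Wfun a b c d α β η f (M n) q + g2fun c d η f q) ^ 2
          ≤ 2 * (Wfun a b c d α β η f (M n) q - g2fun c d η f q) ^ 2
            + 8 * g2fun c d η f q ^ 2
        nlinarith [sq_nonneg (Wfun a b c d α β η f (M n) q - 3 * g2fun c d η f q)]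
      rw [integral_add (f := fun q => 2 * (Wfun a b c d α β η f (M n) q
          - g2fun c d η f q) ^ 2) (g := fun q => 8 * g2fun c d η f q ^ 2)
          (((hD n).integrable_sq).const_mul 2) ((mg2.integrable_sq).const_mul 8),
        integral_const_mul, integral_const_mul] at hmono
      exact hmono
    rw [Real.norm_eq_abs, hWg]
    calc |∫ q, (Wfun a b c d α β η f (M n) q - g2fun c d η f q)
          * (Wfun a b c d α β η f (M n) q + g2fun c d η f q) ∂(nu f)|
        ≤ Real.sqrt (E n) * Real.sqrt (∫ q, (Wfun a b c d α β η f (M n) q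
          + g2fun c d η f q) ^ 2 ∂(nu f)) := key
      _ ≤ Real.sqrt (E n) * Real.sqrt (2 * E n + 8 * K2) :=
          mul_le_mul_of_nonneg_left (Real.sqrt_le_sqrt hplus) (Real.sqrt_nonneg _)
  have hbn : Tendsto (fun n => Real.sqrt (E n) * Real.sqrt (2 * E n + 8 * K2)) atTop
      (𝓝 0) := by
    have t1 : Tendsto (fun n => 2 * E n + 8 * K2) atTop (𝓝 (2 * 0 + 8 * K2)) :=
      (hE.const_mul 2).add tendsto_const_nhds
    have := hsqrtE.mul t1.sqrt
    simpa using this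
  have e2 : Tendsto (fun n => ∫ q, Wfun a b c d α β η f (M n) q ^ 2 ∂(nu f)) atTop
      (𝓝 K2) :=
    tendsto_sub_nhds_zero_iff.1 (squeeze_zero_norm hm2 hbn)
  have final := (e2.sub (e1.pow 2)).const_mul (4:ℝ)
  rw [Lam_eq hcd hfmeas hf0 hfbd hfsupp hηmeas hηbd]
  refine Tendsto.congr (fun n => ?_) final
  have hLsq : (∫ q, (Lker a b c d (tns α β) η f (M n) q.1 q.2) ^ 2 ∂(nu f))
      = ∫ q, (2 * Wfun a b c d α β η f (M n) q
        - 2 * cconst a b c d α β η f (M n)) ^ 2 ∂(nu f) :=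
    integral_congr_ae (Eventually.of_forall fun q => by
      show Lker a b c d (tns α β) η f (M n) q.1 q.2 ^ 2
        = (2 * Wfun a b c d α β η f (M n) q - 2 * cconst a b c d α β η f (M n)) ^ 2
      rw [Lker_eq_W a b c d α β η f (M n) q])
  have hL1 : (∫ q, Lker a b c d (tns α β) η f (M n) q.1 q.2 ∂(nu f))
      = ∫ q, (2 * Wfun a b c d α β η f (M n) q
        - 2 * cconst a b c d α β η f (M n)) ∂(nu f) :=
    integral_congr_ae (Eventually.of_forall fun q =>
      Lker_eq_W a b c d α β η f (M n) q)
  rw [hLsq, hL1, Vshift (mW n) (2 * cconst a b c d α β η f (M n))]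

end Facts

/-- Lemma 8: under A1, `n Var(P_n L) → Λ(f,η)`. -/
theorem n_variance_PnL_tendsto_Lam
    {Ω ι₁ ι₂ : Type*} [MeasurableSpace Ω] [Countable ι₁] [Countable ι₂] [DecidableEq ι₁] [DecidableEq ι₂]
    (μ : Measure Ω) [IsProbabilityMeasure μ]
    (a b c d : ℝ) (hab : a < b) (hcd : c < d)
    (α : ι₁ → ℝ → ℝ) (β : ι₂ → ℝ → ℝ)
    (hαmeas : ∀ i, Measurable (α i)) (hβmeas : ∀ i, Measurable (β i))
    (hα : ∀ i j, (∫ x in Icc a b, α i x * α j x) = if i = j then 1 else 0)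
    (hβ : ∀ i j, (∫ y in Icc c d, β i y * β j y) = if i = j then 1 else 0)
    (f : ℝ → ℝ → ℝ) (Cf : ℝ)
    (hfmeas : Measurable (Function.uncurry f))
    (hf0 : ∀ x y, 0 ≤ f x y) (hfbd : ∀ x y, f x y ≤ Cf)
    (hfsupp : ∀ x y, f x y ≠ 0 → x ∈ Icc a b ∧ y ∈ Icc c d)
    (hfprob : IsProbabilityMeasure (nu f))
    (η : ℝ → ℝ → ℝ → ℝ) (Cη : ℝ)
    (hηmeas : Measurable fun q : ℝ × ℝ × ℝ => η q.1 q.2.1 q.2.2)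
    (hηbd : ∀ x y₁ y₂, |η x y₁ y₂| ≤ Cη)
    (hηsym : ∀ x y₁ y₂, η x y₁ y₂ = η x y₂ y₁)
    (X Y : ℕ → Ω → ℝ)
    (hXYmeas : ∀ j, Measurable fun ω => (X j ω, Y j ω))
    (hlaw : ∀ j, Measure.map (fun ω => (X j ω, Y j ω)) μ = nu f)
    (hindep : iIndepFun (fun j ω => (X j ω, Y j ω)) μ)
    (cseq : ι₁ × ι₂ → ℝ) (hcpos : ∀ i, 0 < cseq i)
    (hfE : inEllipsoid a b c d (tns α β) cseq f)
    (M : ℕ → Finset (ι₁ × ι₂))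
    (hA1a : ∃ lam1 lam2 : ℝ, 0 < lam1 ∧ 0 < lam2 ∧ ∀ n : ℕ, 1 ≤ n →
      lam1 * (((M n).card : ℝ) / (n : ℝ) ^ 2) ≤ supTail cseq (M n) ^ 2 ∧
        supTail cseq (M n) ^ 2 ≤ lam2 * (((M n).card : ℝ) / (n : ℝ) ^ 2))
    (hA1b : ∀ t : ℝ → ℝ → ℝ, Measurable (Function.uncurry t) →
      IntegrableOn (fun q : ℝ × ℝ => t q.1 q.2 ^ 2) (Icc a b ×ˢ Icc c d) volume →
      Tendsto (fun n => I2 a b c d fun x y =>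
        (SM a b c d (tns α β) t (M n) x y - t x y) ^ 2) atTop (𝓝 0))
 :
    Tendsto (fun n : ℕ =>
        (n : ℝ) * variance (PnL a b c d (tns α β) η f X Y (M n) n) μ)
      atTop (𝓝 (Lam a b c d η f)) := by
  classical
  have hcore := core (Cf := Cf) (Cη := Cη) hcd.le hαmeas hβmeas hα hβ hfmeas hf0 hfbd
    hfsupp hfprob hηmeas hηbd hηsym M hA1b
  refine Filter.Tendsto.congr' ?_ hcore
  filter_upwards [eventually_ge_atTop 1] with n hn
  set L : ℝ × ℝ → ℝ := fun q => Lker a b c d (tns α β) η f (M n) q.1 q.2 with hL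
  have hLmeas : Measurable L := Lker_meas hαmeas hβmeas hηmeas (M n)
  have hLmem : MemLp L 2 (nu f) :=
    Lker_mem_nu (Cf := Cf) (Cη := Cη) hαmeas hβmeas hα hβ hfmeas hf0 hfbd hfsupp
      hηmeas hηbd (M n)
  set Z : ℕ → Ω → ℝ := fun j ω => L (X j ω, Y j ω) with hZ
  have hZmem : ∀ j, MemLp (Z j) 2 μ := by
    intro j
    have h1 : MemLp L 2 (Measure.map (fun ω => (X j ω, Y j ω)) μ) := by
      rw [hlaw j]; exact hLmem
    exact (memLp_map_measure_iff hLmeas.aestronglyMeasurable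
      (hXYmeas j).aemeasurable).1 h1
  have hpair : Set.Pairwise ↑(Finset.range n) fun j k => IndepFun (Z j) (Z k) μ := by
    intro j _ k _ hjk
    exact (hindep.comp (fun _ : ℕ => L) (fun _ => hLmeas)).indepFun hjk
  have hPnL : PnL a b c d (tns α β) η f X Y (M n) n
      = ((n:ℝ)⁻¹) • (∑ j ∈ Finset.range n, Z j) := by
    funext ω
    simp only [PnL, Pi.smul_apply, Finset.sum_apply, smul_eq_mul, one_div, hZ, hL]
  have hvar : variance (PnL a b c d (tns α β) η f X Y (M n) n) μ
      = ((n:ℝ)⁻¹) ^ 2 * ∑ j ∈ Finset.range n, variance (Z j) μ := by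
    rw [hPnL, variance_smul, IndepFun.variance_sum (fun j _ => hZmem j) hpair]
  have hVZ : ∀ j, variance (Z j) μ
      = (∫ q, L q ^ 2 ∂(nu f)) - (∫ q, L q ∂(nu f)) ^ 2 := by
    intro j
    rw [variance_eq_sub (hZmem j)]
    have h2 : (∫ q, L q ^ 2 ∂(nu f)) = ∫ ω, L (X j ω, Y j ω) ^ 2 ∂μ := by
      rw [← hlaw j]
      exact integral_map (hXYmeas j).aemeasurable
        ((hLmeas.pow_const 2).aestronglyMeasurable)
    have h1 : (∫ q, L q ∂(nu f)) = ∫ ω, L (X j ω, Y j ω) ∂μ := by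
      rw [← hlaw j]
      exact integral_map (hXYmeas j).aemeasurable hLmeas.aestronglyMeasurable
    have e2 : μ[(Z j) ^ 2] = ∫ ω, L (X j ω, Y j ω) ^ 2 ∂μ :=
      integral_congr_ae (Eventually.of_forall fun ω => by simp [hZ])
    have e1 : μ[Z j] = ∫ ω, L (X j ω, Y j ω) ∂μ := rfl
    rw [h2, h1, e2, e1]
  have hn0 : (n:ℝ) ≠ 0 := Nat.cast_ne_zero.2 (by omega)
  rw [hvar, Finset.sum_congr rfl (fun j _ => hVZ j), Finset.sum_const,
    Finset.card_range, nsmul_eq_mul]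
  field_simp
  ring


end DaVeigaGamboa
end
end

section
/- The deterministic part of the Hoeffding decomposition converges to θ(f) fast enough: |2AᵀB − AᵀCA − θ(f)| ≤ 2 Δ_Y ‖f‖₂ ‖η‖_∞ ‖S_{M_n}f − f‖₂ ≤ 2 Δ_Y ‖f‖₂ ‖η‖_∞ (sup_{i∉M_n}|c_i|²)^{1/2}; consequently, under assumption A1 with |M_n|/n → 0, √n (2AᵀB − AᵀCA − θ(f)) → 0. -/
open MeasureTheory ProbabilityTheory Filter Set Topology

noncomputable section

namespace DaVeigaGamboa

section Aux

/-- Iterated double integral w.r.t. two measures. -/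
def Jint (μ ν : Measure ℝ) (u : ℝ → ℝ → ℝ) : ℝ := ∫ x, ∫ y, u x y ∂ν ∂μ

/-- Kernel operator. -/
def Phi (ν : Measure ℝ) (η : ℝ → ℝ → ℝ → ℝ) (v : ℝ → ℝ → ℝ) (x y : ℝ) : ℝ :=
  ∫ u, η x y u * v x u ∂ν

/-- Iterated integrability. -/
def IOK (μ ν : Measure ℝ) (u : ℝ → ℝ → ℝ) : Prop :=
  (∀ x, Integrable (u x) ν) ∧ Integrable (fun x => ∫ y, u x y ∂ν) μ

variable {μ ν : Measure ℝ}

theorem Jint_congr {u v : ℝ → ℝ → ℝ} (e : ∀ x y, u x y = v x y) :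
    Jint μ ν u = Jint μ ν v := by
  have : u = v := funext fun x => funext fun y => e x y
  rw [this]

theorem IOK.congr' {u v : ℝ → ℝ → ℝ} (h : IOK μ ν u) (e : ∀ x y, u x y = v x y) :
    IOK μ ν v := by
  have : u = v := funext fun x => funext fun y => e x y
  exact this ▸ h

theorem IOK.add' {u v : ℝ → ℝ → ℝ} (hu : IOK μ ν u) (hv : IOK μ ν v) :
    IOK μ ν (fun x y => u x y + v x y) := by
  refine ⟨fun x => (hu.1 x).add (hv.1 x), ?_⟩
  have e : (fun x => ∫ y, (u x y + v x y) ∂ν) = fun x => (∫ y, u x y ∂ν) + ∫ y, v x y ∂ν :=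
    funext fun x => integral_add (hu.1 x) (hv.1 x)
  rw [e]; exact hu.2.add hv.2

theorem IOK.sub' {u v : ℝ → ℝ → ℝ} (hu : IOK μ ν u) (hv : IOK μ ν v) :
    IOK μ ν (fun x y => u x y - v x y) := by
  refine ⟨fun x => (hu.1 x).sub (hv.1 x), ?_⟩
  have e : (fun x => ∫ y, (u x y - v x y) ∂ν) = fun x => (∫ y, u x y ∂ν) - ∫ y, v x y ∂ν :=
    funext fun x => integral_sub (hu.1 x) (hv.1 x)
  rw [e]; exact hu.2.sub hv.2

theorem IOK.cmul {u : ℝ → ℝ → ℝ} (hu : IOK μ ν u) (r : ℝ) :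
    IOK μ ν (fun x y => r * u x y) := by
  refine ⟨fun x => (hu.1 x).const_mul r, ?_⟩
  have e : (fun x => ∫ y, r * u x y ∂ν) = fun x => r * ∫ y, u x y ∂ν :=
    funext fun x => integral_const_mul r _
  rw [e]; exact hu.2.const_mul r

theorem IOK.fsum {κ : Type*} {s : Finset κ} {F : κ → ℝ → ℝ → ℝ}
    (h : ∀ i ∈ s, IOK μ ν (F i)) : IOK μ ν (fun x y => ∑ i ∈ s, F i x y) := by
  refine ⟨fun x => integrable_finset_sum _ fun i hi => (h i hi).1 x, ?_⟩
  have e : (fun x => ∫ y, ∑ i ∈ s, F i x y ∂ν) = fun x => ∑ i ∈ s, ∫ y, F i x y ∂ν :=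
    funext fun x => integral_finset_sum _ fun i hi => (h i hi).1 x
  rw [e]; exact integrable_finset_sum _ fun i hi => (h i hi).2

theorem Jint_cmul (r : ℝ) (u : ℝ → ℝ → ℝ) :
    Jint μ ν (fun x y => r * u x y) = r * Jint μ ν u := by
  unfold Jint
  rw [show (fun x => ∫ y, r * u x y ∂ν) = fun x => r * ∫ y, u x y ∂ν from
    funext fun x => integral_const_mul r _]
  exact integral_const_mul _ _

theorem Jint_fsum {κ : Type*} {s : Finset κ} {F : κ → ℝ → ℝ → ℝ}
    (h : ∀ i ∈ s, IOK μ ν (F i)) :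
    Jint μ ν (fun x y => ∑ i ∈ s, F i x y) = ∑ i ∈ s, Jint μ ν (F i) := by
  unfold Jint
  rw [show (fun x => ∫ y, ∑ i ∈ s, F i x y ∂ν) = fun x => ∑ i ∈ s, ∫ y, F i x y ∂ν from
    funext fun x => integral_finset_sum _ fun i hi => (h i hi).1 x]
  exact integral_finset_sum _ fun i hi => (h i hi).2

theorem Jint_comb {u1 u2 u3 u4 : ℝ → ℝ → ℝ} (h1 : IOK μ ν u1) (h2 : IOK μ ν u2)
    (h3 : IOK μ ν u3) (h4 : IOK μ ν u4) :
    Jint μ ν (fun x y => u1 x y - u2 x y - u3 x y + u4 x y)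
      = Jint μ ν u1 - Jint μ ν u2 - Jint μ ν u3 + Jint μ ν u4 := by
  unfold Jint
  rw [show (fun x => ∫ y, (u1 x y - u2 x y - u3 x y + u4 x y) ∂ν)
      = fun x => ((∫ y, u1 x y ∂ν) - (∫ y, u2 x y ∂ν) - (∫ y, u3 x y ∂ν)) + ∫ y, u4 x y ∂ν from
    funext fun x => by
      have i12 : Integrable (fun y => u1 x y - u2 x y) ν := (h1.1 x).sub (h2.1 x)
      have i123 : Integrable (fun y => u1 x y - u2 x y - u3 x y) ν := i12.sub (h3.1 x)
      rw [integral_add i123 (h4.1 x), integral_sub i12 (h3.1 x),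
        integral_sub (h1.1 x) (h2.1 x)]]
  have j1 : Integrable (fun x => ∫ y, u1 x y ∂ν) μ := h1.2
  have j12 : Integrable (fun x => (∫ y, u1 x y ∂ν) - ∫ y, u2 x y ∂ν) μ := h1.2.sub h2.2
  have j123 : Integrable (fun x => (∫ y, u1 x y ∂ν) - (∫ y, u2 x y ∂ν) - ∫ y, u3 x y ∂ν) μ :=
    j12.sub h3.2
  rw [integral_add j123 h4.2, integral_sub j12 h3.2, integral_sub h1.2 h2.2]

theorem Jint_sep (G K : ℝ → ℝ) :
    Jint μ ν (fun x y => G x * K y) = (∫ x, G x ∂μ) * ∫ y, K y ∂ν := by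
  unfold Jint
  rw [show (fun x => ∫ y, G x * K y ∂ν) = fun x => G x * ∫ y, K y ∂ν from
    funext fun x => integral_const_mul _ _]
  exact integral_mul_const _ _

theorem Jint_nonneg {u : ℝ → ℝ → ℝ} (h : ∀ x y, 0 ≤ u x y) : 0 ≤ Jint μ ν u :=
  integral_nonneg fun x => integral_nonneg fun y => h x y

theorem IOK.of_bound [SFinite ν] {u : ℝ → ℝ → ℝ}
    (hm : StronglyMeasurable fun q : ℝ × ℝ => u q.1 q.2) {φ ψ : ℝ → ℝ}
    (hφ : Integrable φ μ) (hψ : Integrable ψ ν) (hψ0 : ∀ y, 0 ≤ ψ y)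
    (hb : ∀ x y, |u x y| ≤ φ x * ψ y) : IOK μ ν u := by
  have hsl : ∀ x, AEStronglyMeasurable (u x) ν := fun x =>
    (hm.comp_measurable (measurable_prodMk_left : Measurable fun y : ℝ => ((x : ℝ), y))).aestronglyMeasurable
  have h1 : ∀ x, Integrable (u x) ν := fun x =>
    (hψ.const_mul (φ x)).mono' (hsl x)
      (Filter.Eventually.of_forall fun y => by simpa [Real.norm_eq_abs] using hb x y)
  refine ⟨h1, ?_⟩
  have hm2 : StronglyMeasurable fun x => ∫ y, u x y ∂ν := hm.integral_prod_right'
  refine (hφ.mul_const (∫ y, ψ y ∂ν)).mono' hm2.aestronglyMeasurable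
    (Filter.Eventually.of_forall fun x => ?_)
  calc ‖∫ y, u x y ∂ν‖ ≤ ∫ y, ‖u x y‖ ∂ν := norm_integral_le_integral_norm _
    _ ≤ ∫ y, φ x * ψ y ∂ν := integral_mono (h1 x).norm (hψ.const_mul (φ x))
        (fun y => by simpa [Real.norm_eq_abs] using hb x y)
    _ = φ x * ∫ y, ψ y ∂ν := integral_const_mul _ _

theorem integrable_mul_of_sq {γ : Type*} [MeasurableSpace γ] {ρ : Measure γ} {u v : γ → ℝ}
    (hu : MemLp u 2 ρ) (hv : MemLp v 2 ρ) : Integrable (fun x => u x * v x) ρ := by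
  have hu2 : Integrable (fun x => u x ^ 2) ρ :=
    (memLp_two_iff_integrable_sq hu.aestronglyMeasurable).1 hu
  have hv2 : Integrable (fun x => v x ^ 2) ρ :=
    (memLp_two_iff_integrable_sq hv.aestronglyMeasurable).1 hv
  have hsum : Integrable (fun x => u x ^ 2 + v x ^ 2) ρ := hu2.add hv2
  refine (hsum.div_const 2).mono'
    (hu.aestronglyMeasurable.mul hv.aestronglyMeasurable) (.of_forall fun x => ?_)
  rw [Real.norm_eq_abs, abs_mul]
  nlinarith [sq_nonneg (|u x| - |v x|), sq_abs (u x), sq_abs (v x), abs_nonneg (u x),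
    abs_nonneg (v x)]

theorem cs_integral [IsFiniteMeasure ν] {h : ℝ → ℝ} (h1 : Integrable h ν)
    (h2 : Integrable (fun y => h y ^ 2) ν) :
    (∫ y, |h y| ∂ν) ^ 2 ≤ (ν Set.univ).toReal * ∫ y, h y ^ 2 ∂ν := by
  have hT0 : 0 ≤ (ν Set.univ).toReal := ENNReal.toReal_nonneg
  have hQ0 : 0 ≤ ∫ y, h y ^ 2 ∂ν := integral_nonneg fun y => sq_nonneg _
  rcases eq_or_lt_of_le hT0 with hT | hT
  · have hν0 : ν = 0 := by
      have h1' : ν Set.univ = 0 := by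
        rcases (ENNReal.toReal_eq_zero_iff _).1 hT.symm with h | h
        · exact h
        · exact absurd h (measure_ne_top ν _)
      exact Measure.measure_univ_eq_zero.1 h1'
    simp [hν0]
  · set T := (ν Set.univ).toReal with hTdef
    set I := ∫ y, |h y| ∂ν with hIdef
    set Q := ∫ y, h y ^ 2 ∂ν with hQdef
    have e : (fun y => (|h y| - I / T) ^ 2)
        = fun y => (h y ^ 2 - (2 * (I / T)) * |h y|) + (I / T) ^ 2 :=
      funext fun y => by rw [sub_sq, sq_abs]; ring
    have hpos : (0:ℝ) ≤ ∫ y, (|h y| - I / T) ^ 2 ∂ν := integral_nonneg fun y => sq_nonneg _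
    have hca : Integrable (fun y => (2 * (I / T)) * |h y|) ν := h1.abs.const_mul _
    have hsb : Integrable (fun y => h y ^ 2 - (2 * (I / T)) * |h y|) ν := h2.sub hca
    rw [e, integral_add hsb (integrable_const _),
      integral_sub h2 hca, integral_const_mul, integral_const, Measure.real] at hpos
    have e2 : (2 * (I / T)) * I = 2 * (I ^ 2 / T) := by ring
    have e3 : T • ((I / T) ^ 2) = I ^ 2 / T := by
      rw [smul_eq_mul]; field_simp
    rw [← hTdef, ← hQdef, ← hIdef, e2, e3] at hpos
    have h3 : I ^ 2 / T ≤ Q := by linarith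
    have := (div_le_iff₀ hT).1 h3
    linarith [this]

theorem expand_hpt {κ : Type*} (s : Finset κ) (u w : κ → ℝ) (F G : ℝ) :
    ((∑ i ∈ s, u i) - F) * ((∑ j ∈ s, w j) - G)
      = (∑ i ∈ s, ∑ j ∈ s, u i * w j) - (∑ i ∈ s, u i * G) - (∑ j ∈ s, F * w j) + F * G := by
  have e1 : (∑ i ∈ s, u i) * (∑ j ∈ s, w j) = ∑ i ∈ s, ∑ j ∈ s, u i * w j :=
    Finset.sum_mul_sum s s u w
  have e2 : (∑ i ∈ s, u i) * G = ∑ i ∈ s, u i * G := Finset.sum_mul _ _ _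
  have e3 : F * (∑ j ∈ s, w j) = ∑ j ∈ s, F * w j := Finset.mul_sum _ _ _
  calc ((∑ i ∈ s, u i) - F) * ((∑ j ∈ s, w j) - G)
      = (∑ i ∈ s, u i) * (∑ j ∈ s, w j) - (∑ i ∈ s, u i) * G - F * (∑ j ∈ s, w j) + F * G := by
        ring
    _ = _ := by rw [e1, e2, e3]

section PhiLemmas

variable {μ ν : Measure ℝ} {η : ℝ → ℝ → ℝ → ℝ} {Cη : ℝ}

theorem eta_slice_meas (hηmeas : Measurable fun q : ℝ × ℝ × ℝ => η q.1 q.2.1 q.2.2)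
    (x y : ℝ) : Measurable (η x y) :=
  hηmeas.comp (measurable_const.prodMk (measurable_const.prodMk measurable_id))

theorem Phi_intg (hηmeas : Measurable fun q : ℝ × ℝ × ℝ => η q.1 q.2.1 q.2.2)
    (hηbd : ∀ x y z, |η x y z| ≤ Cη) {v : ℝ → ℝ → ℝ} {x : ℝ}
    (hv : Integrable (v x) ν) (y : ℝ) :
    Integrable (fun u => η x y u * v x u) ν := by
  refine (hv.abs.const_mul Cη).mono'
    (((eta_slice_meas hηmeas x y).aestronglyMeasurable).mul hv.aestronglyMeasurable)
    (.of_forall fun u => ?_)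
  rw [Real.norm_eq_abs, abs_mul]
  exact mul_le_mul_of_nonneg_right (hηbd _ _ _) (abs_nonneg _)

theorem Phi_abs_le (hηmeas : Measurable fun q : ℝ × ℝ × ℝ => η q.1 q.2.1 q.2.2)
    (hηbd : ∀ x y z, |η x y z| ≤ Cη) {v : ℝ → ℝ → ℝ} {x : ℝ}
    (hv : Integrable (v x) ν) (y : ℝ) :
    |Phi ν η v x y| ≤ Cη * ∫ u, |v x u| ∂ν := by
  calc |Phi ν η v x y| ≤ ∫ u, |η x y u * v x u| ∂ν := by
        simpa only [Phi, Real.norm_eq_abs] using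
          norm_integral_le_integral_norm (μ := ν) (fun u => η x y u * v x u)
    _ ≤ ∫ u, Cη * |v x u| ∂ν := integral_mono (Phi_intg hηmeas hηbd hv y).abs
        (hv.abs.const_mul Cη) (fun u => by
          rw [abs_mul]
          exact mul_le_mul_of_nonneg_right (hηbd _ _ _) (abs_nonneg _))
    _ = Cη * ∫ u, |v x u| ∂ν := integral_const_mul _ _

theorem Jsym [IsFiniteMeasure ν]
    (hηmeas : Measurable fun q : ℝ × ℝ × ℝ => η q.1 q.2.1 q.2.2)
    (hηbd : ∀ x y z, |η x y z| ≤ Cη) (hηsym : ∀ x y₁ y₂, η x y₁ y₂ = η x y₂ y₁)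
    {u v : ℝ → ℝ → ℝ}
    (hum : Measurable fun q : ℝ × ℝ => u q.1 q.2)
    (hvm : Measurable fun q : ℝ × ℝ => v q.1 q.2)
    (hu : ∀ x, Integrable (u x) ν) (hv : ∀ x, Integrable (v x) ν) :
    Jint μ ν (fun x y => u x y * Phi ν η v x y)
      = Jint μ ν (fun x y => v x y * Phi ν η u x y) := by
  have key : ∀ x, (∫ y, u x y * Phi ν η v x y ∂ν) = ∫ y, v x y * Phi ν η u x y ∂ν := by
    intro x
    have hmF : Measurable fun z : ℝ × ℝ => u x z.1 * (η x z.1 z.2 * v x z.2) := by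
      have h1 : Measurable fun z : ℝ × ℝ => u x z.1 :=
        hum.comp (measurable_const.prodMk measurable_fst)
      have h2 : Measurable fun z : ℝ × ℝ => η x z.1 z.2 :=
        hηmeas.comp (measurable_const.prodMk (measurable_fst.prodMk measurable_snd))
      have h3 : Measurable fun z : ℝ × ℝ => v x z.2 :=
        hvm.comp (measurable_const.prodMk measurable_snd)
      exact h1.mul (h2.mul h3)
    have hint : Integrable (Function.uncurry fun y₁ y₂ => u x y₁ * (η x y₁ y₂ * v x y₂))
        (ν.prod ν) := by
      have hb : Integrable (fun z : ℝ × ℝ => (Cη * |u x z.1|) * |v x z.2|) (ν.prod ν) :=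
        ((hu x).abs.const_mul Cη).mul_prod (hv x).abs
      refine hb.mono' hmF.aestronglyMeasurable (.of_forall fun z => ?_)
      show ‖u x z.1 * (η x z.1 z.2 * v x z.2)‖ ≤ Cη * |u x z.1| * |v x z.2|
      rw [Real.norm_eq_abs, abs_mul, abs_mul]
      calc |u x z.1| * (|η x z.1 z.2| * |v x z.2|)
          ≤ |u x z.1| * (Cη * |v x z.2|) := by
            have := mul_le_mul_of_nonneg_right (hηbd x z.1 z.2) (abs_nonneg (v x z.2))
            exact mul_le_mul_of_nonneg_left this (abs_nonneg _)
        _ = (Cη * |u x z.1|) * |v x z.2| := by ring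
    calc (∫ y₁, u x y₁ * Phi ν η v x y₁ ∂ν)
        = ∫ y₁, ∫ y₂, u x y₁ * (η x y₁ y₂ * v x y₂) ∂ν ∂ν := by
          rw [show (fun y₁ => u x y₁ * Phi ν η v x y₁)
              = fun y₁ => ∫ y₂, u x y₁ * (η x y₁ y₂ * v x y₂) ∂ν from
            funext fun y₁ => (integral_const_mul _ _).symm]
      _ = ∫ y₂, ∫ y₁, u x y₁ * (η x y₁ y₂ * v x y₂) ∂ν ∂ν := integral_integral_swap hint
      _ = ∫ y₂, v x y₂ * Phi ν η u x y₂ ∂ν := by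
          rw [show (fun y₂ => ∫ y₁, u x y₁ * (η x y₁ y₂ * v x y₂) ∂ν)
              = fun y₂ => v x y₂ * Phi ν η u x y₂ from funext fun y₂ => ?_]
          rw [show (fun y₁ => u x y₁ * (η x y₁ y₂ * v x y₂))
              = fun y₁ => v x y₂ * (η x y₂ y₁ * u x y₁) from funext fun y₁ => by
            rw [hηsym x y₂ y₁]; ring]
          exact integral_const_mul _ _
  unfold Jint
  rw [show (fun x => ∫ y, u x y * Phi ν η v x y ∂ν)
      = fun x => ∫ y, v x y * Phi ν η u x y ∂ν from funext key]

theorem abs_Jint_le [IsFiniteMeasure ν]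
    (hηmeas : Measurable fun q : ℝ × ℝ × ℝ => η q.1 q.2.1 q.2.2)
    (hηbd : ∀ x y z, |η x y z| ≤ Cη) {h : ℝ → ℝ → ℝ} {Δ : ℝ}
    (hΔ : (ν Set.univ).toReal ≤ Δ)
    (hsl : ∀ x, Integrable (h x) ν)
    (h1 : IOK μ ν (fun x y => h x y * Phi ν η h x y))
    (h2 : IOK μ ν (fun x y => h x y ^ 2)) :
    |Jint μ ν (fun x y => h x y * Phi ν η h x y)|
      ≤ Cη * Δ * Jint μ ν (fun x y => h x y ^ 2) := by
  have hCη0 : 0 ≤ Cη := le_trans (abs_nonneg _) (hηbd 0 0 0)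
  have key : ∀ x, |∫ y, h x y * Phi ν η h x y ∂ν| ≤ Cη * Δ * ∫ y, h x y ^ 2 ∂ν := by
    intro x
    have hQ0 : 0 ≤ ∫ y, h x y ^ 2 ∂ν := integral_nonneg fun y => sq_nonneg _
    have hIle : (∫ y, |h x y| ∂ν) ^ 2 ≤ (ν Set.univ).toReal * ∫ y, h x y ^ 2 ∂ν :=
      cs_integral (hsl x) (h2.1 x)
    have hb1 : |∫ y, h x y * Phi ν η h x y ∂ν|
        ≤ ∫ y, |h x y| * (Cη * ∫ u, |h x u| ∂ν) ∂ν := by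
      calc |∫ y, h x y * Phi ν η h x y ∂ν| ≤ ∫ y, |h x y * Phi ν η h x y| ∂ν := by
            simpa only [Real.norm_eq_abs] using
              norm_integral_le_integral_norm (μ := ν) (fun y => h x y * Phi ν η h x y)
        _ ≤ ∫ y, |h x y| * (Cη * ∫ u, |h x u| ∂ν) ∂ν :=
            integral_mono (h1.1 x).abs ((hsl x).abs.mul_const _) (fun y => by
              rw [abs_mul]
              exact mul_le_mul_of_nonneg_left (Phi_abs_le hηmeas hηbd (hsl x) y)
                (abs_nonneg _))
    have e1 : ∫ y, |h x y| * (Cη * ∫ u, |h x u| ∂ν) ∂ν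
        = (∫ y, |h x y| ∂ν) * (Cη * ∫ u, |h x u| ∂ν) := integral_mul_const _ _
    have hTΔ : (ν Set.univ).toReal * (∫ y, h x y ^ 2 ∂ν) ≤ Δ * ∫ y, h x y ^ 2 ∂ν :=
      mul_le_mul_of_nonneg_right hΔ hQ0
    calc |∫ y, h x y * Phi ν η h x y ∂ν|
        ≤ (∫ y, |h x y| ∂ν) * (Cη * ∫ u, |h x u| ∂ν) := by rw [← e1]; exact hb1
      _ = Cη * (∫ y, |h x y| ∂ν) ^ 2 := by ring
      _ ≤ Cη * ((ν Set.univ).toReal * ∫ y, h x y ^ 2 ∂ν) :=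
          mul_le_mul_of_nonneg_left hIle hCη0
      _ ≤ Cη * (Δ * ∫ y, h x y ^ 2 ∂ν) := mul_le_mul_of_nonneg_left hTΔ hCη0
      _ = Cη * Δ * ∫ y, h x y ^ 2 ∂ν := by ring
  unfold Jint
  calc |∫ x, ∫ y, h x y * Phi ν η h x y ∂ν ∂μ|
      ≤ ∫ x, |∫ y, h x y * Phi ν η h x y ∂ν| ∂μ := by
        simpa only [Real.norm_eq_abs] using
          norm_integral_le_integral_norm (μ := μ) (fun x => ∫ y, h x y * Phi ν η h x y ∂ν)
    _ ≤ ∫ x, Cη * Δ * ∫ y, h x y ^ 2 ∂ν ∂μ :=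
        integral_mono h1.2.abs (h2.2.const_mul _) key
    _ = Cη * Δ * ∫ x, ∫ y, h x y ^ 2 ∂ν ∂μ := integral_const_mul _ _

end PhiLemmas

end Aux


section Key

theorem keyAbs {ι₁ ι₂ : Type*} [DecidableEq ι₁] [DecidableEq ι₂]
    (μ ν : Measure ℝ) [IsFiniteMeasure μ] [IsFiniteMeasure ν]
    (α : ι₁ → ℝ → ℝ) (β : ι₂ → ℝ → ℝ)
    (hαmeas : ∀ i, Measurable (α i)) (hβmeas : ∀ i, Measurable (β i))
    (hα : ∀ i j, (∫ x, α i x * α j x ∂μ) = if i = j then 1 else 0)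
    (hβ : ∀ i j, (∫ y, β i y * β j y ∂ν) = if i = j then 1 else 0)
    (f : ℝ → ℝ → ℝ) (Cf : ℝ)
    (hfmeas : Measurable fun q : ℝ × ℝ => f q.1 q.2)
    (hfbd : ∀ x y, |f x y| ≤ Cf)
    (η : ℝ → ℝ → ℝ → ℝ) (Cη : ℝ)
    (hηmeas : Measurable fun q : ℝ × ℝ × ℝ => η q.1 q.2.1 q.2.2)
    (hηbd : ∀ x y₁ y₂, |η x y₁ y₂| ≤ Cη)
    (hηsym : ∀ x y₁ y₂, η x y₁ y₂ = η x y₂ y₁)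
    (Δ : ℝ) (hΔ : (ν Set.univ).toReal ≤ Δ)
    (M : Finset (ι₁ × ι₂))
    (A Bc : ι₁ × ι₂ → ℝ) (Cc : ι₁ × ι₂ → ι₁ × ι₂ → ℝ) (θv : ℝ) (S : ℝ → ℝ → ℝ)
    (hA : ∀ i, A i = Jint μ ν (fun x y => f x y * tns α β i x y))
    (hBc : ∀ i, Bc i = Jint μ ν (fun x y => tns α β i x y * Phi ν η f x y))
    (hCc : ∀ i j, Cc i j = Jint μ ν (fun x y => tns α β i x y * Phi ν η (tns α β j) x y))
    (hθ : θv = Jint μ ν (fun x y => f x y * Phi ν η f x y))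
    (hS : ∀ x y, S x y = ∑ i ∈ M, A i * tns α β i x y) :
    Jint μ ν (fun x y => (S x y - f x y) ^ 2)
      = Jint μ ν (fun x y => f x y ^ 2) - ∑ i ∈ M, (A i) ^ 2
    ∧ |2 * ∑ i ∈ M, A i * Bc i - ∑ i ∈ M, ∑ j ∈ M, A i * Cc i j * A j - θv|
        ≤ Cη * Δ * Jint μ ν (fun x y => (S x y - f x y) ^ 2) := by
  classical
  have hCη0 : 0 ≤ Cη := le_trans (abs_nonneg _) (hηbd 0 0 0)
  have hCf0 : 0 ≤ Cf := le_trans (abs_nonneg _) (hfbd 0 0)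
  have hΔ0 : 0 ≤ Δ := le_trans ENNReal.toReal_nonneg hΔ
  -- measurability
  have hPmeas : ∀ i : ι₁ × ι₂, Measurable fun q : ℝ × ℝ => tns α β i q.1 q.2 := fun i =>
    ((hαmeas i.1).comp measurable_fst).mul ((hβmeas i.2).comp measurable_snd)
  have hΦfmeas : StronglyMeasurable fun q : ℝ × ℝ => Phi ν η f q.1 q.2 := by
    have hm : Measurable fun z : (ℝ × ℝ) × ℝ => η z.1.1 z.1.2 z.2 * f z.1.1 z.2 :=
      (hηmeas.comp ((measurable_fst.fst).prodMk
        ((measurable_fst.snd).prodMk measurable_snd))).mul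
        (hfmeas.comp ((measurable_fst.fst).prodMk measurable_snd))
    exact hm.stronglyMeasurable.integral_prod_right'
  have hΦPmeas : ∀ j : ι₁ × ι₂,
      StronglyMeasurable fun q : ℝ × ℝ => Phi ν η (tns α β j) q.1 q.2 := by
    intro j
    have hm : Measurable fun z : (ℝ × ℝ) × ℝ => η z.1.1 z.1.2 z.2 * tns α β j z.1.1 z.2 :=
      (hηmeas.comp ((measurable_fst.fst).prodMk
        ((measurable_fst.snd).prodMk measurable_snd))).mul
        ((hPmeas j).comp ((measurable_fst.fst).prodMk measurable_snd))
    exact hm.stronglyMeasurable.integral_prod_right'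
  -- axis integrability
  have hαsq : ∀ i, Integrable (fun x => α i x * α i x) μ := by
    intro i; by_contra hc
    have h' := hα i i; rw [integral_undef hc, if_pos rfl] at h'; exact zero_ne_one h'
  have hβsq : ∀ j, Integrable (fun y => β j y * β j y) ν := by
    intro j; by_contra hc
    have h' := hβ j j; rw [integral_undef hc, if_pos rfl] at h'; exact zero_ne_one h'
  have hαL2 : ∀ i, MemLp (α i) 2 μ := fun i =>
    (memLp_two_iff_integrable_sq (hαmeas i).aestronglyMeasurable).2
      (by simpa [pow_two] using hαsq i)
  have hβL2 : ∀ j, MemLp (β j) 2 ν := fun j =>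
    (memLp_two_iff_integrable_sq (hβmeas j).aestronglyMeasurable).2
      (by simpa [pow_two] using hβsq j)
  have hαL1 : ∀ i, Integrable (α i) μ := fun i => (hαL2 i).integrable one_le_two
  have hβL1 : ∀ j, Integrable (β j) ν := fun j => (hβL2 j).integrable one_le_two
  have hαα : ∀ i j, Integrable (fun x => α i x * α j x) μ := fun i j =>
    integrable_mul_of_sq (hαL2 i) (hαL2 j)
  have hββ : ∀ i j, Integrable (fun y => β i y * β j y) ν := fun i j =>
    integrable_mul_of_sq (hβL2 i) (hβL2 j)
  -- slices
  have hfx : ∀ x, Measurable (f x) := fun x => hfmeas.comp measurable_prodMk_left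
  have hfsl : ∀ x, Integrable (f x) ν := fun x =>
    (integrable_const Cf).mono' (hfx x).aestronglyMeasurable
      (.of_forall fun y => by simpa [Real.norm_eq_abs] using hfbd x y)
  have hPsl : ∀ (i : ι₁ × ι₂) (x : ℝ), Integrable (fun y => tns α β i x y) ν := fun i x => by
    simpa [tns] using (hβL1 i.2).const_mul (α i.1 x)
  -- Phi bounds
  have hΦfbd : ∀ x y, |Phi ν η f x y| ≤ Cη * (Cf * Δ) := by
    intro x y
    have h2 : (∫ u, |f x u| ∂ν) ≤ Cf * Δ := by
      calc (∫ u, |f x u| ∂ν) ≤ ∫ _u, Cf ∂ν :=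
            integral_mono (hfsl x).abs (integrable_const _) (fun u => hfbd x u)
        _ = (ν Set.univ).toReal * Cf := by simp [smul_eq_mul, Measure.real]
        _ ≤ Δ * Cf := mul_le_mul_of_nonneg_right hΔ hCf0
        _ = Cf * Δ := mul_comm _ _
    calc |Phi ν η f x y| ≤ Cη * ∫ u, |f x u| ∂ν := Phi_abs_le hηmeas hηbd (hfsl x) y
      _ ≤ Cη * (Cf * Δ) := mul_le_mul_of_nonneg_left h2 hCη0
  have hΦPbd : ∀ (j : ι₁ × ι₂) (x y : ℝ),
      |Phi ν η (tns α β j) x y| ≤ (Cη * ∫ u, |β j.2 u| ∂ν) * |α j.1 x| := by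
    intro j x y
    have h1 := Phi_abs_le hηmeas hηbd (hPsl j x) y
    have e2 : (∫ u, |tns α β j x u| ∂ν) = |α j.1 x| * ∫ u, |β j.2 u| ∂ν := by
      simp only [tns, abs_mul]; exact integral_const_mul _ _
    rw [e2] at h1
    calc |Phi ν η (tns α β j) x y| ≤ Cη * (|α j.1 x| * ∫ u, |β j.2 u| ∂ν) := h1
      _ = (Cη * ∫ u, |β j.2 u| ∂ν) * |α j.1 x| := by ring
  -- IOK basics
  have hIOK_PP : ∀ i j : ι₁ × ι₂, IOK μ ν (fun x y => tns α β i x y * tns α β j x y) := by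
    intro i j
    refine IOK.of_bound ((hPmeas i).mul (hPmeas j)).stronglyMeasurable
      (φ := fun x => |α i.1 x * α j.1 x|) (ψ := fun y => |β i.2 y * β j.2 y|)
      (hαα i.1 j.1).abs (hββ i.2 j.2).abs (fun y => abs_nonneg _) (fun x y => le_of_eq ?_)
    simp only [tns, abs_mul]; ring
  have hIOK_fP : ∀ i : ι₁ × ι₂, IOK μ ν (fun x y => f x y * tns α β i x y) := by
    intro i
    refine IOK.of_bound (hfmeas.mul (hPmeas i)).stronglyMeasurable
      (φ := fun x => Cf * |α i.1 x|) (ψ := fun y => |β i.2 y|)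
      ((hαL1 i.1).abs.const_mul Cf) (hβL1 i.2).abs (fun y => abs_nonneg _) (fun x y => ?_)
    calc |f x y * tns α β i x y| = |f x y| * (|α i.1 x| * |β i.2 y|) := by
          simp only [tns, abs_mul]
      _ ≤ Cf * (|α i.1 x| * |β i.2 y|) :=
          mul_le_mul_of_nonneg_right (hfbd x y) (by positivity)
      _ = Cf * |α i.1 x| * |β i.2 y| := by ring
  have hIOK_Pf : ∀ i : ι₁ × ι₂, IOK μ ν (fun x y => tns α β i x y * f x y) := fun i =>
    (hIOK_fP i).congr' fun x y => mul_comm _ _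
  have hIOK_ff : IOK μ ν (fun x y => f x y * f x y) := by
    refine IOK.of_bound (hfmeas.mul hfmeas).stronglyMeasurable
      (φ := fun _ => Cf * Cf) (ψ := fun _ => 1)
      (integrable_const _) (integrable_const _) (fun _ => zero_le_one) (fun x y => ?_)
    rw [mul_one, abs_mul]
    exact mul_le_mul (hfbd x y) (hfbd x y) (abs_nonneg _) hCf0
  have hIOK_PΦf : ∀ i : ι₁ × ι₂, IOK μ ν (fun x y => tns α β i x y * Phi ν η f x y) := by
    intro i
    refine IOK.of_bound ((hPmeas i).stronglyMeasurable.mul hΦfmeas)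
      (φ := fun x => |α i.1 x| * (Cη * (Cf * Δ))) (ψ := fun y => |β i.2 y|)
      ((hαL1 i.1).abs.mul_const _) (hβL1 i.2).abs (fun y => abs_nonneg _) (fun x y => ?_)
    have e : |tns α β i x y * Phi ν η f x y|
        = |α i.1 x| * |β i.2 y| * |Phi ν η f x y| := by simp only [tns, abs_mul]
    rw [e]
    calc |α i.1 x| * |β i.2 y| * |Phi ν η f x y|
        ≤ |α i.1 x| * |β i.2 y| * (Cη * (Cf * Δ)) :=
          mul_le_mul_of_nonneg_left (hΦfbd x y) (by positivity)
      _ = |α i.1 x| * (Cη * (Cf * Δ)) * |β i.2 y| := by ring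
  have hIOK_fΦP : ∀ j : ι₁ × ι₂, IOK μ ν (fun x y => f x y * Phi ν η (tns α β j) x y) := by
    intro j
    refine IOK.of_bound (hfmeas.stronglyMeasurable.mul (hΦPmeas j))
      (φ := fun x => Cf * ((Cη * ∫ u, |β j.2 u| ∂ν) * |α j.1 x|)) (ψ := fun _ => 1)
      (((hαL1 j.1).abs.const_mul _).const_mul Cf) (integrable_const _)
      (fun _ => zero_le_one) (fun x y => ?_)
    rw [mul_one, abs_mul]
    have hK0 : 0 ≤ Cη * ∫ u, |β j.2 u| ∂ν :=
      mul_nonneg hCη0 (integral_nonneg fun _ => abs_nonneg _)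
    exact mul_le_mul (hfbd x y) (hΦPbd j x y) (abs_nonneg _) hCf0
  have hIOK_PΦP : ∀ i j : ι₁ × ι₂,
      IOK μ ν (fun x y => tns α β i x y * Phi ν η (tns α β j) x y) := by
    intro i j
    refine IOK.of_bound ((hPmeas i).stronglyMeasurable.mul (hΦPmeas j))
      (φ := fun x => (Cη * ∫ u, |β j.2 u| ∂ν) * |α i.1 x * α j.1 x|)
      (ψ := fun y => |β i.2 y|)
      ((hαα i.1 j.1).abs.const_mul _) (hβL1 i.2).abs (fun y => abs_nonneg _) (fun x y => ?_)
    have e : |tns α β i x y * Phi ν η (tns α β j) x y|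
        = |α i.1 x| * |β i.2 y| * |Phi ν η (tns α β j) x y| := by simp only [tns, abs_mul]
    rw [e]
    calc |α i.1 x| * |β i.2 y| * |Phi ν η (tns α β j) x y|
        ≤ |α i.1 x| * |β i.2 y| * ((Cη * ∫ u, |β j.2 u| ∂ν) * |α j.1 x|) :=
          mul_le_mul_of_nonneg_left (hΦPbd j x y) (by positivity)
      _ = (Cη * ∫ u, |β j.2 u| ∂ν) * (|α i.1 x| * |α j.1 x|) * |β i.2 y| := by ring
      _ = (Cη * ∫ u, |β j.2 u| ∂ν) * |α i.1 x * α j.1 x| * |β i.2 y| := by rw [abs_mul]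
  have hIOK_fΦf : IOK μ ν (fun x y => f x y * Phi ν η f x y) := by
    refine IOK.of_bound (hfmeas.stronglyMeasurable.mul hΦfmeas)
      (φ := fun _ => Cf * (Cη * (Cf * Δ))) (ψ := fun _ => 1)
      (integrable_const _) (integrable_const _) (fun _ => zero_le_one) (fun x y => ?_)
    rw [mul_one, abs_mul]
    exact mul_le_mul (hfbd x y) (hΦfbd x y) (abs_nonneg _) hCf0
  -- orthonormality of tensor basis
  have hJPP : ∀ i j : ι₁ × ι₂,
      Jint μ ν (fun x y => tns α β i x y * tns α β j x y) = if i = j then 1 else 0 := by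
    intro i j
    have e : ∀ x y, tns α β i x y * tns α β j x y
        = (α i.1 x * α j.1 x) * (β i.2 y * β j.2 y) := by
      intro x y; simp only [tns]; ring
    rw [Jint_congr e, Jint_sep, hα, hβ]
    by_cases h1 : i = j
    · subst h1; simp
    · have h2 : ¬(i.1 = j.1) ∨ ¬(i.2 = j.2) := by
        by_contra hc; push_neg at hc; exact h1 (Prod.ext hc.1 hc.2)
      rcases h2 with h | h <;> simp [h, if_neg h1]
  have hJPf : ∀ i : ι₁ × ι₂, Jint μ ν (fun x y => tns α β i x y * f x y) = A i := by
    intro i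
    rw [Jint_congr (v := fun x y => f x y * tns α β i x y) fun x y => mul_comm _ _]
    exact (hA i).symm
  -- S slices
  have hSsl : ∀ x, Integrable (S x) ν := by
    intro x
    have e : S x = fun y => ∑ i ∈ M, A i * tns α β i x y := funext fun y => hS x y
    rw [e]; exact integrable_finset_sum _ fun i _ => (hPsl i x).const_mul _
  have hhsl : ∀ x, Integrable (fun y => S x y - f x y) ν := fun x => (hSsl x).sub (hfsl x)
  -- Phi expansions
  have hηP_int : ∀ (j : ι₁ × ι₂) (x y : ℝ),
      Integrable (fun u => η x y u * tns α β j x u) ν :=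
    fun j x y => Phi_intg hηmeas hηbd (hPsl j x) y
  have hηf_int : ∀ x y, Integrable (fun u => η x y u * f x u) ν :=
    fun x y => Phi_intg hηmeas hηbd (hfsl x) y
  have hΦS : ∀ x y, Phi ν η S x y = ∑ j ∈ M, A j * Phi ν η (tns α β j) x y := by
    intro x y
    simp only [Phi]
    rw [show (fun u => η x y u * S x u)
        = fun u => ∑ j ∈ M, A j * (η x y u * tns α β j x u) from funext fun u => by
      rw [hS x u, Finset.mul_sum]; exact Finset.sum_congr rfl fun j _ => by ring]
    rw [integral_finset_sum _ fun j _ => (hηP_int j x y).const_mul (A j)]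
    exact Finset.sum_congr rfl fun j _ => integral_const_mul _ _
  have hΦh : ∀ x y, Phi ν η (fun x' y' => S x' y' - f x' y') x y
      = Phi ν η S x y - Phi ν η f x y := by
    intro x y
    simp only [Phi]
    rw [show (fun u => η x y u * (S x u - f x u))
        = fun u => η x y u * S x u - η x y u * f x u from funext fun u => by ring]
    exact integral_sub (Phi_intg hηmeas hηbd (hSsl x) y) (hηf_int x y)
  -- pointwise decompositions
  have hpt : ∀ x y, (S x y - f x y) * Phi ν η (fun x' y' => S x' y' - f x' y') x y
      = (∑ i ∈ M, ∑ j ∈ M, (A i * A j) * (tns α β i x y * Phi ν η (tns α β j) x y))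
        - (∑ i ∈ M, A i * (tns α β i x y * Phi ν η f x y))
        - (∑ j ∈ M, A j * (f x y * Phi ν η (tns α β j) x y))
        + f x y * Phi ν η f x y := by
    intro x y
    rw [hΦh x y, hΦS x y, hS x y,
      expand_hpt M (fun i => A i * tns α β i x y)
        (fun j => A j * Phi ν η (tns α β j) x y) (f x y) (Phi ν η f x y)]
    congr 1
    congr 1
    congr 1
    · exact Finset.sum_congr rfl fun i _ => Finset.sum_congr rfl fun j _ => by ring
    · exact Finset.sum_congr rfl fun i _ => by ring
    · exact Finset.sum_congr rfl fun j _ => by ring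
  have hpt2 : ∀ x y, (S x y - f x y) ^ 2
      = (∑ i ∈ M, ∑ j ∈ M, (A i * A j) * (tns α β i x y * tns α β j x y))
        - (∑ i ∈ M, A i * (tns α β i x y * f x y))
        - (∑ j ∈ M, A j * (f x y * tns α β j x y))
        + f x y * f x y := by
    intro x y
    rw [pow_two, hS x y,
      expand_hpt M (fun i => A i * tns α β i x y)
        (fun j => A j * tns α β j x y) (f x y) (f x y)]
    congr 1
    congr 1
    congr 1
    · exact Finset.sum_congr rfl fun i _ => Finset.sum_congr rfl fun j _ => by ring
    · exact Finset.sum_congr rfl fun i _ => by ring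
    · exact Finset.sum_congr rfl fun j _ => by ring
  -- composite IOK
  have hIOK_sum1 : IOK μ ν (fun x y => ∑ i ∈ M, ∑ j ∈ M,
      (A i * A j) * (tns α β i x y * Phi ν η (tns α β j) x y)) :=
    IOK.fsum fun i _ => IOK.fsum fun j _ => (hIOK_PΦP i j).cmul _
  have hIOK_sum2 : IOK μ ν (fun x y => ∑ i ∈ M,
      A i * (tns α β i x y * Phi ν η f x y)) :=
    IOK.fsum fun i _ => (hIOK_PΦf i).cmul _
  have hIOK_sum3 : IOK μ ν (fun x y => ∑ j ∈ M,
      A j * (f x y * Phi ν η (tns α β j) x y)) :=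
    IOK.fsum fun j _ => (hIOK_fΦP j).cmul _
  have hIOK_sum1' : IOK μ ν (fun x y => ∑ i ∈ M, ∑ j ∈ M,
      (A i * A j) * (tns α β i x y * tns α β j x y)) :=
    IOK.fsum fun i _ => IOK.fsum fun j _ => (hIOK_PP i j).cmul _
  have hIOK_sum2' : IOK μ ν (fun x y => ∑ i ∈ M,
      A i * (tns α β i x y * f x y)) :=
    IOK.fsum fun i _ => (hIOK_Pf i).cmul _
  have hIOK_sum3' : IOK μ ν (fun x y => ∑ j ∈ M,
      A j * (f x y * tns α β j x y)) :=
    IOK.fsum fun j _ => (hIOK_fP j).cmul _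
  have hIOK_hΦh : IOK μ ν (fun x y =>
      (S x y - f x y) * Phi ν η (fun x' y' => S x' y' - f x' y') x y) :=
    (((hIOK_sum1.sub' hIOK_sum2).sub' hIOK_sum3).add' hIOK_fΦf).congr'
      fun x y => (hpt x y).symm
  have hIOK_h2 : IOK μ ν (fun x y => (S x y - f x y) ^ 2) :=
    (((hIOK_sum1'.sub' hIOK_sum2').sub' hIOK_sum3').add' hIOK_ff).congr'
      fun x y => (hpt2 x y).symm
  -- first conclusion
  have hJ1 : Jint μ ν (fun x y => (S x y - f x y) ^ 2)
      = Jint μ ν (fun x y => f x y ^ 2) - ∑ i ∈ M, (A i) ^ 2 := by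
    rw [Jint_congr hpt2, Jint_comb hIOK_sum1' hIOK_sum2' hIOK_sum3' hIOK_ff]
    have v1 : Jint μ ν (fun x y => ∑ i ∈ M, ∑ j ∈ M,
        (A i * A j) * (tns α β i x y * tns α β j x y)) = ∑ i ∈ M, (A i) ^ 2 := by
      rw [Jint_fsum fun i _ => IOK.fsum fun j _ => (hIOK_PP i j).cmul _]
      refine Finset.sum_congr rfl fun i hi => ?_
      rw [Jint_fsum fun j _ => (hIOK_PP i j).cmul _]
      rw [Finset.sum_congr rfl fun j (_ : j ∈ M) => by
        rw [Jint_cmul (A i * A j) _, hJPP i j]]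
      rw [Finset.sum_congr rfl fun j (_ : j ∈ M) =>
        (by rw [mul_ite, mul_one, mul_zero] :
          (A i * A j) * (if i = j then (1:ℝ) else 0) = if i = j then A i * A j else 0)]
      rw [Finset.sum_ite_eq M i fun j => A i * A j]
      simp [hi, pow_two]
    have v2 : Jint μ ν (fun x y => ∑ i ∈ M, A i * (tns α β i x y * f x y))
        = ∑ i ∈ M, (A i) ^ 2 := by
      rw [Jint_fsum fun i _ => (hIOK_Pf i).cmul _]
      refine Finset.sum_congr rfl fun i _ => ?_
      rw [Jint_cmul, hJPf i, pow_two]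
    have v3 : Jint μ ν (fun x y => ∑ j ∈ M, A j * (f x y * tns α β j x y))
        = ∑ j ∈ M, (A j) ^ 2 := by
      rw [Jint_fsum fun j _ => (hIOK_fP j).cmul _]
      refine Finset.sum_congr rfl fun j _ => ?_
      rw [Jint_cmul, ← hA j, pow_two]
    have v4 : Jint μ ν (fun x y => f x y * f x y) = Jint μ ν (fun x y => f x y ^ 2) :=
      Jint_congr fun x y => (pow_two _).symm
    rw [v1, v2, v3, v4]; ring
  refine ⟨hJ1, ?_⟩
  -- second conclusion
  have hJ2 : Jint μ ν (fun x y =>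
      (S x y - f x y) * Phi ν η (fun x' y' => S x' y' - f x' y') x y)
      = (∑ i ∈ M, ∑ j ∈ M, A i * Cc i j * A j) - 2 * (∑ i ∈ M, A i * Bc i) + θv := by
    rw [Jint_congr hpt, Jint_comb hIOK_sum1 hIOK_sum2 hIOK_sum3 hIOK_fΦf]
    have w1 : Jint μ ν (fun x y => ∑ i ∈ M, ∑ j ∈ M,
        (A i * A j) * (tns α β i x y * Phi ν η (tns α β j) x y))
        = ∑ i ∈ M, ∑ j ∈ M, A i * Cc i j * A j := by
      rw [Jint_fsum fun i _ => IOK.fsum fun j _ => (hIOK_PΦP i j).cmul _]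
      refine Finset.sum_congr rfl fun i _ => ?_
      rw [Jint_fsum fun j _ => (hIOK_PΦP i j).cmul _]
      refine Finset.sum_congr rfl fun j _ => ?_
      rw [Jint_cmul, ← hCc i j]; ring
    have w2 : Jint μ ν (fun x y => ∑ i ∈ M, A i * (tns α β i x y * Phi ν η f x y))
        = ∑ i ∈ M, A i * Bc i := by
      rw [Jint_fsum fun i _ => (hIOK_PΦf i).cmul _]
      refine Finset.sum_congr rfl fun i _ => ?_
      rw [Jint_cmul, ← hBc i]
    have w3 : Jint μ ν (fun x y => ∑ j ∈ M, A j * (f x y * Phi ν η (tns α β j) x y))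
        = ∑ j ∈ M, A j * Bc j := by
      rw [Jint_fsum fun j _ => (hIOK_fΦP j).cmul _]
      refine Finset.sum_congr rfl fun j _ => ?_
      rw [Jint_cmul]
      congr 1
      rw [Jsym hηmeas hηbd hηsym hfmeas (hPmeas j) hfsl (hPsl j), ← hBc j]
    rw [w1, w2, w3, ← hθ]; ring
  have habs := abs_Jint_le hηmeas hηbd hΔ hhsl hIOK_hΦh hIOK_h2
  have e : 2 * ∑ i ∈ M, A i * Bc i - ∑ i ∈ M, ∑ j ∈ M, A i * Cc i j * A j - θv
      = -(Jint μ ν (fun x y =>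
          (S x y - f x y) * Phi ν η (fun x' y' => S x' y' - f x' y') x y)) := by
    rw [hJ2]; ring
  rw [e, abs_neg]
  exact habs


end Key

/-- Lemma 10: the deterministic part `2AᵀB − AᵀCA` of the Hoeffding
decomposition converges to `θ(f)` fast enough: explicit bounds and
`√n (2AᵀB − AᵀCA − θ(f)) → 0` when `|M_n|/n → 0`. -/
theorem ABterm_tendsto_theta
    {ι₁ ι₂ : Type*} [Countable ι₁] [Countable ι₂] [DecidableEq ι₁] [DecidableEq ι₂]
    (a b c d : ℝ) (hab : a < b) (hcd : c < d)
    (α : ι₁ → ℝ → ℝ) (β : ι₂ → ℝ → ℝ)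
    (hαmeas : ∀ i, Measurable (α i)) (hβmeas : ∀ i, Measurable (β i))
    (hα : ∀ i j, (∫ x in Icc a b, α i x * α j x) = if i = j then 1 else 0)
    (hβ : ∀ i j, (∫ y in Icc c d, β i y * β j y) = if i = j then 1 else 0)
    (f : ℝ → ℝ → ℝ) (Cf : ℝ)
    (hfmeas : Measurable (Function.uncurry f))
    (hf0 : ∀ x y, 0 ≤ f x y) (hfbd : ∀ x y, f x y ≤ Cf)
    (hfsupp : ∀ x y, f x y ≠ 0 → x ∈ Icc a b ∧ y ∈ Icc c d)
    (hfprob : IsProbabilityMeasure (nu f))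
    (η : ℝ → ℝ → ℝ → ℝ) (Cη : ℝ)
    (hηmeas : Measurable fun q : ℝ × ℝ × ℝ => η q.1 q.2.1 q.2.2)
    (hηbd : ∀ x y₁ y₂, |η x y₁ y₂| ≤ Cη)
    (hηsym : ∀ x y₁ y₂, η x y₁ y₂ = η x y₂ y₁)
    (cseq : ι₁ × ι₂ → ℝ) (hcpos : ∀ i, 0 < cseq i)
    (hfE : inEllipsoid a b c d (tns α β) cseq f)
    (M : ℕ → Finset (ι₁ × ι₂))
    (hA1a : ∃ lam1 lam2 : ℝ, 0 < lam1 ∧ 0 < lam2 ∧ ∀ n : ℕ, 1 ≤ n →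
      lam1 * (((M n).card : ℝ) / (n : ℝ) ^ 2) ≤ supTail cseq (M n) ^ 2 ∧
        supTail cseq (M n) ^ 2 ≤ lam2 * (((M n).card : ℝ) / (n : ℝ) ^ 2))
    (hA1b : ∀ t : ℝ → ℝ → ℝ, Measurable (Function.uncurry t) →
      IntegrableOn (fun q : ℝ × ℝ => t q.1 q.2 ^ 2) (Icc a b ×ˢ Icc c d) volume →
      Tendsto (fun n => I2 a b c d fun x y =>
        (SM a b c d (tns α β) t (M n) x y - t x y) ^ 2) atTop (𝓝 0))
    (hMn : Tendsto (fun n => ((M n).card : ℝ) / n) atTop (𝓝 0)) :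
    (∀ n : ℕ,
      |ABterm a b c d (tns α β) η f (M n) - theta a b c d η f|
        ≤ 2 * (d - c) * norm2 a b c d f * Cη *
            norm2 a b c d (fun x y => SM a b c d (tns α β) f (M n) x y - f x y)
      ∧ 2 * (d - c) * norm2 a b c d f * Cη *
            norm2 a b c d (fun x y => SM a b c d (tns α β) f (M n) x y - f x y)
          ≤ 2 * (d - c) * norm2 a b c d f * Cη * Real.sqrt (supTail cseq (M n)))
    ∧ Tendsto (fun n : ℕ => Real.sqrt n *
        (ABterm a b c d (tns α β) η f (M n) - theta a b c d η f)) atTop (𝓝 0) := by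
  classical
  obtain ⟨lam1, lam2, hl1, hl2, hA1⟩ := hA1a
  have hCη0 : 0 ≤ Cη := le_trans (abs_nonneg _) (hηbd 0 0 0)
  have hΔpos : 0 < d - c := sub_pos.2 hcd
  have hΔ0 : 0 ≤ d - c := hΔpos.le
  have hab0 : 0 < b - a := sub_pos.2 hab
  haveI hfinab : IsFiniteMeasure (volume.restrict (Icc a b)) :=
    ⟨by rw [Measure.restrict_apply_univ, Real.volume_Icc]; exact ENNReal.ofReal_lt_top⟩
  haveI hfincd : IsFiniteMeasure (volume.restrict (Icc c d)) :=
    ⟨by rw [Measure.restrict_apply_univ, Real.volume_Icc]; exact ENNReal.ofReal_lt_top⟩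
  have hfabs : ∀ x y, |f x y| ≤ Cf := fun x y => by
    rw [abs_of_nonneg (hf0 x y)]; exact hfbd x y
  have hΔeq : ((volume.restrict (Icc c d)) Set.univ).toReal ≤ d - c := by
    rw [Measure.restrict_apply_univ, Real.volume_Icc, ENNReal.toReal_ofReal hΔ0]
  -- bridges
  have hAbr : ∀ i : ι₁ × ι₂, coef a b c d (tns α β) f i
      = Jint (volume.restrict (Icc a b)) (volume.restrict (Icc c d))
          (fun x y => f x y * tns α β i x y) := fun _ => rfl
  have hBbr : ∀ i : ι₁ × ι₂, bcoef a b c d (tns α β) η f i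
      = Jint (volume.restrict (Icc a b)) (volume.restrict (Icc c d))
          (fun x y => tns α β i x y * Phi (volume.restrict (Icc c d)) η f x y) := by
    intro i
    show Jint (volume.restrict (Icc a b)) (volume.restrict (Icc c d))
      (fun x y => gfun c d η f x y * tns α β i x y) = _
    refine Jint_congr fun x y => ?_
    rw [mul_comm]
    congr 1
    show (∫ u in Icc c d, f x u * η x y u) = ∫ u in Icc c d, η x y u * f x u
    rw [show (fun u => f x u * η x y u) = fun u => η x y u * f x u from
      funext fun u => mul_comm _ _]
  have hCbr : ∀ i j : ι₁ × ι₂, cmat a b c d (tns α β) η i j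
      = Jint (volume.restrict (Icc a b)) (volume.restrict (Icc c d))
          (fun x y => tns α β i x y * Phi (volume.restrict (Icc c d)) η (tns α β j) x y) := by
    intro i j
    show Jint (volume.restrict (Icc a b)) (volume.restrict (Icc c d))
      (fun x y₁ => ∫ y₂ in Icc c d, tns α β i x y₁ * tns α β j x y₂ * η x y₁ y₂) = _
    refine Jint_congr fun x y₁ => ?_
    rw [show (fun y₂ => tns α β i x y₁ * tns α β j x y₂ * η x y₁ y₂)
        = fun y₂ => tns α β i x y₁ * (η x y₁ y₂ * tns α β j x y₂) from
      funext fun y₂ => by ring]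
    exact integral_const_mul _ _
  have hθbr : theta a b c d η f
      = Jint (volume.restrict (Icc a b)) (volume.restrict (Icc c d))
          (fun x y => f x y * Phi (volume.restrict (Icc c d)) η f x y) := by
    show Jint (volume.restrict (Icc a b)) (volume.restrict (Icc c d))
      (fun x y₁ => ∫ y₂ in Icc c d, η x y₁ y₂ * f x y₁ * f x y₂) = _
    refine Jint_congr fun x y₁ => ?_
    rw [show (fun y₂ => η x y₁ y₂ * f x y₁ * f x y₂)
        = fun y₂ => f x y₁ * (η x y₁ y₂ * f x y₂) from funext fun y₂ => by ring]
    exact integral_const_mul _ _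
  have keyall := fun N : Finset (ι₁ × ι₂) =>
    keyAbs (volume.restrict (Icc a b)) (volume.restrict (Icc c d)) α β hαmeas hβmeas hα hβ
      f Cf hfmeas hfabs η Cη hηmeas hηbd hηsym (d - c) hΔeq N
      (coef a b c d (tns α β) f) (bcoef a b c d (tns α β) η f) (cmat a b c d (tns α β) η)
      (theta a b c d η f) (SM a b c d (tns α β) f N) hAbr hBbr hCbr hθbr
      (fun _ _ => rfl)
  have key1 : ∀ N : Finset (ι₁ × ι₂),
      (I2 a b c d fun x y => (SM a b c d (tns α β) f N x y - f x y) ^ 2)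
        = (I2 a b c d fun x y => f x y ^ 2)
          - ∑ i ∈ N, (coef a b c d (tns α β) f i) ^ 2 := fun N => (keyall N).1
  have key2 : ∀ N : Finset (ι₁ × ι₂),
      |ABterm a b c d (tns α β) η f N - theta a b c d η f|
        ≤ Cη * (d - c) * I2 a b c d fun x y =>
            (SM a b c d (tns α β) f N x y - f x y) ^ 2 := fun N => (keyall N).2
  have hH0 : ∀ N : Finset (ι₁ × ι₂),
      0 ≤ I2 a b c d fun x y => (SM a b c d (tns α β) f N x y - f x y) ^ 2 :=
    fun N => Jint_nonneg fun x y => sq_nonneg _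
  have hSa0 : ∀ N : Finset (ι₁ × ι₂),
      0 ≤ ∑ i ∈ N, (coef a b c d (tns α β) f i) ^ 2 :=
    fun N => Finset.sum_nonneg fun i _ => sq_nonneg _
  have hvol : volume (Icc a b ×ˢ Icc c d) < ⊤ := by
    rw [Measure.volume_eq_prod, Measure.prod_prod, Real.volume_Icc, Real.volume_Icc]
    exact ENNReal.mul_lt_top ENNReal.ofReal_lt_top ENNReal.ofReal_lt_top
  have hfint2 : IntegrableOn (fun q : ℝ × ℝ => f q.1 q.2 ^ 2) (Icc a b ×ˢ Icc c d) volume := by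
    have hmeas2 : Measurable fun q : ℝ × ℝ => f q.1 q.2 ^ 2 := hfmeas.pow_const 2
    refine (((integrableOn_const_iff).mpr (Or.inr hvol) :
        IntegrableOn (fun _ => Cf ^ 2) (Icc a b ×ˢ Icc c d) volume)).mono'
      hmeas2.aestronglyMeasurable.restrict (.of_forall fun q => ?_)
    rw [Real.norm_eq_abs, abs_pow]
    exact pow_le_pow_left₀ (abs_nonneg _) (hfabs q.1 q.2) 2
  have hq : Tendsto (fun n => I2 a b c d fun x y =>
      (SM a b c d (tns α β) f (M n) x y - f x y) ^ 2) atTop (𝓝 0) :=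
    hA1b f hfmeas hfint2
  by_cases hB : BddAbove (Set.range fun i : ι₁ × ι₂ => (cseq i) ^ 2)
  · -- bounded case
    have hbddN : ∀ N : Finset (ι₁ × ι₂),
        BddAbove ((fun i : ι₁ × ι₂ => (cseq i) ^ 2) '' {i | i ∉ N}) := fun N =>
      hB.mono (Set.image_subset_range _ _)
    have hst00 : ∀ N : Finset (ι₁ × ι₂), 0 ≤ supTail cseq N := by
      intro N
      rcases Set.eq_empty_or_nonempty
        ((fun i : ι₁ × ι₂ => (cseq i) ^ 2) '' {i | i ∉ N}) with he | hne
      · show 0 ≤ sSup _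
        rw [he, Real.sSup_empty]
      · obtain ⟨z, i, hi, rfl⟩ := hne
        exact le_trans (sq_nonneg (cseq i)) (le_csSup (hbddN N) ⟨i, hi, rfl⟩)
    have htail : ∀ (N F : Finset (ι₁ × ι₂)), (∀ i ∈ F, i ∉ N) →
        (∑ i ∈ F, (coef a b c d (tns α β) f i) ^ 2) ≤ supTail cseq N := by
      intro N F hF
      have step : ∀ i ∈ F, (coef a b c d (tns α β) f i) ^ 2
          ≤ (coef a b c d (tns α β) f i / cseq i) ^ 2 * supTail cseq N := by
        intro i hi
        have hc2 : (cseq i) ^ 2 ≤ supTail cseq N := le_csSup (hbddN N) ⟨i, hF i hi, rfl⟩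
        have hcne : (cseq i) ≠ 0 := (hcpos i).ne'
        have e : (coef a b c d (tns α β) f i) ^ 2
            = (coef a b c d (tns α β) f i / cseq i) ^ 2 * (cseq i) ^ 2 := by
          field_simp
        rw [e]
        exact mul_le_mul_of_nonneg_left hc2 (sq_nonneg _)
      calc (∑ i ∈ F, (coef a b c d (tns α β) f i) ^ 2)
          ≤ ∑ i ∈ F, (coef a b c d (tns α β) f i / cseq i) ^ 2 * supTail cseq N :=
            Finset.sum_le_sum step
        _ = (∑ i ∈ F, (coef a b c d (tns α β) f i / cseq i) ^ 2) * supTail cseq N :=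
            (Finset.sum_mul _ _ _).symm
        _ ≤ 1 * supTail cseq N := by
            refine mul_le_mul_of_nonneg_right ?_ (hst00 N)
            exact le_trans (hfE.1.sum_le_tsum F (fun i _ => sq_nonneg _)) hfE.2
        _ = supTail cseq N := one_mul _
    have hJle : ∀ N : Finset (ι₁ × ι₂),
        (I2 a b c d fun x y => f x y ^ 2)
            - (∑ i ∈ N, (coef a b c d (tns α β) f i) ^ 2)
          ≤ supTail cseq N := by
      intro N
      have haux : Tendsto (fun k => (I2 a b c d fun x y =>
          (SM a b c d (tns α β) f (M k) x y - f x y) ^ 2) + supTail cseq N) atTop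
          (𝓝 (0 + supTail cseq N)) := hq.add tendsto_const_nhds
      rw [zero_add] at haux
      refine ge_of_tendsto' haux ?_
      · intro k
        have e1 := key1 (M k)
        have hsplit : (∑ i ∈ M k, (coef a b c d (tns α β) f i) ^ 2)
            ≤ (∑ i ∈ N, (coef a b c d (tns α β) f i) ^ 2)
              + ∑ i ∈ M k \ N, (coef a b c d (tns α β) f i) ^ 2 := by
          have hsub : M k ⊆ N ∪ (M k \ N) := by
            intro i hi
            by_cases hiN : i ∈ N
            · exact Finset.mem_union_left _ hiN
            · exact Finset.mem_union_right _ (Finset.mem_sdiff.mpr ⟨hi, hiN⟩)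
          calc (∑ i ∈ M k, (coef a b c d (tns α β) f i) ^ 2)
              ≤ ∑ i ∈ N ∪ (M k \ N), (coef a b c d (tns α β) f i) ^ 2 :=
                Finset.sum_le_sum_of_subset_of_nonneg hsub fun i _ _ => sq_nonneg _
            _ = _ := Finset.sum_union Finset.disjoint_sdiff
        have htl := htail N (M k \ N) (fun i hi => (Finset.mem_sdiff.mp hi).2)
        linarith [e1, hsplit, htl]
    refine ⟨fun n => ⟨?_, ?_⟩, ?_⟩
    · -- first inequality
      have k1 := key1 (M n)
      have k2 := key2 (M n)
      have hn2 : norm2 a b c d (fun x y => SM a b c d (tns α β) f (M n) x y - f x y)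
          = Real.sqrt (I2 a b c d fun x y =>
              (SM a b c d (tns α β) f (M n) x y - f x y) ^ 2) := rfl
      have hnf : norm2 a b c d f = Real.sqrt (I2 a b c d fun x y => f x y ^ 2) := rfl
      rw [hn2, hnf]
      have hX0 : 0 ≤ Real.sqrt (I2 a b c d fun x y =>
          (SM a b c d (tns α β) f (M n) x y - f x y) ^ 2) := Real.sqrt_nonneg _
      have hY0 : 0 ≤ Real.sqrt (I2 a b c d fun x y => f x y ^ 2) := Real.sqrt_nonneg _
      have hXX : Real.sqrt (I2 a b c d fun x y =>
            (SM a b c d (tns α β) f (M n) x y - f x y) ^ 2)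
          * Real.sqrt (I2 a b c d fun x y =>
            (SM a b c d (tns α β) f (M n) x y - f x y) ^ 2)
          = I2 a b c d fun x y => (SM a b c d (tns α β) f (M n) x y - f x y) ^ 2 :=
        Real.mul_self_sqrt (hH0 (M n))
      have hXY : Real.sqrt (I2 a b c d fun x y =>
            (SM a b c d (tns α β) f (M n) x y - f x y) ^ 2)
          ≤ Real.sqrt (I2 a b c d fun x y => f x y ^ 2) :=
        Real.sqrt_le_sqrt (by linarith [k1, hSa0 (M n)])
      calc |ABterm a b c d (tns α β) η f (M n) - theta a b c d η f|
          ≤ Cη * (d - c) * I2 a b c d fun x y =>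
              (SM a b c d (tns α β) f (M n) x y - f x y) ^ 2 := k2
        _ = Cη * (d - c) * (Real.sqrt (I2 a b c d fun x y =>
              (SM a b c d (tns α β) f (M n) x y - f x y) ^ 2)
            * Real.sqrt (I2 a b c d fun x y =>
              (SM a b c d (tns α β) f (M n) x y - f x y) ^ 2)) := by rw [hXX]
        _ ≤ Cη * (d - c) * (Real.sqrt (I2 a b c d fun x y => f x y ^ 2)
            * Real.sqrt (I2 a b c d fun x y =>
              (SM a b c d (tns α β) f (M n) x y - f x y) ^ 2)) := by
            refine mul_le_mul_of_nonneg_left ?_ (mul_nonneg hCη0 hΔ0)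
            exact mul_le_mul_of_nonneg_right hXY hX0
        _ ≤ 2 * (d - c) * Real.sqrt (I2 a b c d fun x y => f x y ^ 2) * Cη
            * Real.sqrt (I2 a b c d fun x y =>
              (SM a b c d (tns α β) f (M n) x y - f x y) ^ 2) := by
            nlinarith [mul_nonneg (mul_nonneg (mul_nonneg hCη0 hΔ0) hY0) hX0]
    · -- second inequality
      have k1 := key1 (M n)
      have hn2 : norm2 a b c d (fun x y => SM a b c d (tns α β) f (M n) x y - f x y)
          = Real.sqrt (I2 a b c d fun x y =>
              (SM a b c d (tns α β) f (M n) x y - f x y) ^ 2) := rfl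
      have hnf : norm2 a b c d f = Real.sqrt (I2 a b c d fun x y => f x y ^ 2) := rfl
      rw [hn2, hnf]
      have hXle : Real.sqrt (I2 a b c d fun x y =>
            (SM a b c d (tns α β) f (M n) x y - f x y) ^ 2)
          ≤ Real.sqrt (supTail cseq (M n)) :=
        Real.sqrt_le_sqrt (by linarith [k1, hJle (M n)])
      refine mul_le_mul_of_nonneg_left hXle ?_
      have : (0:ℝ) ≤ 2 * (d - c) := by linarith
      exact mul_nonneg (mul_nonneg this (Real.sqrt_nonneg _)) hCη0
    · -- tendsto
      have hbound : ∀ n : ℕ, 1 ≤ n →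
          ‖Real.sqrt n * (ABterm a b c d (tns α β) η f (M n) - theta a b c d η f)‖
            ≤ (Cη * (d - c) * Real.sqrt lam2) * Real.sqrt (((M n).card : ℝ) / n) := by
        intro n hn
        have hnpos : (0:ℝ) < (n:ℝ) := by exact_mod_cast hn
        have k1 := key1 (M n)
        have k2 := key2 (M n)
        have hHle : (I2 a b c d fun x y =>
            (SM a b c d (tns α β) f (M n) x y - f x y) ^ 2) ≤ supTail cseq (M n) := by
          linarith [hJle (M n)]
        have habs : |ABterm a b c d (tns α β) η f (M n) - theta a b c d η f|
            ≤ Cη * (d - c) * supTail cseq (M n) :=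
          le_trans k2 (mul_le_mul_of_nonneg_left hHle (mul_nonneg hCη0 hΔ0))
        have hs2 := (hA1 n hn).2
        have hkey : Real.sqrt n * supTail cseq (M n)
            ≤ Real.sqrt lam2 * Real.sqrt (((M n).card : ℝ) / n) := by
          have h0s : 0 ≤ supTail cseq (M n) := hst00 (M n)
          have hsq : (Real.sqrt n * supTail cseq (M n)) ^ 2
              ≤ (Real.sqrt lam2 * Real.sqrt (((M n).card : ℝ) / n)) ^ 2 := by
            rw [mul_pow, mul_pow, Real.sq_sqrt hnpos.le, Real.sq_sqrt hl2.le,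
              Real.sq_sqrt (by positivity : (0:ℝ) ≤ ((M n).card : ℝ) / n)]
            calc (n:ℝ) * supTail cseq (M n) ^ 2
                ≤ (n:ℝ) * (lam2 * (((M n).card : ℝ) / (n:ℝ) ^ 2)) :=
                  mul_le_mul_of_nonneg_left hs2 hnpos.le
              _ = lam2 * (((M n).card : ℝ) / (n:ℝ)) := by field_simp
          calc Real.sqrt n * supTail cseq (M n)
              = Real.sqrt ((Real.sqrt n * supTail cseq (M n)) ^ 2) :=
                (Real.sqrt_sq (by positivity)).symm
            _ ≤ Real.sqrt ((Real.sqrt lam2 * Real.sqrt (((M n).card : ℝ) / n)) ^ 2) :=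
                Real.sqrt_le_sqrt hsq
            _ = Real.sqrt lam2 * Real.sqrt (((M n).card : ℝ) / n) :=
                Real.sqrt_sq (by positivity)
        rw [Real.norm_eq_abs, abs_mul, abs_of_nonneg (Real.sqrt_nonneg (n:ℝ))]
        calc Real.sqrt n * |ABterm a b c d (tns α β) η f (M n) - theta a b c d η f|
            ≤ Real.sqrt n * (Cη * (d - c) * supTail cseq (M n)) :=
              mul_le_mul_of_nonneg_left habs (Real.sqrt_nonneg _)
          _ = (Cη * (d - c)) * (Real.sqrt n * supTail cseq (M n)) := by ring
          _ ≤ (Cη * (d - c)) * (Real.sqrt lam2 * Real.sqrt (((M n).card : ℝ) / n)) :=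
              mul_le_mul_of_nonneg_left hkey (mul_nonneg hCη0 hΔ0)
          _ = (Cη * (d - c) * Real.sqrt lam2) * Real.sqrt (((M n).card : ℝ) / n) := by ring
      refine squeeze_zero_norm'
        (a := fun n : ℕ => (Cη * (d - c) * Real.sqrt lam2) * Real.sqrt (((M n).card : ℝ) / n))
        ?_ ?_
      · filter_upwards [eventually_ge_atTop 1] with n hn using hbound n hn
      · have h1 : Tendsto (fun n : ℕ => Real.sqrt (((M n).card : ℝ) / n)) atTop (𝓝 0) := by
          have h2 := (Real.continuous_sqrt.tendsto 0).comp hMn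
          simp only [Function.comp_def, Real.sqrt_zero] at h2
          exact h2
        simpa using h1.const_mul (Cη * (d - c) * Real.sqrt lam2)
  · -- unbounded case : contradiction
    exfalso
    have hst0 : ∀ N : Finset (ι₁ × ι₂), supTail cseq N = 0 := by
      intro N
      refine Real.sSup_of_not_bddAbove fun hbdd => hB ?_
      have hsub : Set.range (fun i : ι₁ × ι₂ => (cseq i) ^ 2)
          ⊆ ((fun i : ι₁ × ι₂ => (cseq i) ^ 2) '' {i | i ∉ N})
            ∪ ((fun i : ι₁ × ι₂ => (cseq i) ^ 2) '' ↑N) := by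
        rintro - ⟨i, rfl⟩
        by_cases hi : i ∈ N
        · exact Or.inr ⟨i, hi, rfl⟩
        · exact Or.inl ⟨i, hi, rfl⟩
      exact ((hbdd.union ((N.finite_toSet.image _).bddAbove)).mono hsub)
    have hM0 : ∀ n : ℕ, 1 ≤ n → M n = ∅ := by
      intro n hn
      have h1 := (hA1 n hn).1
      rw [hst0 (M n)] at h1
      have hnpos : (0:ℝ) < (n:ℝ) := by exact_mod_cast hn
      by_contra hc
      have hcard : (0:ℝ) < ((M n).card : ℝ) := by
        have := Finset.card_pos.mpr (Finset.nonempty_of_ne_empty hc)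
        exact_mod_cast this
      nlinarith [mul_pos hl1 (div_pos hcard (by positivity : (0:ℝ) < (n:ℝ) ^ 2))]
    have h1meas : Measurable (Function.uncurry fun _ _ : ℝ => (1:ℝ)) := measurable_const
    have h1int : IntegrableOn
        (fun q : ℝ × ℝ => (fun _ _ : ℝ => (1:ℝ)) q.1 q.2 ^ 2)
        (Icc a b ×ˢ Icc c d) volume := by
      simpa using (integrableOn_const_iff (C := (1:ℝ)) (s := Icc a b ×ˢ Icc c d)
        (μ := volume)).mpr (Or.inr hvol)
    have htend := hA1b (fun _ _ => 1) h1meas h1int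
    have hconst : ∀ n : ℕ, 1 ≤ n → (I2 a b c d fun x y =>
        (SM a b c d (tns α β) (fun _ _ => 1) (M n) x y - 1) ^ 2) = (b - a) * (d - c) := by
      intro n hn
      rw [hM0 n hn]
      have e1 : (I2 a b c d fun x y =>
          (SM a b c d (tns α β) (fun _ _ => 1) (∅ : Finset (ι₁ × ι₂)) x y - 1) ^ 2)
          = Jint (volume.restrict (Icc a b)) (volume.restrict (Icc c d))
              (fun _ _ => (1:ℝ)) :=
        Jint_congr fun x y => by simp [SM]
      rw [e1]
      show (∫ _x in Icc a b, ∫ _y in Icc c d, (1:ℝ)) = (b - a) * (d - c)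
      rw [integral_const, integral_const, measureReal_restrict_apply_univ,
        measureReal_restrict_apply_univ, Measure.real, Measure.real, Real.volume_Icc, Real.volume_Icc,
        ENNReal.toReal_ofReal hΔ0, ENNReal.toReal_ofReal hab0.le]
      simp [smul_eq_mul]
    have hVzero : (b - a) * (d - c) = 0 := by
      have hc2 : Tendsto (fun _ : ℕ => (b - a) * (d - c)) atTop (𝓝 ((b - a) * (d - c))) :=
        tendsto_const_nhds
      refine tendsto_nhds_unique hc2 ?_
      refine htend.congr' ?_
      filter_upwards [eventually_ge_atTop 1] with n hn using hconst n hn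
    nlinarith [mul_pos hab0 hΔpos]

end DaVeigaGamboa
end
end

section
/- For every finite product subset M = M₁×M₂ ⊂ D₁×D₂, the squared coefficients of η in the tensor basis satisfy Σ_{i,i'∈M} c_{ii'}² ≤ Δ_Y² ‖η‖_∞² |M|, where c_{ii'} = ∭ p_i(x,y₁) p_{i'}(x,y₂) η(x,y₁,y₂) dx dy₁ dy₂. -/
open MeasureTheory ProbabilityTheory Filter Set Topology

noncomputable section

namespace DaVeigaGamboa

private lemma cs_aux {ν : Measure ℝ} {f g : ℝ → ℝ}
    (hf : MemLp f 2 ν) (hg : MemLp g 2 ν) :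
    (∫ x, f x * g x ∂ν) ^ 2 ≤ (∫ x, f x ^ 2 ∂ν) * (∫ x, g x ^ 2 ∂ν) := by
  have hFG : (inner ℝ (hf.toLp f) (hg.toLp g) : ℝ) = ∫ x, f x * g x ∂ν := by
    rw [L2.inner_def]
    refine integral_congr_ae ?_
    filter_upwards [hf.coeFn_toLp, hg.coeFn_toLp] with x h1 h2
    simp [h1, h2, RCLike.inner_apply, starRingEnd_apply, star_trivial, mul_comm]
  have hFF : (inner ℝ (hf.toLp f) (hf.toLp f) : ℝ) = ∫ x, f x ^ 2 ∂ν := by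
    rw [L2.inner_def]
    refine integral_congr_ae ?_
    filter_upwards [hf.coeFn_toLp] with x h1
    simp [h1, RCLike.inner_apply, starRingEnd_apply, star_trivial, pow_two]
  have hGG : (inner ℝ (hg.toLp g) (hg.toLp g) : ℝ) = ∫ x, g x ^ 2 ∂ν := by
    rw [L2.inner_def]
    refine integral_congr_ae ?_
    filter_upwards [hg.coeFn_toLp] with x h1
    simp [h1, RCLike.inner_apply, starRingEnd_apply, star_trivial, pow_two]
  have := real_inner_mul_inner_self_le (hf.toLp f) (hg.toLp g)
  rw [hFG, hFF, hGG] at this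
  simpa [pow_two] using this

/-- Bessel-type bound for the coefficients of `η`,
`Σ_{i,i' ∈ M₁×M₂} c_{ii'}² ≤ Δ_Y² ‖η‖_∞² |M₁×M₂|`. -/
theorem cmat_sq_sum_bound
    {ι₁ ι₂ : Type*} [Countable ι₁] [Countable ι₂] [DecidableEq ι₁] [DecidableEq ι₂]
    (a b c d : ℝ) (hab : a < b) (hcd : c < d)
    (α : ι₁ → ℝ → ℝ) (β : ι₂ → ℝ → ℝ)
    (hαmeas : ∀ i, Measurable (α i)) (hβmeas : ∀ i, Measurable (β i))
    (hα : ∀ i j, (∫ x in Icc a b, α i x * α j x) = if i = j then 1 else 0)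
    (hβ : ∀ i j, (∫ y in Icc c d, β i y * β j y) = if i = j then 1 else 0)
    (η : ℝ → ℝ → ℝ → ℝ) (Cη : ℝ)
    (hηmeas : Measurable fun q : ℝ × ℝ × ℝ => η q.1 q.2.1 q.2.2)
    (hηbd : ∀ x y₁ y₂, |η x y₁ y₂| ≤ Cη)
    (hηsym : ∀ x y₁ y₂, η x y₁ y₂ = η x y₂ y₁)
    (M₁ : Finset ι₁) (M₂ : Finset ι₂) :
    ∑ i ∈ M₁ ×ˢ M₂, ∑ i' ∈ M₁ ×ˢ M₂, cmat a b c d (tns α β) η i i' ^ 2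
      ≤ (d - c) ^ 2 * Cη ^ 2 * ((M₁ ×ˢ M₂).card : ℝ) := by
  classical
  set μ : Measure ℝ := volume.restrict (Icc a b) with hμdef
  set ν : Measure ℝ := volume.restrict (Icc c d) with hνdef
  haveI hμfin : IsFiniteMeasure μ :=
    ⟨by rw [hμdef, Measure.restrict_apply_univ, Real.volume_Icc]; exact ENNReal.ofReal_lt_top⟩
  haveI hνfin : IsFiniteMeasure ν :=
    ⟨by rw [hνdef, Measure.restrict_apply_univ, Real.volume_Icc]; exact ENNReal.ofReal_lt_top⟩
  set ρ : Measure (ℝ × ℝ) := μ.prod ν with hρdef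
  have hCη0 : 0 ≤ Cη := le_trans (abs_nonneg _) (hηbd a c c)
  have hνuniv : (ν Set.univ).toReal = d - c := by
    rw [hνdef, Measure.restrict_apply_univ, Real.volume_Icc,
      ENNReal.toReal_ofReal (by linarith)]
  -- Integrability of squares of basis functions
  have hintα : ∀ i, Integrable (fun x => α i x ^ 2) μ := by
    intro i
    by_contra h
    have h1 := hα i i
    simp only [if_pos rfl] at h1
    rw [show (fun x => α i x * α i x) = fun x => α i x ^ 2 by funext x; ring] at h1
    rw [integral_undef h] at h1
    norm_num at h1
  have hintβ : ∀ j, Integrable (fun y => β j y ^ 2) ν := by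
    intro j
    by_contra h
    have h1 := hβ j j
    simp only [if_pos rfl] at h1
    rw [show (fun y => β j y * β j y) = fun y => β j y ^ 2 by funext y; ring] at h1
    rw [integral_undef h] at h1
    norm_num at h1
  have hαsq : ∀ i, (∫ x, α i x ^ 2 ∂μ) = 1 := by
    intro i
    have h1 := hα i i
    simp only [if_pos rfl] at h1
    rw [show (fun x => α i x ^ 2) = fun x => α i x * α i x by funext x; ring]
    exact h1
  have hβsq : ∀ j, (∫ y, β j y ^ 2 ∂ν) = 1 := by
    intro j
    have h1 := hβ j j
    simp only [if_pos rfl] at h1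
    rw [show (fun y => β j y ^ 2) = fun y => β j y * β j y by funext y; ring]
    exact h1
  have hmemα : ∀ i, MemLp (α i) 2 μ := fun i =>
    (memLp_two_iff_integrable_sq (hαmeas i).aestronglyMeasurable).2 (hintα i)
  have hmemβ : ∀ j, MemLp (β j) 2 ν := fun j =>
    (memLp_two_iff_integrable_sq (hβmeas j).aestronglyMeasurable).2 (hintβ j)
  -- the tensor functions
  set Pf : ι₁ × ι₂ → ℝ × ℝ → ℝ := fun i q => α i.1 q.1 * β i.2 q.2 with hPfdef
  have hPfmeas : ∀ i, Measurable (Pf i) := fun i =>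
    ((hαmeas i.1).comp measurable_fst).mul ((hβmeas i.2).comp measurable_snd)
  have hmemP : ∀ i, MemLp (Pf i) 2 ρ := by
    intro i
    refine (memLp_two_iff_integrable_sq (hPfmeas i).aestronglyMeasurable).2 ?_
    have : (fun q : ℝ × ℝ => Pf i q ^ 2)
        = fun q : ℝ × ℝ => (α i.1 q.1 ^ 2) * (β i.2 q.2 ^ 2) := by
      funext q; simp only [hPfdef]; ring
    rw [this]
    exact (hintα i.1).mul_prod (hintβ i.2)
  -- the functions h_{i'}
  set Gf : ι₂ → ℝ × ℝ → ℝ := fun j q => ∫ u, β j u * η q.1 q.2 u ∂ν with hGfdef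
  have hGfmeas : ∀ j, StronglyMeasurable (Gf j) := by
    intro j
    exact (((hβmeas j).comp measurable_snd).mul
      (hηmeas.comp ((measurable_fst.comp measurable_fst).prodMk
        (((measurable_snd.comp measurable_fst)).prodMk measurable_snd)))).stronglyMeasurable.integral_prod_right'
  -- bound on Gf
  have hGfbd : ∀ j q, Gf j q ^ 2 ≤ (d - c) * Cη ^ 2 := by
    intro j q
    have hηq : MemLp (fun u => η q.1 q.2 u) 2 ν := by
      refine MemLp.of_bound ?_ Cη (Filter.Eventually.of_forall fun u => ?_)
      · exact (hηmeas.comp ((measurable_const).prodMk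
          ((measurable_const).prodMk measurable_id))).aestronglyMeasurable
      · simpa [Real.norm_eq_abs] using hηbd q.1 q.2 u
    have hcs := cs_aux (hmemβ j) hηq
    have hη2 : (∫ u, η q.1 q.2 u ^ 2 ∂ν) ≤ (d - c) * Cη ^ 2 := by
      have hint : Integrable (fun u => η q.1 q.2 u ^ 2) ν :=
        (memLp_two_iff_integrable_sq hηq.1).1 hηq
      calc (∫ u, η q.1 q.2 u ^ 2 ∂ν) ≤ ∫ _u, Cη ^ 2 ∂ν := by
            refine integral_mono hint (integrable_const _) fun u => ?_
            have := hηbd q.1 q.2 u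
            calc η q.1 q.2 u ^ 2 = |η q.1 q.2 u| ^ 2 := (sq_abs _).symm
              _ ≤ Cη ^ 2 := by
                exact pow_le_pow_left₀ (abs_nonneg _) this 2
        _ = (d - c) * Cη ^ 2 := by rw [integral_const, smul_eq_mul, measureReal_def, hνuniv]
    calc Gf j q ^ 2 ≤ (∫ u, β j u ^ 2 ∂ν) * (∫ u, η q.1 q.2 u ^ 2 ∂ν) := hcs
      _ = ∫ u, η q.1 q.2 u ^ 2 ∂ν := by rw [hβsq j, one_mul]
      _ ≤ (d - c) * Cη ^ 2 := hη2
  set Hf : ι₁ × ι₂ → ℝ × ℝ → ℝ := fun i' q => α i'.1 q.1 * Gf i'.2 q with hHfdef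
  have hHfmeas : ∀ i', AEStronglyMeasurable (Hf i') ρ :=
    fun i' => (((hαmeas i'.1).comp measurable_fst).stronglyMeasurable.mul
      (hGfmeas i'.2)).aestronglyMeasurable
  have hHsq_le : ∀ i' q, Hf i' q ^ 2 ≤ α i'.1 q.1 ^ 2 * ((d - c) * Cη ^ 2) := by
    intro i' q
    have : Hf i' q ^ 2 = α i'.1 q.1 ^ 2 * Gf i'.2 q ^ 2 := by
      simp only [hHfdef]; ring
    rw [this]
    exact mul_le_mul_of_nonneg_left (hGfbd i'.2 q) (sq_nonneg _)
  have hdom : ∀ i1 : ι₁,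
      Integrable (fun q : ℝ × ℝ => α i1 q.1 ^ 2 * ((d - c) * Cη ^ 2)) ρ :=
    fun i1 => (hintα i1).mul_prod (integrable_const _)
  have hintHsq : ∀ i', Integrable (fun q : ℝ × ℝ => Hf i' q ^ 2) ρ := by
    intro i'
    refine Integrable.mono' (hdom i'.1) ?_ (Filter.Eventually.of_forall fun q => ?_)
    · have : (fun q : ℝ × ℝ => Hf i' q ^ 2) = fun q => Hf i' q * Hf i' q := by
        funext q; ring
      rw [this]
      exact (hHfmeas i').mul (hHfmeas i')
    · rw [Real.norm_eq_abs, abs_of_nonneg (sq_nonneg _)]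
      exact hHsq_le i' q
  have hmemH : ∀ i', MemLp (Hf i') 2 ρ := fun i' =>
    (memLp_two_iff_integrable_sq (hHfmeas i')).2 (hintHsq i')
  set P : (ι₁ × ι₂) → Lp ℝ 2 ρ := fun i => (hmemP i).toLp (Pf i) with hPdef
  set H : (ι₁ × ι₂) → Lp ℝ 2 ρ := fun i' => (hmemH i').toLp (Hf i') with hHdef
  -- orthonormality
  have hinnerP : ∀ i j, (inner ℝ (P i) (P j) : ℝ)
      = (if i.1 = j.1 then (1 : ℝ) else 0) * (if i.2 = j.2 then (1 : ℝ) else 0) := by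
    intro i j
    rw [L2.inner_def]
    have e1 : ∫ q, (inner ℝ (P i q) (P j q) : ℝ) ∂ρ = ∫ q, Pf i q * Pf j q ∂ρ := by
      refine integral_congr_ae ?_
      filter_upwards [(hmemP i).coeFn_toLp, (hmemP j).coeFn_toLp] with q h1 h2
      simp [hPdef, h1, h2, RCLike.inner_apply, starRingEnd_apply, star_trivial, mul_comm]
    rw [e1]
    have e2 : (fun q : ℝ × ℝ => Pf i q * Pf j q)
        = fun q : ℝ × ℝ => (α i.1 q.1 * α j.1 q.1) * (β i.2 q.2 * β j.2 q.2) := by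
      funext q; simp only [hPfdef]; ring
    rw [e2]
    have e3 : (∫ q : ℝ × ℝ, (α i.1 q.1 * α j.1 q.1) * (β i.2 q.2 * β j.2 q.2) ∂ρ)
        = (∫ x, α i.1 x * α j.1 x ∂μ) * ∫ y, β i.2 y * β j.2 y ∂ν :=
      integral_prod_mul (fun x => α i.1 x * α j.1 x) fun y => β i.2 y * β j.2 y
    rw [e3, hα, hβ]
  have honP : Orthonormal ℝ P := by
    rw [orthonormal_iff_ite]
    intro i j
    rw [hinnerP]
    by_cases h1 : i.1 = j.1 <;> by_cases h2 : i.2 = j.2 <;>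
      simp [h1, h2, Prod.ext_iff]
  -- integrability of products
  have hPHint : ∀ i i', Integrable (fun q : ℝ × ℝ => Pf i q * Hf i' q) ρ := by
    intro i i'
    have hs : (1 : ENNReal) / 1 = 1 / 2 + 1 / 2 := by
      rw [ENNReal.div_add_div_same]
      norm_num
      rw [ENNReal.div_self (by norm_num) (by norm_num)]
    have := (hmemH i').smul (hmemP i) (r := 1)
    rw [memLp_one_iff_integrable] at this
    exact this
  -- inner products equal cmat
  have hinnerPH : ∀ i i', (inner ℝ (P i) (H i') : ℝ) = cmat a b c d (tns α β) η i i' := by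
    intro i i'
    rw [L2.inner_def]
    have e1 : ∫ q, (inner ℝ (P i q) (H i' q) : ℝ) ∂ρ = ∫ q, Pf i q * Hf i' q ∂ρ := by
      refine integral_congr_ae ?_
      filter_upwards [(hmemP i).coeFn_toLp, (hmemH i').coeFn_toLp] with q h1 h2
      simp [hPdef, hHdef, h1, h2, RCLike.inner_apply, starRingEnd_apply, star_trivial, mul_comm]
    have key : ∀ x y₁, (∫ y₂, tns α β i x y₁ * tns α β i' x y₂ * η x y₁ y₂ ∂ν)
        = Pf i (x, y₁) * Hf i' (x, y₁) := by
      intro x y₁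
      have e : (fun y₂ => tns α β i x y₁ * tns α β i' x y₂ * η x y₁ y₂)
          = fun y₂ => (α i.1 x * β i.2 y₁ * α i'.1 x) * (β i'.2 y₂ * η x y₁ y₂) := by
        funext y₂; simp only [tns]; ring
      rw [e, integral_const_mul]
      simp only [hPfdef, hHfdef, hGfdef]
      ring
    have e2 : cmat a b c d (tns α β) η i i'
        = ∫ x, ∫ y, Pf i (x, y) * Hf i' (x, y) ∂ν ∂μ := by
      simp only [cmat, I3]
      refine integral_congr_ae (Filter.Eventually.of_forall fun x => ?_)
      refine integral_congr_ae (Filter.Eventually.of_forall fun y₁ => ?_)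
      exact key x y₁
    rw [e1, e2, hρdef, ← integral_prod _ (hPHint i i')]
  -- norm bound
  have hnormH : ∀ i', ‖H i'‖ ^ 2 ≤ (d - c) ^ 2 * Cη ^ 2 := by
    intro i'
    have h1 : ‖H i'‖ ^ 2 = ∫ q, Hf i' q ^ 2 ∂ρ := by
      rw [← real_inner_self_eq_norm_sq, L2.inner_def]
      refine integral_congr_ae ?_
      filter_upwards [(hmemH i').coeFn_toLp] with q hq
      simp [hHdef, hq, RCLike.inner_apply, starRingEnd_apply, star_trivial, pow_two]
    rw [h1]
    calc (∫ q, Hf i' q ^ 2 ∂ρ)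
        ≤ ∫ q : ℝ × ℝ, α i'.1 q.1 ^ 2 * ((d - c) * Cη ^ 2) ∂ρ :=
          integral_mono (hintHsq i') (hdom i'.1) fun q => hHsq_le i' q
      _ = (∫ x, α i'.1 x ^ 2 ∂μ) * ∫ _y : ℝ, ((d - c) * Cη ^ 2) ∂ν :=
          integral_prod_mul (fun x => α i'.1 x ^ 2) fun _y => ((d - c) * Cη ^ 2)
      _ = (d - c) ^ 2 * Cη ^ 2 := by
          rw [hαsq, integral_const, smul_eq_mul, measureReal_def, hνuniv]; ring
  -- conclusion via Bessel
  rw [Finset.sum_comm]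
  have hbessel : ∀ i' ∈ M₁ ×ˢ M₂,
      (∑ i ∈ M₁ ×ˢ M₂, cmat a b c d (tns α β) η i i' ^ 2) ≤ (d - c) ^ 2 * Cη ^ 2 := by
    intro i' _
    have e : ∀ i, cmat a b c d (tns α β) η i i' ^ 2 = ‖(inner ℝ (P i) (H i') : ℝ)‖ ^ 2 := by
      intro i
      rw [hinnerPH, Real.norm_eq_abs, sq_abs]
    calc (∑ i ∈ M₁ ×ˢ M₂, cmat a b c d (tns α β) η i i' ^ 2)
        = ∑ i ∈ M₁ ×ˢ M₂, ‖(inner ℝ (P i) (H i') : ℝ)‖ ^ 2 :=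
          Finset.sum_congr rfl fun i _ => e i
      _ ≤ ‖H i'‖ ^ 2 := honP.sum_inner_products_le (H i')
      _ ≤ (d - c) ^ 2 * Cη ^ 2 := hnormH i'
  calc (∑ i' ∈ M₁ ×ˢ M₂, ∑ i ∈ M₁ ×ˢ M₂, cmat a b c d (tns α β) η i i' ^ 2)
      ≤ ∑ _i' ∈ M₁ ×ˢ M₂, (d - c) ^ 2 * Cη ^ 2 := Finset.sum_le_sum hbessel
    _ = (d - c) ^ 2 * Cη ^ 2 * ((M₁ ×ˢ M₂).card : ℝ) := by
        rw [Finset.sum_const, nsmul_eq_mul]; ring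


end DaVeigaGamboa
end
end
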